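/- arXiv:1406.2740 — 6 statements merged into one kernel-verified Lean document; each statement's English description precedes it below -/
import Mathlib

section
/- The boundary action of F_d is topologically free: for every w ∈ F_d \ {e}, the set {x ∈ ∂F_d : w·x ≠ x} is dense in ∂F_d. -/
/-- The alphabet of the free group on `d` generators: a generator together with
a sign (`true` = the generator itself, `false` = its inverse). -/
abbrev Letter (d : ℕ) := Fin d × Bool

/-- The inverse of a letter. -/
def Letter.inv {d : ℕ} (a : Letter d) : Letter d := (a.1, !a.2)

/-- A sequence of letters is reduced if no letter is followed by its inverse. -/
def IsReducedSeq {d : ℕ} (x : ℕ → Letter d) : Prop :=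
  ∀ n, x (n + 1) ≠ Letter.inv (x n)

/-- The boundary `∂F_d` of the free group on `d` generators: the space of
infinite reduced words, topologized as a subspace of the product space
`(Fin d × Bool)^ℕ` (each factor discrete). -/
abbrev Boundary (d : ℕ) := {x : ℕ → Letter d // IsReducedSeq x}

/-- The number of letters cancelled at the junction when the (finite reduced)
word `u` is concatenated with the infinite reduced word `x`. -/
def cancelLen {d : ℕ} (u : List (Letter d)) (x : ℕ → Letter d) : ℕ :=
  Nat.findGreatest (fun k => ∀ i < k, u[u.length - 1 - i]? = some (Letter.inv (x i))) u.length

/-- The reduction of the concatenation of a finite reduced word `u` with an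
infinite reduced word `x`. -/
def concatReduce {d : ℕ} (u : List (Letter d)) (x : ℕ → Letter d) : ℕ → Letter d :=
  fun n =>
    let k := cancelLen u x
    let m := u.length - k
    if h : n < m then u[n]'(by omega) else x (k + (n - m))

open Classical in
/-- The boundary action of the free group on its boundary: left multiplication
followed by free reduction.  (The `if` always takes the `then` branch, since the
reduction of the concatenation of reduced words is again reduced; hence this is
exactly the usual boundary action `g · x`.) -/
noncomputable def boundaryAct {d : ℕ} (g : FreeGroup (Fin d)) (x : Boundary d) : Boundary d :=
  if h : IsReducedSeq (concatReduce (FreeGroup.toWord g) x.1) then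
    ⟨concatReduce (FreeGroup.toWord g) x.1, h⟩
  else x

/-- `x` is the boundary point `w^{+∞}`, the limit of the sequence `(wⁿ)ₙ₌₁^∞`:
for every `k` there is `N` such that for all `n ≥ N` the reduced word of `wⁿ`
has length at least `k` and its first `k` letters agree with those of `x`.
The point `w^{-∞}` is `(w⁻¹)^{+∞}`, i.e. `IsPlusLimit w⁻¹`. -/
def IsPlusLimit {d : ℕ} (w : FreeGroup (Fin d)) (x : Boundary d) : Prop :=
  ∀ k : ℕ, ∃ N : ℕ, ∀ n ≥ N,
    k ≤ (FreeGroup.toWord (w ^ n)).length ∧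
    ∀ i < k, (FreeGroup.toWord (w ^ n))[i]? = some (x.1 i)

/-- The relation `R_W = Δ ∪ {(g·w^{+∞}, g·w^{-∞}) : g ∈ F_d, w ∈ W ∪ W⁻¹}`
on the boundary `∂F_d`. -/
def RW {d : ℕ} (W : Set (FreeGroup (Fin d))) : Set (Boundary d × Boundary d) :=
  {p | p.1 = p.2} ∪
  {p | ∃ (g w : FreeGroup (Fin d)) (xp xm : Boundary d),
      (w ∈ W ∨ w⁻¹ ∈ W) ∧ IsPlusLimit w xp ∧ IsPlusLimit w⁻¹ xm ∧
      p.1 = boundaryAct g xp ∧ p.2 = boundaryAct g xm}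

open Classical in
/-- `p[w]` : the (`ℤ`-valued) indicator function of the cylinder set of the
reduced word of `w` in the boundary. -/
noncomputable def pFun {d : ℕ} (w : FreeGroup (Fin d)) : Boundary d → ℤ :=
  fun x =>
    if ∀ i < (FreeGroup.toWord w).length, (FreeGroup.toWord w)[i]? = some (x.1 i) then 1 else 0

/-- `q[s] = p[s] + p[s⁻¹]` for a generator `s`. -/
noncomputable def qFun {d : ℕ} (s : Fin d) : Boundary d → ℤ :=
  fun x => pFun (FreeGroup.of s) x + pFun (FreeGroup.of s)⁻¹ x

/-- `q[sⁿ] = p[sⁿ] + p[s⁻ⁿ]` for a generator `s`. -/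
noncomputable def qPow {d : ℕ} (s : Fin d) (n : ℕ) : Boundary d → ℤ :=
  fun x => pFun (FreeGroup.of s ^ n) x + pFun ((FreeGroup.of s ^ n)⁻¹) x

/-- The map `w ↦ ŵ` flipping the sign of the exponent of the last syllable of
the reduced word of `w`: if `w = s_{i(1)}^{n(1)} ⋯ s_{i(k)}^{n(k)}` then
`ŵ = s_{i(1)}^{n(1)} ⋯ s_{i(k-1)}^{n(k-1)} s_{i(k)}^{-n(k)}`.  (The final
syllable is the maximal terminal run of equal letters of the reduced word.) -/
def hatWord {d : ℕ} (w : FreeGroup (Fin d)) : FreeGroup (Fin d) :=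
  match (FreeGroup.toWord w).reverse with
  | [] => w
  | a :: _ =>
    let k := ((FreeGroup.toWord w).reverse.takeWhile (fun b => b == a)).length
    FreeGroup.mk ((FreeGroup.toWord w).take ((FreeGroup.toWord w).length - k) ++
      List.replicate k (Letter.inv a))

lemma letter_inv_inv {d : ℕ} (a : Letter d) : Letter.inv (Letter.inv a) = a := by
  cases a; simp [Letter.inv]

lemma toWord_reduced {d : ℕ} (w : FreeGroup (Fin d)) {i : ℕ}
    (h : i + 1 < (FreeGroup.toWord w).length) :
    (FreeGroup.toWord w)[i + 1] ≠ Letter.inv ((FreeGroup.toWord w)[i]'(Nat.lt_of_succ_lt h)) := by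
  intro heq
  have hsplit : FreeGroup.toWord w =
      (FreeGroup.toWord w).take i ++ (FreeGroup.toWord w)[i]'(Nat.lt_of_succ_lt h) ::
        (FreeGroup.toWord w)[i + 1] :: (FreeGroup.toWord w).drop (i + 2) := by
    conv_lhs => rw [← List.take_append_drop i (FreeGroup.toWord w)]
    rw [List.drop_eq_getElem_cons (Nat.lt_of_succ_lt h), List.drop_eq_getElem_cons h]
  refine FreeGroup.reduce.not (L₁ := FreeGroup.toWord w) (L₂ := (FreeGroup.toWord w).take i)
    (L₃ := (FreeGroup.toWord w).drop (i + 2))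
    (x := ((FreeGroup.toWord w)[i]'(Nat.lt_of_succ_lt h)).1)
    (b := ((FreeGroup.toWord w)[i]'(Nat.lt_of_succ_lt h)).2) ?_
  rw [FreeGroup.reduce_toWord]
  conv_lhs => rw [hsplit]
  rw [heq]
  simp [Letter.inv]

lemma cancelLen_le {d : ℕ} (u : List (Letter d)) (x : ℕ → Letter d) :
    cancelLen u x ≤ u.length :=
  Nat.findGreatest_le (P := fun k => ∀ i < k, u[u.length - 1 - i]? = some (Letter.inv (x i))) _

lemma cancelLen_spec {d : ℕ} (u : List (Letter d)) (x : ℕ → Letter d) :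
    ∀ i < cancelLen u x, u[u.length - 1 - i]? = some (Letter.inv (x i)) :=
  Nat.findGreatest_spec (P := fun k => ∀ i < k, u[u.length - 1 - i]? = some (Letter.inv (x i)))
    (Nat.zero_le _) (fun i hi => absurd hi (Nat.not_lt_zero i))

lemma cancelLen_max {d : ℕ} (u : List (Letter d)) (x : ℕ → Letter d)
    (h : cancelLen u x < u.length) :
    ¬ ∀ i < cancelLen u x + 1, u[u.length - 1 - i]? = some (Letter.inv (x i)) :=
  Nat.findGreatest_is_greatest
    (P := fun k => ∀ i < k, u[u.length - 1 - i]? = some (Letter.inv (x i)))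
    (Nat.lt_succ_self _) (by have := cancelLen_le u x; omega)

lemma concatReduce_apply {d : ℕ} (u : List (Letter d)) (x : ℕ → Letter d) (n : ℕ) :
    concatReduce u x n =
      if h : n < u.length - cancelLen u x then u[n]'(by omega)
      else x (cancelLen u x + (n - (u.length - cancelLen u x))) := rfl

lemma concatReduce_reduced {d : ℕ} (w : FreeGroup (Fin d)) {x : ℕ → Letter d}
    (hx : IsReducedSeq x) :
    IsReducedSeq (concatReduce (FreeGroup.toWord w) x) := by
  intro n
  rw [concatReduce_apply, concatReduce_apply]
  have hkle := cancelLen_le (FreeGroup.toWord w) x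
  split_ifs with h1 h2 h2
  · exact toWord_reduced w (by omega)
  · omega
  · -- n + 1 = length - k exactly; junction
    intro heq
    have hn1 : n + 1 = (FreeGroup.toWord w).length - cancelLen (FreeGroup.toWord w) x := by omega
    have hklt : cancelLen (FreeGroup.toWord w) x < (FreeGroup.toWord w).length := by omega
    apply cancelLen_max (FreeGroup.toWord w) x hklt
    intro i hi
    rcases Nat.lt_or_ge i (cancelLen (FreeGroup.toWord w) x) with hik | hik
    · exact cancelLen_spec _ _ i hik
    · have hieq : i = cancelLen (FreeGroup.toWord w) x := by omega
      have hidx : (FreeGroup.toWord w).length - 1 - i = n := by omega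
      rw [hidx, List.getElem?_eq_getElem (by omega)]
      have hx0 : x (cancelLen (FreeGroup.toWord w) x +
          (n + 1 - ((FreeGroup.toWord w).length - cancelLen (FreeGroup.toWord w) x))) = x i := by
        congr 1; omega
      rw [hx0] at heq
      rw [heq, letter_inv_inv]
  · -- both in the tail
    have h3 : cancelLen (FreeGroup.toWord w) x +
        (n + 1 - ((FreeGroup.toWord w).length - cancelLen (FreeGroup.toWord w) x)) =
        cancelLen (FreeGroup.toWord w) x +
        (n - ((FreeGroup.toWord w).length - cancelLen (FreeGroup.toWord w) x)) + 1 := by omega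
    rw [h3]
    exact hx _

lemma boundaryAct_val {d : ℕ} (w : FreeGroup (Fin d)) (x : Boundary d) :
    (boundaryAct w x).1 = concatReduce (FreeGroup.toWord w) x.1 := by
  simp only [boundaryAct, dif_pos (concatReduce_reduced w x.2)]

lemma fixed_eventually_periodic {d : ℕ} {w : FreeGroup (Fin d)} (hw : w ≠ 1) {x : Boundary d}
    (hfix : boundaryAct w x = x) :
    ∃ p, 0 < p ∧ ∃ M, ∀ n, M ≤ n → x.1 (n + p) = x.1 n := by
  have hval : ∀ n, concatReduce (FreeGroup.toWord w) x.1 n = x.1 n := by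
    intro n
    rw [← boundaryAct_val w x, hfix]
  have hkle := cancelLen_le (FreeGroup.toWord w) x.1
  have hulen : 1 ≤ (FreeGroup.toWord w).length := by
    rcases Nat.eq_zero_or_pos (FreeGroup.toWord w).length with h | h
    · exact absurd (FreeGroup.toWord_eq_nil_iff.mp (List.length_eq_zero_iff.mp h)) hw
    · exact h
  have hspec := cancelLen_spec (FreeGroup.toWord w) x.1
  have hpre : ∀ n (hn : n < (FreeGroup.toWord w).length - cancelLen (FreeGroup.toWord w) x.1),
      (FreeGroup.toWord w)[n]'(by omega) = x.1 n := by
    intro n hn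
    have := hval n
    rwa [concatReduce_apply, dif_pos hn] at this
  have htail : ∀ n, (FreeGroup.toWord w).length - cancelLen (FreeGroup.toWord w) x.1 ≤ n →
      x.1 (cancelLen (FreeGroup.toWord w) x.1 +
        (n - ((FreeGroup.toWord w).length - cancelLen (FreeGroup.toWord w) x.1))) = x.1 n := by
    intro n hn
    have := hval n
    rwa [concatReduce_apply, dif_neg (by omega)] at this
  have hred : ∀ i (h : i + 1 < (FreeGroup.toWord w).length),
      (FreeGroup.toWord w)[i + 1] ≠ Letter.inv ((FreeGroup.toWord w)[i]'(Nat.lt_of_succ_lt h)) :=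
    fun i h => toWord_reduced w h
  set L := (FreeGroup.toWord w).length with hL
  set k := cancelLen (FreeGroup.toWord w) x.1 with hk
  rcases lt_trichotomy (L - k) k with hmk | hmk | hmk
  · -- m < k : period k - m, from m on
    refine ⟨k - (L - k), by omega, L - k, fun n hn => ?_⟩
    have := htail n hn
    have h3 : k + (n - (L - k)) = n + (k - (L - k)) := by omega
    rw [h3] at this
    exact this
  · -- m = k : contradiction
    exfalso
    have hL2k : L = 2 * k := by omega
    have hk1 : 1 ≤ k := by omega
    have h1 := hspec (k - 1) (by omega)
    have hidx : L - 1 - (k - 1) = k := by omega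
    rw [hidx, List.getElem?_eq_getElem (by omega)] at h1
    have h2 := hpre (k - 1) (by omega)
    have h4 : (FreeGroup.toWord w)[k]'(by omega) =
        Letter.inv ((FreeGroup.toWord w)[k - 1]'(by omega)) := by
      rw [Option.some_inj.mp h1, h2]
    have h5 := hred (k - 1) (by omega)
    have h6 : k - 1 + 1 = k := by omega
    simp only [h6] at h5
    exact h5 h4
  · -- m > k : period m - k, from k on
    refine ⟨(L - k) - k, by omega, k, fun n hn => ?_⟩
    have := htail (n + ((L - k) - k)) (by omega)
    have h3 : k + (n + ((L - k) - k) - (L - k)) = n := by omega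
    rw [h3] at this
    exact this.symm


noncomputable def tailSeq {d : ℕ} (a' b' : Letter d) : ℕ → Letter d :=
  fun n => if Nat.sqrt n * Nat.sqrt n = n then a' else b'

lemma tailSeq_not_periodic {d : ℕ} {a' b' : Letter d} (hab : a' ≠ b')
    (p : ℕ) (hp : 0 < p) (M : ℕ) :
    ∃ n, M ≤ n ∧ tailSeq a' b' (n + p) ≠ tailSeq a' b' n := by
  set m := max (max M p) 1 with hm
  have hm1 : 1 ≤ m := le_max_right _ _
  have hmM : M ≤ m := le_trans (le_max_left _ _) (le_max_left _ _)
  have hmp : p ≤ m := le_trans (le_max_right _ _) (le_max_left _ _)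
  refine ⟨m * m, le_trans hmM (Nat.le_mul_of_pos_left m hm1), ?_⟩
  have hsq : tailSeq a' b' (m * m) = a' := by
    unfold tailSeq
    rw [Nat.sqrt_eq m, if_pos rfl]
  have hnsq : tailSeq a' b' (m * m + p) = b' := by
    have hns : ¬ (Nat.sqrt (m * m + p) * Nat.sqrt (m * m + p) = m * m + p) := by
      intro h
      have h1 : m * m < Nat.sqrt (m * m + p) * Nat.sqrt (m * m + p) := by omega
      have h2 : Nat.sqrt (m * m + p) * Nat.sqrt (m * m + p) < (m + 1) * (m + 1) := by nlinarith
      have h3 : m < Nat.sqrt (m * m + p) := Nat.mul_self_lt_mul_self_iff.mp h1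
      have h4 : Nat.sqrt (m * m + p) < m + 1 := Nat.mul_self_lt_mul_self_iff.mp h2
      omega
    simp [tailSeq, hns]
  rw [hsq, hnsq]
  exact fun h => hab h.symm

lemma exists_nonfixed_extension {d : ℕ} (hd : 2 ≤ d) (w : FreeGroup (Fin d)) (hw : w ≠ 1)
    (x : Boundary d) (N : ℕ) :
    ∃ y : Boundary d, (∀ i < N, y.1 i = x.1 i) ∧ boundaryAct w y ≠ y := by
  have h0 : 0 < d := by omega
  have h1 : 1 < d := hd
  set a : Letter d := (⟨0, h0⟩, true) with ha
  set b : Letter d := (⟨1, h1⟩, true) with hb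
  have hab : a ≠ b := by
    simp [ha, hb, Prod.ext_iff, Fin.ext_iff]
  set z : Letter d := Letter.inv (x.1 (N - 1)) with hz
  set a' : Letter d := if z = a then b else a with ha'
  set b' : Letter d := if z = a then a else b with hb'
  have ha'b' : a' ≠ b' := by
    rw [ha', hb']; split_ifs
    · exact fun h => hab h.symm
    · exact hab
  have ha'z : a' ≠ z := by
    rw [ha']; split_ifs with h
    · rw [h]; exact fun h' => hab h'.symm
    · exact fun h' => h h'.symm
  have hsnd : ∀ k, (tailSeq a' b' k).2 = true := by
    intro k
    unfold tailSeq
    rw [ha', hb']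
    split_ifs <;> rfl
  set t : ℕ → Letter d := tailSeq a' b' with ht
  set y : ℕ → Letter d := fun n => if n < N then x.1 n else t (n - N) with hy
  have hyred : IsReducedSeq y := by
    intro n
    rw [hy]
    dsimp only
    rcases Nat.lt_or_ge (n + 1) N with hn1 | hn1
    · rw [if_pos hn1, if_pos (by omega)]
      exact x.2 n
    · rw [if_neg (by omega)]
      rcases Nat.lt_or_ge n N with hn2 | hn2
      · -- junction : n = N - 1
        rw [if_pos hn2]
        have hnN : n + 1 = N := by omega
        have h00 : n + 1 - N = 0 := by omega
        rw [h00]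
        have ht0 : t 0 = a' := by simp [ht, tailSeq]
        rw [ht0]
        have hxn : n = N - 1 := by omega
        rw [hxn, ← hz]
        exact ha'z
      · rw [if_neg (by omega)]
        intro hcon
        have := congrArg Prod.snd hcon
        rw [hsnd] at this
        simp [Letter.inv, hsnd] at this
  refine ⟨⟨y, hyred⟩, ?_, ?_⟩
  · intro i hi
    simp only [hy]
    rw [if_pos hi]
  · intro hfix
    obtain ⟨p, hp, M, hM⟩ := fixed_eventually_periodic hw hfix
    obtain ⟨n, hn, hne⟩ := tailSeq_not_periodic ha'b' p hp M
    apply hne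
    have h2 := hM (n + N) (by omega)
    simp only [hy] at h2
    rw [if_neg (by omega), if_neg (by omega)] at h2
    have e1 : n + N + p - N = n + p := by omega
    have e2 : n + N - N = n := by omega
    rw [e1, e2] at h2
    exact h2

/-- The boundary action of `F_d` is topologically free:
for every `w ∈ F_d \ {e}`, the set `{x ∈ ∂F_d : w·x ≠ x}` is dense. -/
theorem boundary_action_topologically_free (d : ℕ) (hd : 2 ≤ d)
    (w : FreeGroup (Fin d)) (hw : w ≠ 1) :
    Dense {x : Boundary d | boundaryAct w x ≠ x} := by
  rw [dense_iff_inter_open]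
  rintro U hU ⟨x, hxU⟩
  obtain ⟨V, hV, rfl⟩ := isOpen_induced_iff.mp hU
  have hxV : x.1 ∈ V := hxU
  obtain ⟨I, f, hf, hsub⟩ := isOpen_pi_iff.mp hV x.1 hxV
  obtain ⟨y, hagree, hnf⟩ := exists_nonfixed_extension hd w hw x (I.sup id + 1)
  refine ⟨y, ?_, hnf⟩
  apply hsub
  intro i hi
  have hle : i ≤ I.sup id := Finset.le_sup (f := id) hi
  have : y.1 i = x.1 i := hagree i (by omega)
  show y.1 i ∈ f i
  rw [this]
  exact (hf i hi).2
end

section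
/- For every subset W ⊆ F_d \ {e}, each equivalence class of the equivalence relation R_W contains at most two elements. -/
namespace RWAux
open FreeGroup List

variable {d : ℕ}

@[simp] lemma linv_linv (a : Letter d) : a.inv.inv = a := by
  cases a; simp [Letter.inv]

lemma ne_linv_comm {a b : Letter d} (h : a ≠ Letter.inv b) : b ≠ Letter.inv a := by
  intro hb; exact h (by simp [hb])

lemma linv_ne_self (a : Letter d) : Letter.inv a ≠ a := by
  cases a; simp [Letter.inv]

/-- Reducedness of a finite word. -/
def Reduced (L : List (Letter d)) : Prop := List.IsChain (fun a b => b ≠ Letter.inv a) L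

lemma Reduced.nil : Reduced ([] : List (Letter d)) := List.isChain_nil

lemma reduced_invRev {L : List (Letter d)} (h : Reduced L) : Reduced (invRev L) := by
  unfold Reduced FreeGroup.invRev at *
  rw [List.isChain_reverse]
  refine (List.isChain_map _).2 ?_
  refine h.imp ?_
  rintro ⟨xa, xb⟩ ⟨ya, yb⟩ hxy hEq
  apply hxy
  simp only [Letter.inv, Prod.mk.injEq, Bool.not_not] at hEq ⊢
  exact ⟨hEq.1.symm, hEq.2.symm⟩

lemma reduce_self {L : List (Letter d)} (h : Reduced L) : FreeGroup.reduce L = L := by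
  induction L with
  | nil => rfl
  | cons a L ih =>
    have h2 := (List.isChain_cons.mp h).2
    rw [FreeGroup.reduce.cons, ih h2]
    cases L with
    | nil => rfl
    | cons b T =>
      have hab : b ≠ Letter.inv a := (List.isChain_cons_cons.mp h).1
      have : ¬ (a.1 = b.1 ∧ a.2 = !b.2) := by
        rintro ⟨h1, hs⟩
        exact hab (by cases a; cases b; simp_all [Letter.inv])
      simp [this]

end RWAux
namespace RWAux
open FreeGroup List

variable {d : ℕ} [Inhabited (Fin d)]

lemma getD_getLast (M : List (Letter d)) (h : M ≠ []) :
    M.getD (M.length - 1) default = M.getLast h := by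
  have hl : 0 < M.length := List.length_pos_iff.mpr h
  rw [List.getD_eq_getElem _ _ (by omega), List.getLast_eq_getElem]

lemma getD_dropLast (M : List (Letter d)) (i : ℕ) (h : i < M.length - 1) :
    M.dropLast.getD i default = M.getD i default := by
  have h2 : i < M.dropLast.length := by simp; omega
  rw [List.getD_eq_getElem _ _ h2, List.getD_eq_getElem _ _ (by omega), List.getElem_dropLast]

lemma reduce_append :
    ∀ (N M : List (Letter d)), Reduced M → Reduced N →
    ∃ k, k ≤ M.length ∧ k ≤ N.length ∧
      (∀ i < k, M.getD (M.length - 1 - i) default = Letter.inv (N.getD i default)) ∧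
      (k = M.length ∨ k = N.length ∨
        M.getD (M.length - 1 - k) default ≠ Letter.inv (N.getD k default)) ∧
      FreeGroup.reduce (M ++ N) = M.take (M.length - k) ++ N.drop k := by
  intro N
  induction N with
  | nil =>
    intro M hM _
    refine ⟨0, Nat.zero_le _, Nat.zero_le _, by omega, Or.inr (Or.inl rfl), ?_⟩
    simp [reduce_self hM]
  | cons b N' ih =>
    intro M hM hN
    rcases eq_or_ne M [] with rfl | hM0
    · exact ⟨0, by simp, by simp, by omega, Or.inl rfl, by simpa using reduce_self hN⟩
    have hN' : Reduced N' := (List.isChain_cons.mp hN).2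
    have hMd : Reduced M.dropLast := hM.prefix (List.dropLast_prefix M)
    have hlen : 1 ≤ M.length := List.length_pos_iff.mpr hM0
    by_cases hj : M.getLast hM0 = Letter.inv b
    · -- cancellation at the junction
      have hsplit : M ++ b :: N' = M.dropLast ++ (b.1, !b.2) :: (b.1, !(!b.2)) :: N' := by
        conv_lhs => rw [← List.dropLast_append_getLast hM0]
        have : (b.1, !(!b.2)) = b := by cases b; simp
        rw [this, hj]
        simp [Letter.inv]
      have hred : FreeGroup.reduce (M ++ b :: N') = FreeGroup.reduce (M.dropLast ++ N') := by
        rw [hsplit]; exact FreeGroup.reduce.Step.eq FreeGroup.Red.Step.not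
      obtain ⟨k', hk'M, hk'N, hmatch, hstop, hval⟩ := ih M.dropLast hMd hN'
      have hdlen : M.dropLast.length = M.length - 1 := List.length_dropLast
      rw [hdlen] at hk'M hmatch hstop hval
      refine ⟨k' + 1, by omega, by simpa using Nat.succ_le_succ hk'N, ?_, ?_, ?_⟩
      · intro i hi
        cases i with
        | zero =>
          simp only [Nat.sub_zero, List.getD_cons_zero]
          rw [getD_getLast M hM0]; exact hj
        | succ j =>
          have hj' : j < k' := by omega
          have := hmatch j hj'
          rw [getD_dropLast M _ (by omega)] at this
          have hidx : M.length - 1 - 1 - j = M.length - 1 - (j + 1) := by omega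
          rw [hidx] at this
          simpa using this
      · rcases hstop with h1 | h2 | h3
        · exact Or.inl (by omega)
        · exact Or.inr (Or.inl (by simp [h2]))
        · by_cases hc : k' = M.length - 1
          · exact Or.inl (by omega)
          · refine Or.inr (Or.inr ?_)
            rw [getD_dropLast M _ (by omega)] at h3
            have hidx : M.length - 1 - 1 - k' = M.length - 1 - (k' + 1) := by omega
            rw [hidx] at h3
            simpa using h3
      · rw [hred, hval, List.drop_succ_cons, List.dropLast_eq_take, List.take_take]
        congr 2
        omega
    · -- no cancellation: the concatenation is already reduced
      have hredu : Reduced (M ++ b :: N') := by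
        rw [Reduced, List.isChain_append]
        refine ⟨hM, hN, ?_⟩
        intro x hx y hy
        rw [List.getLast?_eq_getLast hM0] at hx
        simp at hx hy
        subst hx; subst hy
        exact ne_linv_comm hj
      refine ⟨0, Nat.zero_le _, Nat.zero_le _, by omega, Or.inr (Or.inr ?_), ?_⟩
      · simp only [Nat.sub_zero, List.getD_cons_zero]
        rw [getD_getLast M hM0]; exact hj
      · simp [reduce_self hredu]

end RWAux
namespace RWAux
open FreeGroup List

variable {d : ℕ}

lemma chain'_getD [Inhabited (Fin d)] {L : List (Letter d)} (h : Reduced L) {i : ℕ}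
    (hi : i + 1 < L.length) : L.getD (i+1) default ≠ Letter.inv (L.getD i default) := by
  rw [List.getD_eq_getElem _ _ hi, List.getD_eq_getElem _ _ (by omega)]
  have := List.isChain_iff_getElem.mp h i (by omega)
  simpa [List.get_eq_getElem] using this

lemma reduced_reduce (L : List (Letter d)) : Reduced (FreeGroup.reduce L) := by
  rw [Reduced, List.isChain_iff_getElem]
  intro i hi
  intro hcon
  set R := FreeGroup.reduce L with hR
  have h1 : i + 1 < R.length := by omega
  have h2 : i < R.length := by omega
  have hshape : R = R.take i ++ (R[i].1, R[i].2) :: (R[i].1, !R[i].2) :: R.drop (i+2) := by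
    have e1 : R = R.take i ++ R.drop i := (List.take_append_drop i R).symm
    have e2 : R.drop i = R[i] :: R.drop (i+1) := (List.getElem_cons_drop h2).symm
    have e3 : R.drop (i+1) = R[i+1] :: R.drop (i+2) := (List.getElem_cons_drop h1).symm
    have e4 : R[i+1] = (R[i].1, !R[i].2) := by
      have : R.get ⟨i+1, h1⟩ = Letter.inv (R.get ⟨i, by omega⟩) := hcon
      simp only [List.get_eq_getElem] at this
      rw [this]; rfl
    conv_lhs => rw [e1, e2, e3, e4]
  exact FreeGroup.reduce.not (hR.symm.trans hshape)

lemma reduced_toWord (g : FreeGroup (Fin d)) : Reduced (FreeGroup.toWord g) := by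
  rw [← FreeGroup.reduce_toWord]
  exact reduced_reduce _

lemma toWord_mk_red {L : List (Letter d)} (h : Reduced L) : (FreeGroup.mk L).toWord = L := by
  rw [FreeGroup.toWord_mk, reduce_self h]

lemma toWord_mul (A B : FreeGroup (Fin d)) :
    (A * B).toWord = FreeGroup.reduce (A.toWord ++ B.toWord) := by
  conv_lhs => rw [← FreeGroup.mk_toWord (x := A), ← FreeGroup.mk_toWord (x := B),
    FreeGroup.mul_mk]
  rw [FreeGroup.toWord_mk]

lemma invRev_append (X Y : List (Letter d)) :
    FreeGroup.invRev (X ++ Y) = FreeGroup.invRev Y ++ FreeGroup.invRev X := by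
  simp [FreeGroup.invRev]

lemma invRev_cons (a : Letter d) (X : List (Letter d)) :
    FreeGroup.invRev (a :: X) = FreeGroup.invRev X ++ [Letter.inv a] := by
  simp [FreeGroup.invRev, Letter.inv]

lemma invRev_head? (U : List (Letter d)) :
    (FreeGroup.invRev U).head? = U.getLast?.map Letter.inv := by
  simp only [FreeGroup.invRev, List.head?_reverse, List.getLast?_map]
  rfl

lemma invRev_getLast? (U : List (Letter d)) :
    (FreeGroup.invRev U).getLast? = U.head?.map Letter.inv := by
  simp only [FreeGroup.invRev, List.getLast?_reverse, List.head?_map]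
  rfl

/-- `pList C n` is the `n`-fold concatenation of `C`. -/
def pList (C : List (Letter d)) : ℕ → List (Letter d)
  | 0 => []
  | n + 1 => C ++ pList C n

@[simp] lemma pList_zero (C : List (Letter d)) : pList C 0 = [] := rfl

lemma pList_succ (C : List (Letter d)) (n : ℕ) : pList C (n+1) = C ++ pList C n := rfl

@[simp] lemma length_pList (C : List (Letter d)) (n : ℕ) :
    (pList C n).length = n * C.length := by
  induction n with
  | zero => simp
  | succ n ih => simp [pList_succ, ih]; ring

lemma pList_one (C : List (Letter d)) : pList C 1 = C := by simp [pList_succ]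

lemma mk_pList (C : List (Letter d)) (n : ℕ) :
    FreeGroup.mk (pList C n) = (FreeGroup.mk C) ^ n := by
  induction n with
  | zero => simp [FreeGroup.one_eq_mk]
  | succ n ih => rw [pList_succ, ← FreeGroup.mul_mk, ih, pow_succ']

lemma getD_pList [Inhabited (Fin d)] {C : List (Letter d)} {n i : ℕ} (h : i < n * C.length) :
    (pList C n).getD i default = C.getD (i % C.length) default := by
  induction n generalizing i with
  | zero => omega
  | succ n ih =>
    rw [pList_succ]
    rcases lt_or_ge i C.length with hi | hi
    · rw [List.getD_append _ _ _ _ hi, Nat.mod_eq_of_lt hi]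
    · rw [List.getD_append_right _ _ _ _ hi, ih (by rw [Nat.succ_mul] at h; exact (Nat.sub_lt_iff_lt_add hi).mpr h),
        Nat.mod_eq_sub_mod hi]

lemma head?_pList {C : List (Letter d)} (hC : C ≠ []) {n : ℕ} (hn : 1 ≤ n) :
    (pList C n).head? = C.head? := by
  obtain ⟨m, rfl⟩ : ∃ m, n = m + 1 := ⟨n - 1, by omega⟩
  rw [pList_succ, List.head?_append]
  cases h : C.head? with
  | none => simp at h; exact absurd h hC
  | some a => rfl

lemma pList_ne_nil {C : List (Letter d)} (hC : C ≠ []) {n : ℕ} (hn : 1 ≤ n) :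
    pList C n ≠ [] := by
  intro h
  obtain ⟨m, rfl⟩ : ∃ m, n = m + 1 := ⟨n - 1, by omega⟩
  rw [pList_succ] at h
  exact hC (List.append_eq_nil_iff.mp h).1

lemma getLast?_pList {C : List (Letter d)} (hC : C ≠ []) {n : ℕ} (hn : 1 ≤ n) :
    (pList C n).getLast? = C.getLast? := by
  induction n with
  | zero => omega
  | succ n ih =>
    rcases Nat.eq_or_lt_of_le hn with h | h
    · rw [← h]; simp [pList_one]
    · rw [pList_succ, List.getLast?_append_of_ne_nil _ (pList_ne_nil hC (by omega)),
        ih (by omega)]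

lemma reduced_pList {C : List (Letter d)} (hCC : Reduced (C ++ C)) (n : ℕ) :
    Reduced (pList C n) := by
  have hC2 := List.isChain_append.mp hCC
  induction n with
  | zero => exact List.isChain_nil
  | succ n ih =>
    rw [pList_succ, Reduced, List.isChain_append]
    refine ⟨hC2.1, ih, ?_⟩
    intro x hx y hy
    rcases Nat.eq_zero_or_pos n with rfl | hn
    · simp at hy
    · rcases eq_or_ne C [] with rfl | hC
      · simp at hx
      · rw [head?_pList hC hn] at hy
        exact hC2.2.2 x hx y hy

end RWAux
namespace RWAux
open FreeGroup List

variable {d : ℕ}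

lemma linv_injective : Function.Injective (Letter.inv (d := d)) := by
  intro a b h
  have := congrArg Letter.inv h
  simpa using this

/-- The canonical conjugacy decomposition data: `C` is a nonempty cyclically
reduced word, `U` is reduced, and everything concatenates without cancellation. -/
def Spec (U C : List (Letter d)) : Prop :=
  C ≠ [] ∧ Reduced (C ++ C) ∧ Reduced U ∧
  (∀ a ∈ U.getLast?, ∀ b ∈ C.head?, b ≠ Letter.inv a) ∧
  (∀ a ∈ U.getLast?, ∀ b ∈ C.getLast?, b ≠ a)

lemma Spec.redC {U C : List (Letter d)} (h : Spec U C) : Reduced C :=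
  h.2.1.prefix (List.prefix_append C C)

lemma reduced_conj {U C : List (Letter d)} (h : Spec U C) {n : ℕ} (hn : 1 ≤ n) :
    Reduced (U ++ pList C n ++ FreeGroup.invRev U) := by
  obtain ⟨hC, hCC, hU, h4, h5⟩ := h
  rw [Reduced, List.isChain_append, List.isChain_append]
  refine ⟨⟨hU, reduced_pList hCC n, ?_⟩, reduced_invRev hU, ?_⟩
  · intro x hx y hy
    rw [head?_pList hC hn] at hy
    exact h4 x hx y hy
  · intro x hx y hy
    rw [List.getLast?_append_of_ne_nil _ (pList_ne_nil hC hn), getLast?_pList hC hn] at hx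
    rw [invRev_head?, Option.mem_def, Option.map_eq_some_iff] at hy
    obtain ⟨c, hc, rfl⟩ := hy
    intro heq
    exact h5 c (by rw [Option.mem_def]; exact hc) x hx (linv_injective heq).symm

lemma conj_pow_free (a c : FreeGroup (Fin d)) (n : ℕ) :
    (a * c * a⁻¹) ^ n = a * c ^ n * a⁻¹ := by
  induction n with
  | zero => group
  | succ n ih => rw [pow_succ, pow_succ, ih]; group

lemma toWord_conj_pow {v : FreeGroup (Fin d)} {U C : List (Letter d)} (h : Spec U C)
    (hv : v = FreeGroup.mk (U ++ C ++ FreeGroup.invRev U)) {n : ℕ} (hn : 1 ≤ n) :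
    (v ^ n).toWord = U ++ pList C n ++ FreeGroup.invRev U := by
  have hv' : v = FreeGroup.mk U * FreeGroup.mk C * (FreeGroup.mk U)⁻¹ := by
    rw [hv, FreeGroup.inv_mk, FreeGroup.mul_mk, FreeGroup.mul_mk]
  rw [hv', conj_pow_free, ← mk_pList, FreeGroup.inv_mk, FreeGroup.mul_mk, FreeGroup.mul_mk]
  exact toWord_mk_red (reduced_conj h hn)

section InfWord
variable [Inhabited (Fin d)]

/-- The eventually periodic infinite word `U C C C ⋯`. -/
def infWord (U C : List (Letter d)) : ℕ → Letter d := fun n =>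
  if n < U.length then U.getD n default else C.getD ((n - U.length) % C.length) default

lemma getD_head {C : List (Letter d)} (hC : C ≠ []) : C.head? = some (C.getD 0 default) := by
  cases C with
  | nil => exact absurd rfl hC
  | cons a T => rfl

lemma getD_getLast' {C : List (Letter d)} (hC : C ≠ []) :
    C.getLast? = some (C.getD (C.length - 1) default) := by
  rw [List.getLast?_eq_getLast hC, getD_getLast _ hC]

lemma cyc_step {C : List (Letter d)} (hC : C ≠ []) (hCC : Reduced (C ++ C)) (j : ℕ) :
    C.getD ((j+1) % C.length) default ≠ Letter.inv (C.getD (j % C.length) default) := by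
  have hp : 0 < C.length := List.length_pos_iff.mpr hC
  have hrlt : j % C.length < C.length := Nat.mod_lt _ hp
  have hmod : (j + 1) % C.length = (j % C.length + 1) % C.length :=
    (Nat.mod_add_mod j C.length 1).symm
  rw [hmod]
  rcases lt_or_ge (j % C.length + 1) C.length with h1 | h1
  · rw [Nat.mod_eq_of_lt h1]
    exact chain'_getD (hCC.prefix (List.prefix_append C C)) h1
  · have h2 : j % C.length + 1 = C.length := by omega
    rw [h2, Nat.mod_self]
    have h3 : C.length - 1 + 1 < (C ++ C).length := by simp; omega
    have := chain'_getD hCC h3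
    have eA : (C ++ C).getD (C.length - 1 + 1) default = C.getD 0 default := by
      rw [List.getD_append_right _ _ _ _ (by omega : C.length ≤ C.length - 1 + 1)]
      congr 1
      omega
    have eB : (C ++ C).getD (C.length - 1) default = C.getD (j % C.length) default := by
      rw [List.getD_append _ _ _ _ (by omega : C.length - 1 < C.length)]
      congr 1
      omega
    rw [eA, eB] at this
    exact this

lemma isReducedSeq_infWord {U C : List (Letter d)} (h : Spec U C) :
    IsReducedSeq (infWord U C) := by
  obtain ⟨hC, hCC, hU, h4, h5⟩ := h
  have hp : 0 < C.length := List.length_pos_iff.mpr hC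
  intro n
  unfold infWord
  rcases lt_trichotomy (n+1) U.length with h1 | h1 | h1
  · rw [if_pos h1, if_pos (by omega)]
    exact chain'_getD hU h1
  · rw [if_neg (by omega), if_pos (by omega)]
    have e0 : (n + 1 - U.length) % C.length = 0 := by rw [h1]; simp
    rw [e0]
    have hU0 : U ≠ [] := by
      intro hh; rw [hh] at h1; simp at h1
    have ha : U.getD n default ∈ U.getLast? := by
      rw [getD_getLast' hU0, Option.mem_def]
      congr 2
      omega
    have hb : C.getD 0 default ∈ C.head? := by
      rw [getD_head hC, Option.mem_def]
    exact h4 (U.getD n default) ha (C.getD 0 default) hb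
  · rw [if_neg (by omega), if_neg (by omega)]
    have e1 : n + 1 - U.length = (n - U.length) + 1 := by omega
    rw [e1]
    exact cyc_step hC hCC (n - U.length)

lemma getD_conj {U C : List (Letter d)} {n i : ℕ} (hi : i < U.length + n * C.length) :
    (U ++ pList C n ++ FreeGroup.invRev U).getD i default = infWord U C i := by
  unfold infWord
  rcases lt_or_ge i U.length with h1 | h1
  · rw [if_pos h1, List.getD_append _ _ _ _ (by simp; omega), List.getD_append _ _ _ _ h1]
  · rw [if_neg (by omega), List.getD_append _ _ _ _ (by simp; omega),
      List.getD_append_right _ _ _ _ h1, getD_pList (by omega)]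

lemma isPlusLimit_spec {v : FreeGroup (Fin d)} {U C : List (Letter d)} (h : Spec U C)
    (hv : v = FreeGroup.mk (U ++ C ++ FreeGroup.invRev U)) :
    IsPlusLimit v ⟨infWord U C, isReducedSeq_infWord h⟩ := by
  intro K
  refine ⟨K + 1, fun n hn => ?_⟩
  have hn1 : 1 ≤ n := by omega
  have htw := toWord_conj_pow h hv hn1
  have hp : 0 < C.length := List.length_pos_iff.mpr h.1
  have hnp : n ≤ n * C.length := Nat.le_mul_of_pos_right n hp
  have hlen : (v^n).toWord.length = U.length + n * C.length + U.length := by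
    rw [htw]; simp [FreeGroup.invRev_length, Nat.add_assoc]
  constructor
  · omega
  · intro i hi
    have hi2 : i < (v^n).toWord.length := by omega
    have hi3 : i < U.length + n * C.length := by omega
    have hv2 : (v ^ n).toWord.getD i default = infWord U C i := by
      rw [htw]; exact getD_conj hi3
    rw [List.getElem?_eq_getElem hi2, ← List.getD_eq_getElem _ default hi2, hv2]

end InfWord

lemma isPlusLimit_unique {v : FreeGroup (Fin d)} {x y : Boundary d}
    (hx : IsPlusLimit v x) (hy : IsPlusLimit v y) : x = y := by
  apply Subtype.ext; funext i
  obtain ⟨N1, h1⟩ := hx (i+1)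
  obtain ⟨N2, h2⟩ := hy (i+1)
  have e1 := (h1 (max N1 N2) (le_max_left _ _)).2 i (by omega)
  have e2 := (h2 (max N1 N2) (le_max_right _ _)).2 i (by omega)
  rw [e1] at e2
  exact Option.some.inj e2

lemma isPlusLimit_ne_one {v : FreeGroup (Fin d)} {x : Boundary d}
    (h : IsPlusLimit v x) : v ≠ 1 := by
  rintro rfl
  obtain ⟨N, hN⟩ := h 1
  have := (hN N le_rfl).1
  simp [one_pow, FreeGroup.toWord_one] at this

lemma junctions_of_reduced {U C : List (Letter d)} (hC : C ≠ [])
    (h : Reduced (U ++ C ++ FreeGroup.invRev U)) :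
    Reduced U ∧ (∀ a ∈ U.getLast?, ∀ b ∈ C.head?, b ≠ Letter.inv a) ∧
      (∀ a ∈ U.getLast?, ∀ b ∈ C.getLast?, b ≠ a) := by
  rw [Reduced, List.isChain_append, List.isChain_append] at h
  obtain ⟨⟨hU, hCr, hj1⟩, hinv, hj2⟩ := h
  refine ⟨hU, hj1, ?_⟩
  intro a ha b hb
  have hx : b ∈ (U ++ C).getLast? := by
    rw [List.getLast?_append_of_ne_nil _ hC]; exact hb
  have hy : Letter.inv a ∈ (FreeGroup.invRev U).head? := by
    rw [invRev_head?, Option.mem_def, Option.map_eq_some_iff]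
    exact ⟨a, ha, rfl⟩
  have := hj2 b hx (Letter.inv a) hy
  intro heq
  exact this (by rw [heq])

lemma exists_spec : ∀ (m : ℕ) (L : List (Letter d)), L.length ≤ m → Reduced L → L ≠ [] →
    ∃ U C, Spec U C ∧ L = U ++ C ++ FreeGroup.invRev U := by
  intro m
  induction m with
  | zero =>
    intro L h hr h0
    exact absurd (List.length_eq_zero_iff.mp (by omega)) h0
  | succ m ih =>
    intro L hlen hred h0
    by_cases hc : L.getLast h0 = Letter.inv (L.head h0)
    · -- peel one letter from both ends
      obtain ⟨a, T, rfl⟩ : ∃ a T, L = a :: T := ⟨L.head h0, L.tail, (List.cons_head_tail h0).symm⟩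
      have hT0 : T ≠ [] := by
        rintro rfl
        simp only [List.getLast_singleton, List.head_cons] at hc
        exact linv_ne_self a hc.symm
      have hlast : T.getLast hT0 = Letter.inv a := by
        rw [List.getLast_cons hT0, List.head_cons] at hc
        exact hc
      have hTsplit : T = T.dropLast ++ [Letter.inv a] := by
        conv_lhs => rw [← List.dropLast_append_getLast hT0]
        rw [hlast]
      set M := T.dropLast with hM
      have hM0 : M ≠ [] := by
        rintro hMnil
        rw [hTsplit, hMnil, List.nil_append] at hred
        exact (List.isChain_cons_cons.mp hred).1 rfl
      have hMred : Reduced M := hred.infix ⟨[a], [Letter.inv a], by rw [List.append_assoc, ← hTsplit]; rfl⟩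
      have hMlen : M.length ≤ m := by
        have h1 := congrArg List.length hTsplit
        simp only [List.length_append, List.length_cons] at h1 hlen
        simp at h1
        omega
      obtain ⟨U, C, hspec, hMeq⟩ := ih M hMlen hMred hM0
      have hLeq : a :: T = (a :: U) ++ C ++ FreeGroup.invRev (a :: U) := by
        conv_lhs => rw [hTsplit, hMeq]
        rw [invRev_cons]
        simp
      have hjj := junctions_of_reduced hspec.1 (hLeq ▸ hred)
      exact ⟨a :: U, C, ⟨hspec.1, hspec.2.1, hjj.1, hjj.2.1, hjj.2.2⟩, hLeq⟩
    · -- the word is already cyclically reduced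
      refine ⟨[], L, ⟨h0, ?_, List.isChain_nil, by simp, by simp⟩, by simp [FreeGroup.invRev]⟩
      rw [Reduced, List.isChain_append]
      refine ⟨hred, hred, ?_⟩
      intro x hx y hy
      rw [List.getLast?_eq_getLast h0] at hx
      rw [List.head?_eq_head h0] at hy
      simp only [Option.mem_def, Option.some.injEq] at hx hy
      subst hx; subst hy
      exact ne_linv_comm hc

lemma spec_invRev {U C : List (Letter d)} (h : Spec U C) : Spec U (FreeGroup.invRev C) := by
  obtain ⟨hC, hCC, hU, h4, h5⟩ := h
  refine ⟨?_, ?_, hU, ?_, ?_⟩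
  · intro hh
    exact hC (by rw [← FreeGroup.invRev_invRev (L₁ := C), hh, FreeGroup.invRev_empty])
  · rw [← invRev_append]; exact reduced_invRev hCC
  · intro a ha b hb
    rw [invRev_head?, Option.mem_def, Option.map_eq_some_iff] at hb
    obtain ⟨c, hc, rfl⟩ := hb
    intro heq
    exact h5 a ha c hc (linv_injective heq)
  · intro a ha b hb
    rw [invRev_getLast?, Option.mem_def, Option.map_eq_some_iff] at hb
    obtain ⟨c, hc, rfl⟩ := hb
    intro heq
    exact h4 a ha c hc (by rw [← heq]; simp)

end RWAux
namespace RWAux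
open FreeGroup List

variable {d : ℕ} [Inhabited (Fin d)]

omit [Inhabited (Fin d)] in
lemma period_iterate {f : ℕ → Letter d} {q : ℕ} (h : ∀ j, f (j + q) = f j) :
    ∀ k j, f (j + q * k) = f j := by
  intro k
  induction k with
  | zero => simp
  | succ k ih =>
    intro j
    have e : j + q * (k + 1) = (j + q * k) + q := by ring
    rw [e, h, ih]

omit [Inhabited (Fin d)] in
lemma period_gcd : ∀ (s p p' : ℕ) (f : ℕ → Letter d), p + p' ≤ s → 0 < p → 0 < p' →
    (∀ j, f (j + p) = f j) → (∀ j, f (j + p') = f j) →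
    ∀ j, f (j + Nat.gcd p p') = f j := by
  intro s
  induction s with
  | zero => intro p p' f h hp hp' _ _ _; omega
  | succ s ih =>
    intro p p' f hs hp hp' h1 h2 j
    rcases lt_trichotomy p p' with h | h | h
    · have h3 : ∀ j, f (j + (p' - p)) = f j := by
        intro j
        have hx := h1 (j + (p' - p))
        rw [show j + (p' - p) + p = j + p' from by omega, h2] at hx
        exact hx.symm
      have := ih p (p' - p) f (by omega) hp (by omega) h1 h3 j
      rwa [Nat.gcd_sub_self_right (le_of_lt h)] at this
    · rw [h, Nat.gcd_self]; exact h2 j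
    · have h3 : ∀ j, f (j + (p - p')) = f j := by
        intro j
        have hx := h2 (j + (p - p'))
        rw [show j + (p - p') + p' = j + p from by omega, h1] at hx
        exact hx.symm
      have := ih p' (p - p') f (by omega) hp' (by omega) h2 h3 j
      rwa [Nat.gcd_sub_self_right (le_of_lt h), Nat.gcd_comm] at this

lemma period_mod {f : ℕ → Letter d} {g : ℕ} (hg : 0 < g) (h : ∀ j, f (j + g) = f j)
    {i i' : ℕ} (he : i % g = i' % g) : f i = f i' := by
  have key : ∀ i, f i = f (i % g) := by
    intro i
    conv_lhs => rw [← Nat.mod_add_div i g]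
    exact period_iterate h (i / g) (i % g)
  rw [key i, key i', he]

lemma mod_pred {g p : ℕ} (hg : 0 < g) (hp : 0 < p) (hd : g ∣ p) : (p - 1) % g = g - 1 := by
  obtain ⟨e, rfl⟩ := hd
  have he : 1 ≤ e := by
    rcases Nat.eq_zero_or_pos e with rfl | h
    · simp at hp
    · exact h
  have h1 : g * e = g * (e - 1) + g := by
    rw [← Nat.mul_succ]
    congr 1
    omega
  have h2 : g * e - 1 = g * (e - 1) + (g - 1) := by omega
  rw [h2, Nat.mul_add_mod, Nat.mod_eq_of_lt (by omega)]

lemma mod_pred_sub {g p p' : ℕ} (hg : 0 < g) (hp : 0 < p) (hp' : 0 < p')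
    (hdp : g ∣ p) (hdp' : g ∣ p') (j : ℕ) :
    (p - 1 - j % p) % g = (p' - 1 - j % p') % g := by
  set t := j % p with ht
  set t' := j % p' with ht'
  have htp : t < p := Nat.mod_lt _ hp
  have htp' : t' < p' := Nat.mod_lt _ hp'
  have hnat : t % g = t' % g := by
    rw [ht, ht', Nat.mod_mod_of_dvd j hdp, Nat.mod_mod_of_dvd j hdp']
  show Nat.ModEq g (p - 1 - t) (p' - 1 - t')
  rw [Nat.modEq_iff_dvd]
  have d1 : (g:ℤ) ∣ (p:ℤ) := Int.natCast_dvd_natCast.mpr hdp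
  have d2 : (g:ℤ) ∣ (p':ℤ) := Int.natCast_dvd_natCast.mpr hdp'
  have d3 : (g:ℤ) ∣ (t':ℤ) - (t:ℤ) := (Nat.modEq_iff_dvd (n := g)).mp hnat
  have e : ((p' - 1 - t' : ℕ) : ℤ) - ((p - 1 - t : ℕ) : ℤ) = ((p':ℤ) - p) - ((t':ℤ) - t) := by
    omega
  rw [e]
  exact dvd_sub (dvd_sub d2 d1) d3

lemma getD_invRev {L : List (Letter d)} {i : ℕ} (hi : i < L.length) :
    (FreeGroup.invRev L).getD i default = Letter.inv (L.getD (L.length - 1 - i) default) := by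
  have h1 : i < (FreeGroup.invRev L).length := by rw [FreeGroup.invRev_length]; exact hi
  rw [List.getD_eq_getElem _ _ h1, List.getD_eq_getElem _ _ (by omega)]
  simp only [FreeGroup.invRev, List.getElem_reverse, List.getElem_map, List.length_map]
  rfl

lemma core_half {U C U' C' : List (Letter d)} (hC : C ≠ []) (hC' : C' ≠ [])
    (h5' : ∀ a ∈ U'.getLast?, ∀ b ∈ C'.getLast?, b ≠ a)
    (hle : U.length ≤ U'.length)
    (heq : infWord U C = infWord U' C') :
    infWord U (FreeGroup.invRev C) = infWord U' (FreeGroup.invRev C') := by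
  have hp : 0 < C.length := List.length_pos_iff.mpr hC
  have hp' : 0 < C'.length := List.length_pos_iff.mpr hC'
  set u := U.length with hu
  set u' := U'.length with hu'
  set p := C.length with hpdef
  set p' := C'.length with hp'def
  set m := u' - u with hm
  set f : ℕ → Letter d := fun j => C.getD ((m + j) % p) default with hf
  have hfx : ∀ j, f j = infWord U C (u' + j) := by
    intro j
    rw [hf]
    unfold infWord
    rw [if_neg (by omega)]
    simp only
    congr 2
    omega
  have hfp : ∀ j, f (j + p) = f j := by
    intro j
    have e : (m + (j + p)) % p = (m + j) % p := by
      rw [show m + (j + p) = (m + j) + p from by ring, Nat.add_mod_right]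
    simp only [hf]
    rw [e]
  have hfx' : ∀ j, f j = C'.getD (j % p') default := by
    intro j
    rw [hfx, heq]
    unfold infWord
    rw [if_neg (by omega)]
    congr 2
    omega
  have hfp' : ∀ j, f (j + p') = f j := by
    intro j
    rw [hfx', hfx', Nat.add_mod_right]
  set g := Nat.gcd p p' with hg
  have hgpos : 0 < g := Nat.gcd_pos_of_pos_left _ hp
  have hgp : g ∣ p := Nat.gcd_dvd_left _ _
  have hgp' : g ∣ p' := Nat.gcd_dvd_right _ _
  have hper : ∀ j, f (j + g) = f j := period_gcd (p + p') p p' f le_rfl hp hp' hfp hfp'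
  -- Step 1: the two preperiods have the same length.
  have hm0 : u = u' := by
    by_contra hne
    have hm1 : 1 ≤ m := by omega
    have hU'0 : U' ≠ [] := by
      intro hh
      rw [hh] at hu'
      simp at hu'
      omega
    have e1 : infWord U C (u' - 1) = f (p - 1) := by
      have e : (u' - 1 - u) % p = (m + (p - 1)) % p := by
        rw [show m + (p - 1) = (m - 1) + p from by omega, Nat.add_mod_right]
        congr 1
        omega
      unfold infWord
      rw [if_neg (by omega)]
      simp only [hf]
      rw [e]
    have e2 : f (p - 1) = f (p' - 1) :=
      period_mod hgpos hper (by rw [mod_pred hgpos hp hgp, mod_pred hgpos hp' hgp'])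
    have e3 : f (p' - 1) = C'.getD (p' - 1) default := by
      rw [hfx', Nat.mod_eq_of_lt (by omega)]
    have e4 : infWord U' C' (u' - 1) = U'.getD (u' - 1) default := by
      unfold infWord
      rw [if_pos (by omega)]
    refine h5' (U'.getD (u' - 1) default) ?_ (C'.getD (p' - 1) default) ?_ ?_
    · rw [getD_getLast' hU'0, Option.mem_def]
    · rw [getD_getLast' hC', Option.mem_def]
    · rw [← e3, ← e2, ← e1, heq, e4]
  -- Step 2: conclude for the inverted periodic parts.
  funext n
  unfold infWord
  rw [FreeGroup.invRev_length, FreeGroup.invRev_length]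
  rcases lt_or_ge n u with h1 | h1
  · rw [if_pos (by omega), if_pos (by omega)]
    have := congrFun heq n
    unfold infWord at this
    rw [if_pos (by omega), if_pos (by omega)] at this
    exact this
  · rw [if_neg (by omega), if_neg (by omega)]
    have hmz : m = 0 := by omega
    have hf0 : ∀ j, f j = C.getD (j % p) default := by
      intro j
      rw [hf, hmz]
      simp
    set jn := n - u with hjn
    have hjn' : n - u' = jn := by omega
    rw [hjn']
    rw [getD_invRev (Nat.mod_lt _ hp), getD_invRev (Nat.mod_lt _ hp')]
    congr 1
    set r := jn % p with hr
    set r' := jn % p' with hr'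
    have hrp : r < p := Nat.mod_lt _ hp
    have hrp' : r' < p' := Nat.mod_lt _ hp'
    have eL : C.getD (p - 1 - r) default = f (p - 1 - r) := by
      rw [hf0 (p - 1 - r), Nat.mod_eq_of_lt (by omega)]
    have eR : C'.getD (p' - 1 - r') default = f (p' - 1 - r') := by
      rw [hfx' (p' - 1 - r'), Nat.mod_eq_of_lt (by omega)]
    rw [eL, eR]
    refine period_mod hgpos hper ?_
    rw [hr, hr']
    exact mod_pred_sub hgpos hp hp' hgp hgp' jn

lemma core {U C U' C' : List (Letter d)} (hC : C ≠ []) (hC' : C' ≠ [])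
    (h5 : ∀ a ∈ U.getLast?, ∀ b ∈ C.getLast?, b ≠ a)
    (h5' : ∀ a ∈ U'.getLast?, ∀ b ∈ C'.getLast?, b ≠ a)
    (heq : infWord U C = infWord U' C') :
    infWord U (FreeGroup.invRev C) = infWord U' (FreeGroup.invRev C') := by
  rcases le_total U.length U'.length with h | h
  · exact core_half hC hC' h5' h heq
  · exact (core_half hC' hC h5 h heq.symm).symm

end RWAux
namespace RWAux
open FreeGroup List

variable {d : ℕ} [Inhabited (Fin d)]

lemma getD_take {l : List (Letter d)} {t i : ℕ} (hi : i < t) (hil : i < l.length) :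
    (l.take t).getD i default = l.getD i default := by
  rw [List.getD_eq_getElem _ _ (by simp; omega), List.getD_eq_getElem _ _ hil,
    List.getElem_take]

lemma getD_drop {l : List (Letter d)} {s j : ℕ} (h : s + j < l.length) :
    (l.drop s).getD j default = l.getD (s + j) default := by
  rw [List.getD_eq_getElem _ _ (by simp; omega), List.getD_eq_getElem _ _ h]
  simp [List.getElem_drop]

lemma cancelLen_eq (u : List (Letter d)) (x : ℕ → Letter d) :
    Nat.findGreatest (fun k => ∀ i < k, u[u.length - 1 - i]? = some (Letter.inv (x i)))
      u.length = cancelLen u x := rfl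

lemma cancelLen_le (u : List (Letter d)) (x : ℕ → Letter d) : cancelLen u x ≤ u.length :=
  Nat.findGreatest_le _

lemma cancelLen_match (u : List (Letter d)) (x : ℕ → Letter d) :
    ∀ i < cancelLen u x, u.getD (u.length - 1 - i) default = Letter.inv (x i) := by
  intro i hi
  have h := (Nat.findGreatest_eq_iff.mp (cancelLen_eq u x)).2.1
  have hk0 : cancelLen u x ≠ 0 := by omega
  have hP := h hk0 i hi
  have hidx : u.length - 1 - i < u.length := by
    have := cancelLen_le u x
    omega
  rw [List.getElem?_eq_getElem hidx] at hP
  rw [List.getD_eq_getElem _ _ hidx]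
  exact Option.some.inj hP

lemma cancelLen_stop (u : List (Letter d)) (x : ℕ → Letter d) (h : cancelLen u x < u.length) :
    u.getD (u.length - 1 - cancelLen u x) default ≠ Letter.inv (x (cancelLen u x)) := by
  have hh := (Nat.findGreatest_eq_iff.mp (cancelLen_eq u x)).2.2
  have hnP : ¬ (∀ i < cancelLen u x + 1, u[u.length - 1 - i]? = some (Letter.inv (x i))) :=
    hh (by omega) (by omega)
  intro hcon
  apply hnP
  intro i hi
  rcases Nat.lt_or_ge i (cancelLen u x) with h1 | h1
  · have := cancelLen_match u x i h1
    have hidx : u.length - 1 - i < u.length := by omega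
    rw [List.getD_eq_getElem _ _ hidx] at this
    rw [List.getElem?_eq_getElem hidx, this]
  · have hie : i = cancelLen u x := by omega
    have hidx : u.length - 1 - i < u.length := by omega
    rw [List.getElem?_eq_getElem hidx, ← List.getD_eq_getElem _ default hidx, hie, hcon]

lemma isReducedSeq_concatReduce {u : List (Letter d)} {x : ℕ → Letter d}
    (hu : Reduced u) (hx : IsReducedSeq x) : IsReducedSeq (concatReduce u x) := by
  intro n
  unfold concatReduce
  simp only
  have hkle := cancelLen_le u x
  set k := cancelLen u x with hk
  set m := u.length - k with hm
  rcases lt_trichotomy (n+1) m with h1 | h1 | h1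
  · rw [dif_pos h1, dif_pos (by omega)]
    have := chain'_getD hu (show n+1 < u.length by omega)
    rwa [List.getD_eq_getElem _ _ (by omega), List.getD_eq_getElem _ _ (by omega)] at this
  · rw [dif_neg (by omega), dif_pos (by omega)]
    have e : k + (n + 1 - m) = k := by omega
    rw [e]
    have hklt : k < u.length := by omega
    have hstop := cancelLen_stop u x hklt
    rw [← hk] at hstop
    intro hcon
    apply hstop
    rw [show u.length - 1 - k = n from by omega, List.getD_eq_getElem _ _ (by omega), hcon]
    simp
  · rw [dif_neg (by omega), dif_neg (by omega)]
    have e : k + (n + 1 - m) = (k + (n - m)) + 1 := by omega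
    rw [e]
    exact hx _

lemma concatReduce_lt {u : List (Letter d)} {x : ℕ → Letter d} {n : ℕ}
    (hn : n < u.length - cancelLen u x) :
    concatReduce u x n = u.getD n default := by
  simp only [concatReduce]
  rw [dif_pos hn, List.getD_eq_getElem _ _ (by omega)]

lemma concatReduce_ge {u : List (Letter d)} {x : ℕ → Letter d} {n : ℕ}
    (hn : u.length - cancelLen u x ≤ n) :
    concatReduce u x n = x (cancelLen u x + (n - (u.length - cancelLen u x))) := by
  simp only [concatReduce]
  rw [dif_neg (by omega)]

lemma boundaryAct_fst (g : FreeGroup (Fin d)) (x : Boundary d) :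
    (boundaryAct g x).1 = concatReduce (FreeGroup.toWord g) x.1 := by
  unfold boundaryAct
  rw [dif_pos (isReducedSeq_concatReduce (reduced_toWord g) x.2)]

lemma exists_cancel (A B : FreeGroup (Fin d)) :
    ∃ k, k ≤ A.toWord.length ∧ k ≤ B.toWord.length ∧
      (∀ i < k, A.toWord.getD (A.toWord.length - 1 - i) default
        = Letter.inv (B.toWord.getD i default)) ∧
      (k = A.toWord.length ∨ k = B.toWord.length ∨
        A.toWord.getD (A.toWord.length - 1 - k) default
          ≠ Letter.inv (B.toWord.getD k default)) ∧
      (A * B).toWord = A.toWord.take (A.toWord.length - k) ++ B.toWord.drop k := by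
  obtain ⟨k, h1, h2, h3, h4, h5⟩ :=
    reduce_append B.toWord A.toWord (reduced_toWord A) (reduced_toWord B)
  exact ⟨k, h1, h2, h3, h4, by rw [toWord_mul]; exact h5⟩

lemma isPlusLimit_boundaryAct {g w : FreeGroup (Fin d)} {x : Boundary d}
    (h : IsPlusLimit w x) : IsPlusLimit (g * w * g⁻¹) (boundaryAct g x) := by
  have hyx := boundaryAct_fst g x
  set G := FreeGroup.toWord g with hG
  clear_value G
  have hkle : cancelLen G x.1 ≤ G.length := cancelLen_le G x.1
  set k := cancelLen G x.1 with hk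
  clear_value k
  set m := G.length - k with hm
  clear_value m
  intro K
  rcases Nat.eq_zero_or_pos K with rfl | hK
  · exact ⟨0, fun n _ => ⟨Nat.zero_le _, fun i hi => absurd hi (by omega)⟩⟩
  obtain ⟨N, hN⟩ := h (K + 2 * G.length)
  refine ⟨N, fun n hn => ?_⟩
  obtain ⟨hlen, hpref⟩ := hN n hn
  set W := FreeGroup.toWord (w ^ n) with hW
  clear_value W
  have hWx : ∀ i < K + 2 * G.length, W.getD i default = x.1 i := by
    intro i hi
    have := hpref i hi
    rw [List.getElem?_eq_getElem (by omega)] at this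
    rw [List.getD_eq_getElem _ _ (by omega)]
    exact Option.some.inj this
  -- step 1 : the word of `w^n * g⁻¹`
  obtain ⟨k₂, hk₂W, hk₂G, _, _, hDval⟩ := exists_cancel (w ^ n) g⁻¹
  set D := FreeGroup.toWord (w ^ n * g⁻¹) with hD
  clear_value D
  rw [← hW] at hk₂W hDval
  have hGinvlen : (FreeGroup.toWord g⁻¹).length = G.length := by
    rw [FreeGroup.toWord_inv, FreeGroup.invRev_length, ← hG]
  rw [hGinvlen] at hk₂G
  have hDlen : D.length = (W.length - k₂) + (G.length - k₂) := by
    rw [hDval]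
    simp only [List.length_append, List.length_take, List.length_drop, hGinvlen]
    omega
  have hDW : ∀ i < W.length - k₂, D.getD i default = W.getD i default := by
    intro i hi
    rw [hDval, List.getD_append _ _ _ _ (by simp; omega)]
    exact getD_take hi (by omega)
  have hDx : ∀ i < K + G.length, D.getD i default = x.1 i := by
    intro i hi
    rw [hDW i (by omega)]
    exact hWx i (by omega)
  have hDlen2 : K + G.length ≤ D.length := by omega
  -- step 2 : the word of `g * (w^n * g⁻¹)`
  obtain ⟨k₃, hk₃G, hk₃D, hmatch₃, hstop₃, hval₃⟩ := exists_cancel g (w ^ n * g⁻¹)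
  rw [← hG] at hk₃G hmatch₃ hstop₃ hval₃
  rw [← hD] at hk₃D hmatch₃ hstop₃ hval₃
  -- the junction cancellation is exactly `cancelLen G x.1`
  have hGpos : k₃ ≠ 0 → 0 < G.length := fun h0 => by omega
  have hk₃k : k = k₃ := by
    rw [hk, ← cancelLen_eq]
    apply Nat.findGreatest_eq_iff.mpr
    refine ⟨hk₃G, ?_, ?_⟩
    · intro h0 i hi
      have hidx : G.length - 1 - i < G.length := by
        have := hGpos h0
        omega
      rw [List.getElem?_eq_getElem hidx, ← List.getD_eq_getElem _ default hidx]
      rw [hmatch₃ i hi, hDx i (by omega)]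
    · intro n' hn' hn'le hP
      have hGpos2 : 0 < G.length := by omega
      have hidx : G.length - 1 - k₃ < G.length := by omega
      have hPk := hP k₃ (by omega)
      rw [List.getElem?_eq_getElem hidx, ← List.getD_eq_getElem _ default hidx] at hPk
      have hPk' := Option.some.inj hPk
      rcases hstop₃ with hs | hs | hs
      · omega
      · omega
      · apply hs
        rw [hPk', hDx k₃ (by omega)]
  -- conclusion
  have hcnj : (g * w * g⁻¹) ^ n = g * (w ^ n * g⁻¹) := by
    rw [conj_pow_free]
    group
  have hTval : ((g * w * g⁻¹) ^ n).toWord = G.take m ++ D.drop k := by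
    rw [hcnj, hval₃, ← hk₃k, ← hm]
  have hTlen : ((g * w * g⁻¹) ^ n).toWord.length = m + (D.length - k) := by
    rw [hTval]
    simp
    omega
  constructor
  · omega
  · intro i hi
    have hi2 : i < ((g * w * g⁻¹) ^ n).toWord.length := by omega
    rw [List.getElem?_eq_getElem hi2, ← List.getD_eq_getElem _ default hi2]
    congr 1
    rw [hyx]
    rcases lt_or_ge i m with him | him
    · rw [concatReduce_lt (show i < G.length - cancelLen G x.1 from by rw [← hk]; omega)]
      rw [hTval, List.getD_append _ _ _ _ (by simp; omega)]
      exact getD_take him (by omega)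
    · rw [concatReduce_ge (show G.length - cancelLen G x.1 ≤ i from by rw [← hk]; omega)]
      have eidx : cancelLen G x.1 + (i - (G.length - cancelLen G x.1)) = k + (i - m) := by
        rw [← hk, ← hm]
      rw [eidx, hTval, List.getD_append_right _ _ _ _ (by simp; omega)]
      have e : i - (G.take m).length = i - m := by simp; omega
      rw [e, getD_drop (by omega)]
      exact hDx (k + (i - m)) (by omega)

end RWAux
namespace RWAux
open FreeGroup List

variable {d : ℕ} [Inhabited (Fin d)]

lemma pair_unique {g w g' w' : FreeGroup (Fin d)} {xp xm xp' xm' : Boundary d}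
    (hp : IsPlusLimit w xp) (hm : IsPlusLimit w⁻¹ xm)
    (hp' : IsPlusLimit w' xp') (hm' : IsPlusLimit w'⁻¹ xm')
    (heq : boundaryAct g xp = boundaryAct g' xp') :
    boundaryAct g xm = boundaryAct g' xm' := by
  have Hp : IsPlusLimit (g * w * g⁻¹) (boundaryAct g xp) := isPlusLimit_boundaryAct hp
  have Hm : IsPlusLimit ((g * w * g⁻¹)⁻¹) (boundaryAct g xm) := by
    have e : (g * w * g⁻¹)⁻¹ = g * w⁻¹ * g⁻¹ := by group
    rw [e]
    exact isPlusLimit_boundaryAct hm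
  have Hp' : IsPlusLimit (g' * w' * g'⁻¹) (boundaryAct g' xp') := isPlusLimit_boundaryAct hp'
  have Hm' : IsPlusLimit ((g' * w' * g'⁻¹)⁻¹) (boundaryAct g' xm') := by
    have e : (g' * w' * g'⁻¹)⁻¹ = g' * w'⁻¹ * g'⁻¹ := by group
    rw [e]
    exact isPlusLimit_boundaryAct hm'
  set v := g * w * g⁻¹ with hv
  set v' := g' * w' * g'⁻¹ with hv'
  have hv1 : v ≠ 1 := isPlusLimit_ne_one Hp
  have hv1' : v' ≠ 1 := isPlusLimit_ne_one Hp'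
  obtain ⟨U, C, hspec, hdec⟩ := exists_spec v.toWord.length v.toWord le_rfl
    (reduced_toWord v) (by rwa [ne_eq, FreeGroup.toWord_eq_nil_iff])
  obtain ⟨U', C', hspec', hdec'⟩ := exists_spec v'.toWord.length v'.toWord le_rfl
    (reduced_toWord v') (by rwa [ne_eq, FreeGroup.toWord_eq_nil_iff])
  have hvmk : v = FreeGroup.mk (U ++ C ++ FreeGroup.invRev U) := by
    conv_lhs => rw [← FreeGroup.mk_toWord (x := v)]
    rw [hdec]
  have hvmk' : v' = FreeGroup.mk (U' ++ C' ++ FreeGroup.invRev U') := by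
    conv_lhs => rw [← FreeGroup.mk_toWord (x := v')]
    rw [hdec']
  have hvinvmk : v⁻¹ = FreeGroup.mk (U ++ FreeGroup.invRev C ++ FreeGroup.invRev U) := by
    rw [hvmk, FreeGroup.inv_mk]
    congr 1
    rw [invRev_append, invRev_invRev, invRev_append, ← List.append_assoc]
  have hvinvmk' : v'⁻¹ = FreeGroup.mk (U' ++ FreeGroup.invRev C' ++ FreeGroup.invRev U') := by
    rw [hvmk', FreeGroup.inv_mk]
    congr 1
    rw [invRev_append, invRev_invRev, invRev_append, ← List.append_assoc]
  have hxp := isPlusLimit_unique Hp (isPlusLimit_spec hspec hvmk)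
  have hxm := isPlusLimit_unique Hm (isPlusLimit_spec (spec_invRev hspec) hvinvmk)
  have hxp' := isPlusLimit_unique Hp' (isPlusLimit_spec hspec' hvmk')
  have hxm' := isPlusLimit_unique Hm' (isPlusLimit_spec (spec_invRev hspec') hvinvmk')
  have hWeq : infWord U C = infWord U' C' := by
    have h2 := hxp.symm.trans (heq.trans hxp')
    exact congrArg Subtype.val h2
  have hcore := core hspec.1 hspec'.1 hspec.2.2.2.2 hspec'.2.2.2.2 hWeq
  rw [hxm, hxm']
  exact Subtype.ext hcore

end RWAux

/-- For every subset `W ⊆ F_d \ {e}`, each equivalence class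
of `R_W` contains at most two elements. -/
theorem RW_classes_at_most_two (d : ℕ) (hd : 2 ≤ d)
    (W : Set (FreeGroup (Fin d))) (hW : ∀ w ∈ W, w ≠ 1) :
    ∀ x y z u : Boundary d,
      (x, y) ∈ RW W → (x, z) ∈ RW W → (x, u) ∈ RW W →
      y = z ∨ y = u ∨ z = u := by
  haveI : Inhabited (Fin d) := ⟨⟨0, by omega⟩⟩
  intro x y z u hy hz hu
  have key : ∀ {a b : Boundary d}, (x, a) ∈ RW W → (x, b) ∈ RW W → a ≠ x → b ≠ x → a = b := by
    intro a b ha hb hax hbx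
    rcases ha with ha | ha
    · simp only [Set.mem_setOf_eq] at ha
      exact absurd ha.symm hax
    rcases hb with hb | hb
    · simp only [Set.mem_setOf_eq] at hb
      exact absurd hb.symm hbx
    obtain ⟨g, w, xp, xm, _, hp, hm, hx1, hx2⟩ := ha
    obtain ⟨g', w', xp', xm', _, hp', hm', hx1', hx2'⟩ := hb
    simp only at hx1 hx2 hx1' hx2'
    rw [hx2, hx2']
    exact RWAux.pair_unique hp hm hp' hm' (by rw [← hx1, ← hx1'])
  by_cases h1 : y = x
  · by_cases h2 : z = x
    · exact Or.inl (h1.trans h2.symm)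
    · by_cases h3 : u = x
      · exact Or.inr (Or.inl (h1.trans h3.symm))
      · exact Or.inr (Or.inr (key hz hu h2 h3))
  · by_cases h2 : z = x
    · by_cases h3 : u = x
      · exact Or.inr (Or.inr (h2.trans h3.symm))
      · exact Or.inr (Or.inl (key hy hu h1 h3))
    · exact Or.inl (key hy hz h1 h2)
end

section
/- Let W ⊆ F_d \ {e} be a finite subset. Then the quotient map π : ∂F_d → ∂F_d/R_W is a closed map, and consequently the quotient space ∂F_d/R_W, equipped with the quotient topology, is Hausdorff. -/
open FreeGroup List

namespace BProof

variable {d : ℕ}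

@[simp] lemma inv_invL (a : Letter d) : a.inv.inv = a := by
  cases a; simp [Letter.inv]

lemma inv_ne_self (a : Letter d) : Letter.inv a ≠ a := by
  cases a; simp [Letter.inv]

lemma ne_inv_comm {a b : Letter d} (h : a ≠ Letter.inv b) : b ≠ Letter.inv a := by
  intro hh; exact h (by rw [hh, inv_invL])

/-- prefix word of an infinite word -/
def pre (x : ℕ → Letter d) (t : ℕ) : List (Letter d) := List.ofFn fun i : Fin t => x i

/-- segment of an infinite word -/
def seg (x : ℕ → Letter d) (a t : ℕ) : List (Letter d) := List.ofFn fun i : Fin t => x (a + i)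

@[simp] lemma pre_length (x : ℕ → Letter d) (t : ℕ) : (pre x t).length = t := by simp [pre]
@[simp] lemma seg_length (x : ℕ → Letter d) (a t : ℕ) : (seg x a t).length = t := by simp [seg]

@[simp] lemma pre_getElem (x : ℕ → Letter d) (t i : ℕ) (h : i < (pre x t).length) :
    (pre x t)[i] = x i := by simp [pre]

@[simp] lemma seg_getElem (x : ℕ → Letter d) (a t i : ℕ) (h : i < (seg x a t).length) :
    (seg x a t)[i] = x (a + i) := by simp [seg]

lemma pre_append_seg (x : ℕ → Letter d) (a t : ℕ) :
    pre x a ++ seg x a t = pre x (a + t) := by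
  apply List.ext_getElem (by simp)
  intro i h1 h2
  rcases lt_or_ge i a with h | h
  · rw [List.getElem_append_left (by simpa using h)]; simp
  · rw [List.getElem_append_right (by simpa using h)]
    simp only [seg_getElem, pre_getElem, pre_length]
    congr 1; omega

/-- a finite word is reduced -/
def RedWord (L : List (Letter d)) : Prop :=
  ∀ i, (h : i + 1 < L.length) → L[i + 1] ≠ Letter.inv (L[i]'(by omega))

lemma RedWord.reduce_eq {L : List (Letter d)} (h : RedWord L) : FreeGroup.reduce L = L := by
  induction L with
  | nil => rfl
  | cons a L ih =>
    have hL : RedWord L := by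
      intro i hi
      have := h (i + 1) (by simpa using Nat.succ_lt_succ hi)
      simpa using this
    rw [FreeGroup.reduce.cons]
    rw [ih hL]
    cases L with
    | nil => rfl
    | cons b M =>
      have hab := h 0 (by simp)
      simp only [List.getElem_cons_succ, List.getElem_cons_zero] at hab
      have : ¬(a.1 = b.1 ∧ a.2 = !b.2) := by
        rintro ⟨h1, h2⟩
        cases a; cases b; simp_all [Letter.inv]
      simp [this]

lemma redWord_of_reduce_eq {L : List (Letter d)} (h : FreeGroup.reduce L = L) : RedWord L := by
  intro i hi hbad
  -- L = take i L ++ L[i] :: L[i+1] :: drop (i+2) L with L[i+1] = inv L[i]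
  have h1 : i < L.length := by omega
  have hsplit : L = L.take i ++ (L[i]'h1) :: (L[i+1]'hi) :: L.drop (i + 2) := by
    conv_lhs => rw [← List.take_append_drop i L]
    rw [List.drop_eq_getElem_cons h1, List.drop_eq_getElem_cons (l := L) hi]
  exact (FreeGroup.reduce.not (p := False)
    (L₂ := L.take i) (x := (L[i]'h1).1) (b := (L[i]'h1).2) (L₃ := L.drop (i + 2)) (by
      rw [h]
      conv_lhs => rw [hsplit, hbad]
      rfl)).elim

end BProof

namespace BProof
variable {d : ℕ}

lemma RedWord.take {L : List (Letter d)} (h : RedWord L) (n : ℕ) : RedWord (L.take n) := by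
  intro i hi
  have hl : i + 1 < L.length := by
    have := hi; rw [List.length_take] at this; omega
  simp only [List.getElem_take]
  exact h i hl

lemma RedWord.drop {L : List (Letter d)} (h : RedWord L) (n : ℕ) : RedWord (L.drop n) := by
  intro i hi
  rw [List.length_drop] at hi
  simp only [List.getElem_drop]
  have e : n + (i + 1) = (n + i) + 1 := by omega
  simp only [e]
  exact h (n + i) (by omega)

lemma redWord_toWord (g : FreeGroup (Fin d)) : RedWord (FreeGroup.toWord g) :=
  redWord_of_reduce_eq (FreeGroup.reduce_toWord g)

lemma redWord_pre {x : ℕ → Letter d} (hx : IsReducedSeq x) (t : ℕ) : RedWord (pre x t) := by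
  intro i hi
  simpa using hx i

lemma redWord_seg {x : ℕ → Letter d} (hx : IsReducedSeq x) (a t : ℕ) : RedWord (seg x a t) := by
  intro i hi
  simp only [seg_getElem]
  have e : a + (i + 1) = (a + i) + 1 := by omega
  rw [e]
  exact hx (a + i)

@[simp] lemma invRev_getElem (L : List (Letter d)) (i : ℕ) (h : i < (FreeGroup.invRev L).length) :
    (FreeGroup.invRev L)[i] = Letter.inv (L[L.length - 1 - i]'(by
      rw [FreeGroup.invRev_length] at h; omega)) := by
  simp only [FreeGroup.invRev, List.getElem_reverse, List.getElem_map, List.length_map]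
  rfl

lemma RedWord.invRev {L : List (Letter d)} (h : RedWord L) : RedWord (FreeGroup.invRev L) := by
  intro i hi hbad
  have hlen : (FreeGroup.invRev L).length = L.length := FreeGroup.invRev_length
  rw [hlen] at hi
  rw [invRev_getElem _ _ (by rw [hlen]; omega), invRev_getElem _ _ (by rw [hlen]; omega)] at hbad
  rw [inv_invL] at hbad
  have h2 : L.length - 1 - i = (L.length - 1 - (i + 1)) + 1 := by omega
  simp only [h2] at hbad
  exact h (L.length - 1 - (i + 1)) (by omega) hbad.symm

/-- appending reduced words with a non-cancelling junction -/
lemma RedWord.append {A B : List (Letter d)} (hA : RedWord A) (hB : RedWord B)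
    (hj : ∀ (h1 : 0 < A.length) (h2 : 0 < B.length),
      B[0] ≠ Letter.inv (A[A.length - 1]'(by omega))) : RedWord (A ++ B) := by
  intro i hi
  have hi' : i + 1 < A.length + B.length := by
    rw [List.length_append] at hi; omega
  rcases lt_or_ge (i + 1) A.length with h | h
  · rw [List.getElem_append_left h, List.getElem_append_left (by omega)]
    exact hA i h
  rcases lt_or_ge i A.length with h' | h'
  · have hA0 : 0 < A.length := by omega
    have hB0 : 0 < B.length := by omega
    rw [List.getElem_append_right h, List.getElem_append_left h']
    have hi1 : i + 1 - A.length = 0 := by omega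
    have hieq : i = A.length - 1 := by omega
    simp only [hi1]
    simp only [hieq]
    exact hj hA0 hB0
  · rw [List.getElem_append_right h, List.getElem_append_right h']
    have e : i + 1 - A.length = (i - A.length) + 1 := by omega
    simp only [e]
    exact hB (i - A.length) (by omega)

end BProof

namespace BProof
variable {d : ℕ}

lemma red_append_aux (u p : List (Letter d)) (k : ℕ) (hk1 : k ≤ u.length) (hk2 : k ≤ p.length)
    (hc : ∀ i (hi : i < k), u[u.length - 1 - i]'(by omega) = Letter.inv (p[i]'(by omega))) :
    FreeGroup.Red (u ++ p) (u.take (u.length - k) ++ p.drop k) := by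
  induction k with
  | zero =>
    simp only [Nat.sub_zero, List.take_length, List.drop_zero]
    exact Relation.ReflTransGen.refl
  | succ k ih =>
    have hk1' : k ≤ u.length := by omega
    have hk2' : k ≤ p.length := by omega
    have ih' := ih hk1' hk2' (fun i hi => hc i (by omega))
    have hpk : k < p.length := by omega
    have huk : u.length - 1 - k < u.length := by omega
    set a := p[k]'hpk with ha
    have hsplit1 : u.take (u.length - k) = u.take (u.length - (k+1)) ++ [Letter.inv a] := by
      have e : u.length - k = (u.length - (k+1)) + 1 := by omega
      rw [e, List.take_succ, List.getElem?_eq_getElem (by omega)]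
      have e2 : u.length - (k + 1) = u.length - 1 - k := by omega
      simp only [e2]
      rw [hc k (by omega)]
      rfl
    have hsplit2 : p.drop k = a :: p.drop (k+1) := List.drop_eq_getElem_cons hpk
    have hstep : FreeGroup.Red.Step
        (u.take (u.length - (k+1)) ++ (Letter.inv a) :: a :: p.drop (k+1))
        (u.take (u.length - (k+1)) ++ p.drop (k+1)) := by
      have := @FreeGroup.Red.Step.not (Fin d) (u.take (u.length - (k+1))) (p.drop (k+1)) a.1 (!a.2)
      simpa [Letter.inv, Bool.not_not] using this
    refine Relation.ReflTransGen.trans ih' (Relation.ReflTransGen.single ?_)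
    rw [hsplit1, hsplit2, List.append_assoc, List.singleton_append]
    exact hstep

lemma reduce_append (u p : List (Letter d)) (hu : RedWord u) (hp : RedWord p) (k : ℕ)
    (hk1 : k ≤ u.length) (hk2 : k ≤ p.length)
    (hc : ∀ i (hi : i < k), u[u.length - 1 - i]'(by omega) = Letter.inv (p[i]'(by omega)))
    (hs : ∀ (h₁ : k < u.length) (h₂ : k < p.length),
      u[u.length - 1 - k]'(by omega) ≠ Letter.inv (p[k]'h₂)) :
    FreeGroup.reduce (u ++ p) = u.take (u.length - k) ++ p.drop k := by
  have hred := red_append_aux u p k hk1 hk2 hc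
  have hrw : RedWord (u.take (u.length - k) ++ p.drop k) := by
    apply (hu.take _).append (hp.drop _)
    intro h1 h2
    rw [List.length_take] at h1
    rw [List.length_drop] at h2
    have hku : k < u.length := by omega
    have hkp : k < p.length := by omega
    have e1 : (u.take (u.length - k)).length - 1 = u.length - 1 - k := by
      rw [List.length_take]; omega
    simp only [List.getElem_drop, List.getElem_take, e1, Nat.add_zero]
    exact ne_inv_comm (hs hku hkp)
  rw [FreeGroup.reduce.eq_of_red hred, hrw.reduce_eq]

lemma cancelLen_le (u : List (Letter d)) (x : ℕ → Letter d) : cancelLen u x ≤ u.length :=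
  Nat.findGreatest_le _

lemma cancelLen_spec (u : List (Letter d)) (x : ℕ → Letter d) :
    ∀ i < cancelLen u x, u[u.length - 1 - i]? = some (Letter.inv (x i)) := by
  exact Nat.findGreatest_spec
    (P := fun k => ∀ i < k, u[u.length - 1 - i]? = some (Letter.inv (x i)))
    (Nat.zero_le _) (fun i hi => absurd hi (Nat.not_lt_zero i))

lemma cancelLen_spec' (u : List (Letter d)) (x : ℕ → Letter d) (i : ℕ) (hi : i < cancelLen u x) :
    u[u.length - 1 - i]'(by have h1 := cancelLen_le u x; have h2 := hi; omega) = Letter.inv (x i) := by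
  have h := cancelLen_spec u x i hi
  have hl : u.length - 1 - i < u.length := by have := cancelLen_le u x; omega
  rwa [List.getElem?_eq_getElem hl, Option.some_inj] at h

lemma cancelLen_stop (u : List (Letter d)) (x : ℕ → Letter d)
    (hlt : cancelLen u x < u.length) :
    u[u.length - 1 - cancelLen u x]'(by omega) ≠ Letter.inv (x (cancelLen u x)) := by
  intro hbad
  have hgr := Nat.findGreatest_is_greatest (n := u.length)
    (k := cancelLen u x + 1)
    (P := fun k => ∀ i < k, u[u.length - 1 - i]? = some (Letter.inv (x i)))
    (by exact Nat.lt_succ_self _) (by omega)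
  apply hgr
  intro i hi
  rcases Nat.lt_or_ge i (cancelLen u x) with h | h
  · exact cancelLen_spec u x i h
  · have he : i = cancelLen u x := by omega
    subst he
    rw [List.getElem?_eq_getElem (by omega), hbad]

lemma reduce_append_of_agree (u : List (Letter d)) (x : ℕ → Letter d) (p : List (Letter d))
    (hu : RedWord u) (hp : RedWord p) (hlen : u.length ≤ p.length)
    (hagree : ∀ i (h : i < u.length), p[i]'(by omega) = x i) :
    FreeGroup.reduce (u ++ p)
      = u.take (u.length - cancelLen u x) ++ p.drop (cancelLen u x) := by
  have hk := cancelLen_le u x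
  apply reduce_append u p hu hp (cancelLen u x) hk (le_trans hk hlen)
  · intro i hi
    rw [hagree i (by omega)]
    exact cancelLen_spec' u x i hi
  · intro h₁ h₂
    rw [hagree (cancelLen u x) h₁]
    exact cancelLen_stop u x h₁

lemma reduce_append_pre (u : List (Letter d)) (x : ℕ → Letter d)
    (hu : RedWord u) (hx : IsReducedSeq x) (t : ℕ) (ht : u.length ≤ t) :
    FreeGroup.reduce (u ++ pre x t)
      = u.take (u.length - cancelLen u x) ++ (pre x t).drop (cancelLen u x) := by
  apply reduce_append_of_agree u x _ hu (redWord_pre hx t) (by simp [ht])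
  intro i h
  simp

lemma concatReduce_lt (u : List (Letter d)) (x : ℕ → Letter d) (n : ℕ)
    (h : n < u.length - cancelLen u x) :
    concatReduce u x n = u[n]'(by omega) := by
  simp only [concatReduce]
  rw [dif_pos h]

lemma concatReduce_ge (u : List (Letter d)) (x : ℕ → Letter d) (n : ℕ)
    (h : ¬ n < u.length - cancelLen u x) :
    concatReduce u x n = x (cancelLen u x + (n - (u.length - cancelLen u x))) := by
  simp only [concatReduce]
  rw [dif_neg h]

lemma isReducedSeq_concatReduce (u : List (Letter d)) (x : ℕ → Letter d)
    (hu : RedWord u) (hx : IsReducedSeq x) : IsReducedSeq (concatReduce u x) := by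
  intro n
  set k := cancelLen u x with hk
  set m := u.length - k with hm
  have hkle := cancelLen_le u x
  rcases Nat.lt_or_ge (n + 1) m with h1 | h1
  · rw [concatReduce_lt u x (n+1) h1, concatReduce_lt u x n (by omega)]
    exact hu n (by omega)
  rcases Nat.lt_or_ge n m with h2 | h2
  · -- n + 1 = m
    have hnm : n + 1 = m := by omega
    rw [concatReduce_ge u x (n+1) (by omega), concatReduce_lt u x n h2]
    have hklen : k < u.length := by omega
    have := ne_inv_comm (cancelLen_stop u x hklen)
    have e : k + (n + 1 - m) = k := by omega
    rw [e]
    have e2 : n = u.length - 1 - k := by omega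
    simp only [e2]
    exact this
  · rw [concatReduce_ge u x (n+1) (by omega), concatReduce_ge u x n (by omega)]
    have e : k + (n + 1 - m) = (k + (n - m)) + 1 := by omega
    rw [e]
    exact hx (k + (n - m))

lemma boundaryAct_val (g : FreeGroup (Fin d)) (x : Boundary d) :
    (boundaryAct g x).1 = concatReduce (FreeGroup.toWord g) x.1 := by
  rw [boundaryAct, dif_pos (isReducedSeq_concatReduce _ _ (redWord_toWord g) x.2)]

lemma pre_boundaryAct (g : FreeGroup (Fin d)) (x : Boundary d) (t : ℕ)
    (ht : (FreeGroup.toWord g).length ≤ t) :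
    pre (boundaryAct g x).1
        ((FreeGroup.toWord g).length - cancelLen (FreeGroup.toWord g) x.1
          + (t - cancelLen (FreeGroup.toWord g) x.1))
      = FreeGroup.reduce (FreeGroup.toWord g ++ pre x.1 t) := by
  set u := FreeGroup.toWord g with hu
  set k := cancelLen u x.1 with hk
  have hkle : k ≤ u.length := cancelLen_le u x.1
  rw [reduce_append_pre u x.1 (redWord_toWord g) x.2 t ht]
  have hLt : (u.take (u.length - k)).length = u.length - k := by
    rw [List.length_take]; omega
  apply List.ext_getElem
  · simp only [pre_length, List.length_append, List.length_drop, hLt]; simp only [List.length_take]; omega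
  intro i hi1 hi2
  rw [pre_getElem _ _ _ hi1, boundaryAct_val]
  rcases Nat.lt_or_ge i (u.length - k) with h | h
  · rw [concatReduce_lt u x.1 i h,
      List.getElem_append_left (by rw [hLt]; omega), List.getElem_take]
  · rw [concatReduce_ge u x.1 i (by omega),
      List.getElem_append_right (by rw [hLt]; omega)]
    rw [List.getElem_drop, pre_getElem]
    congr 1
    rw [hLt]

end BProof

namespace BProof
variable {d : ℕ}

lemma boundary_ext {x y : Boundary d} (h : ∀ N, ∃ t, N ≤ t ∧ pre x.1 t = pre y.1 t) : x = y := by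
  apply Subtype.ext
  funext i
  obtain ⟨t, ht, he⟩ := h (i + 1)
  have h1 : i < (pre x.1 t).length := by simp; omega
  have h2 : i < (pre y.1 t).length := by simp; omega
  have : (pre x.1 t)[i]'h1 = (pre y.1 t)[i]'h2 := by simp only [he]
  simpa using this

lemma toWord_mul (g h : FreeGroup (Fin d)) :
    FreeGroup.toWord (g * h) = FreeGroup.reduce (FreeGroup.toWord g ++ FreeGroup.toWord h) := by
  conv_lhs => rw [← FreeGroup.mk_toWord (x := g), ← FreeGroup.mk_toWord (x := h)]
  rw [FreeGroup.mul_mk, FreeGroup.toWord_mk]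

lemma reduce_reduce_append (a b : List (Letter d)) :
    FreeGroup.reduce (FreeGroup.reduce a ++ b) = FreeGroup.reduce (a ++ b) :=
  (FreeGroup.reduce.eq_of_red
    (FreeGroup.Red.append_append FreeGroup.reduce.red FreeGroup.Red.refl)).symm

lemma reduce_append_reduce (a b : List (Letter d)) :
    FreeGroup.reduce (a ++ FreeGroup.reduce b) = FreeGroup.reduce (a ++ b) :=
  (FreeGroup.reduce.eq_of_red
    (FreeGroup.Red.append_append FreeGroup.Red.refl FreeGroup.reduce.red)).symm

lemma boundaryAct_one (x : Boundary d) : boundaryAct 1 x = x := by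
  apply Subtype.ext
  rw [boundaryAct_val]
  funext n
  have h0 : FreeGroup.toWord (1 : FreeGroup (Fin d)) = [] := FreeGroup.toWord_one
  rw [h0]
  have hk : cancelLen ([] : List (Letter d)) x.1 = 0 := by
    have := cancelLen_le ([] : List (Letter d)) x.1
    simpa using this
  rw [concatReduce_ge _ _ _ (by simp), hk]
  simp

lemma boundaryAct_mul (g h : FreeGroup (Fin d)) (x : Boundary d) :
    boundaryAct (g * h) x = boundaryAct g (boundaryAct h x) := by
  apply boundary_ext
  intro N
  set u := FreeGroup.toWord g with hu
  set v := FreeGroup.toWord h with hv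
  set w := FreeGroup.toWord (g * h) with hw
  set y := boundaryAct h x with hy
  have hwlen : w.length ≤ u.length + v.length := by
    have := FreeGroup.norm_mul_le g h
    simpa [FreeGroup.norm] using this
  set t := N + 2*u.length + 2*v.length + w.length + u.length + v.length with htdef
  set kh := cancelLen v x.1 with hkh
  set kw := cancelLen w x.1 with hkw
  have hkh_le : kh ≤ v.length := cancelLen_le _ _
  have hkw_le : kw ≤ w.length := cancelLen_le _ _
  set s := v.length - kh + (t - kh) with hs
  set kg := cancelLen u y.1 with hkg
  have hkg_le : kg ≤ u.length := cancelLen_le _ _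
  have hB : pre y.1 s = FreeGroup.reduce (v ++ pre x.1 t) :=
    pre_boundaryAct h x t (by show v.length ≤ t; omega)
  have hA : pre (boundaryAct (g * h) x).1 (w.length - kw + (t - kw))
      = FreeGroup.reduce (w ++ pre x.1 t) :=
    pre_boundaryAct (g * h) x t (by show w.length ≤ t; omega)
  have hC : pre (boundaryAct g y).1 (u.length - kg + (s - kg))
      = FreeGroup.reduce (u ++ pre y.1 s) :=
    pre_boundaryAct g y s (by show u.length ≤ s; omega)
  have hL : FreeGroup.reduce (u ++ pre y.1 s)
      = FreeGroup.reduce (w ++ pre x.1 t) := by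
    rw [hB, reduce_append_reduce, hw, toWord_mul, reduce_reduce_append,
      List.append_assoc]
  rw [hL] at hC
  -- both are prefixes of the same list
  have hlen1 : w.length - kw + (t - kw) = (FreeGroup.reduce (w ++ pre x.1 t)).length := by
    have := congrArg List.length hA
    simpa using this
  have hlen2 : u.length - kg + (s - kg) = (FreeGroup.reduce (w ++ pre x.1 t)).length := by
    have := congrArg List.length hC
    simpa using this
  refine ⟨w.length - kw + (t - kw), by omega, ?_⟩
  rw [hA]
  rw [hlen1, ← hlen2]
  exact hC.symm

lemma isPlusLimit_unique {w : FreeGroup (Fin d)} {x y : Boundary d}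
    (hx : IsPlusLimit w x) (hy : IsPlusLimit w y) : x = y := by
  apply Subtype.ext
  funext i
  obtain ⟨N₁, h₁⟩ := hx (i + 1)
  obtain ⟨N₂, h₂⟩ := hy (i + 1)
  have a1 := (h₁ (max N₁ N₂) (le_max_left _ _)).2 i (by omega)
  have a2 := (h₂ (max N₁ N₂) (le_max_right _ _)).2 i (by omega)
  rw [a1] at a2
  exact Option.some_inj.mp a2

lemma act_fixed {w : FreeGroup (Fin d)} {xp : Boundary d} (hlim : IsPlusLimit w xp) :
    boundaryAct w xp = xp := by
  by_cases hw : w = 1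
  · subst hw; exact boundaryAct_one xp
  set u := FreeGroup.toWord w with hu
  have hc : 0 < u.length := by
    rcases Nat.eq_zero_or_pos u.length with h | h
    · exact absurd (FreeGroup.toWord_eq_nil_iff.mp (List.length_eq_zero_iff.mp h)) hw
    · exact h
  set k := cancelLen u xp.1 with hk
  have hkle : k ≤ u.length := cancelLen_le _ _
  apply boundary_ext
  intro N
  set t := N + 3 * u.length with htdef
  set k' := u.length - k + (t - k) with hk'
  obtain ⟨N₁, h₁⟩ := hlim t
  obtain ⟨N₂, h₂⟩ := hlim k'
  set n := max N₁ N₂ with hn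
  have hn₁ : N₁ ≤ n := le_max_left _ _
  have hn₂ : N₂ ≤ n + 1 := le_trans (le_max_right N₁ N₂) (Nat.le_succ n)
  have hWn := h₁ n hn₁
  have hWn1 := h₂ (n + 1) hn₂
  have htlen : t ≤ (FreeGroup.toWord (w ^ n)).length := hWn.1
  have hulen : u.length ≤ (FreeGroup.toWord (w ^ n)).length := by omega
  -- agreement of toWord (w^n) with xp on first u.length letters
  have hag : ∀ i (h : i < u.length), (FreeGroup.toWord (w ^ n))[i]'(by omega) = xp.1 i := by
    intro i h
    have := hWn.2 i (by omega)
    rwa [List.getElem?_eq_getElem (by omega), Option.some_inj] at this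
  have hred : FreeGroup.reduce (u ++ FreeGroup.toWord (w ^ n))
      = u.take (u.length - k) ++ (FreeGroup.toWord (w ^ n)).drop k :=
    reduce_append_of_agree u xp.1 _ (redWord_toWord w) (redWord_toWord (w ^ n)) hulen hag
  have hpow : FreeGroup.toWord (w ^ (n + 1))
      = u.take (u.length - k) ++ (FreeGroup.toWord (w ^ n)).drop k := by
    rw [pow_succ']
    rw [toWord_mul, ← hu, hred]
  have hact : pre (boundaryAct w xp).1 k'
      = u.take (u.length - k) ++ (pre xp.1 t).drop k := by
    rw [hk', pre_boundaryAct w xp t (by show u.length ≤ t; omega),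
      reduce_append_pre u xp.1 (redWord_toWord w) xp.2 t (by omega)]
  refine ⟨k', by omega, ?_⟩
  rw [hact]
  -- now show pre xp.1 k' equals the same list
  have hlen3 : k' ≤ (FreeGroup.toWord (w ^ (n+1))).length := hWn1.1
  have htake : (u.take (u.length - k)).length = u.length - k := by
    rw [List.length_take]; omega
  apply List.ext_getElem
  · simp only [pre_length, List.length_append, htake, List.length_drop]; omega
  intro i hi2 hi1
  have hik : i < k' := by simpa using hi2
  rw [pre_getElem]
  have hxpi : xp.1 i = (FreeGroup.toWord (w ^ (n+1)))[i]'(by omega) := by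
    have h5 := hWn1.2 i hik
    rw [List.getElem?_eq_getElem (by omega), Option.some_inj] at h5
    exact h5.symm
  rw [hxpi]
  rcases Nat.lt_or_ge i (u.length - k) with h | h
  · rw [List.getElem_append_left (by rw [htake]; omega : i < (u.take (u.length - k)).length)]
    simp only [hpow]
    rw [List.getElem_append_left (by rw [htake]; omega : i < (u.take (u.length - k)).length)]
  · rw [List.getElem_append_right (by rw [htake]; omega : (u.take (u.length - k)).length ≤ i)]
    simp only [hpow]
    rw [List.getElem_append_right (by rw [htake]; omega : (u.take (u.length - k)).length ≤ i)]
    rw [List.getElem_drop, List.getElem_drop, pre_getElem]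
    have hj : k + (i - (u.take (u.length - k)).length) < t := by
      rw [htake]; omega
    have h6 := hWn.2 (k + (i - (u.take (u.length - k)).length)) hj
    rw [List.getElem?_eq_getElem (by omega), Option.some_inj] at h6
    exact h6.symm

end BProof

namespace BProof
variable {d : ℕ}

lemma act_fixed_inv {w : FreeGroup (Fin d)} {xp : Boundary d}
    (h : boundaryAct w xp = xp) : boundaryAct w⁻¹ xp = xp := by
  conv_lhs => rw [← h]
  rw [← boundaryAct_mul, inv_mul_cancel, boundaryAct_one]

lemma act_fixed_zpow {w : FreeGroup (Fin d)} {xp : Boundary d}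
    (h : boundaryAct w xp = xp) (j : ℤ) : boundaryAct (w ^ j) xp = xp := by
  induction j using Int.induction_on with
  | zero => simpa using boundaryAct_one xp
  | succ n ih =>
    rw [zpow_add_one, boundaryAct_mul, h, ih]
  | pred n ih =>
    rw [zpow_sub_one, boundaryAct_mul, act_fixed_inv h, ih]

lemma concat_fixed {w : FreeGroup (Fin d)} {xp : Boundary d} (hlim : IsPlusLimit w xp) :
    concatReduce (FreeGroup.toWord w) xp.1 = xp.1 := by
  rw [← boundaryAct_val, act_fixed hlim]

lemma length_pow_rec {w : FreeGroup (Fin d)} {xp : Boundary d} (hlim : IsPlusLimit w xp) :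
    ∃ N, ∀ m ≥ N,
      (FreeGroup.toWord (w ^ (m+1))).length
        = ((FreeGroup.toWord w).length - cancelLen (FreeGroup.toWord w) xp.1)
          + ((FreeGroup.toWord (w ^ m)).length - cancelLen (FreeGroup.toWord w) xp.1) := by
  set u := FreeGroup.toWord w with hu
  obtain ⟨N, hN⟩ := hlim u.length
  refine ⟨N, fun m hm => ?_⟩
  have h1 := hN m hm
  have hag : ∀ i (h : i < u.length), (FreeGroup.toWord (w ^ m))[i]'(by omega : i < (FreeGroup.toWord (w ^ m)).length) = xp.1 i := by
    intro i h
    have := h1.2 i h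
    rwa [List.getElem?_eq_getElem (by omega), Option.some_inj] at this
  have hred := reduce_append_of_agree u xp.1 (FreeGroup.toWord (w ^ m))
    (redWord_toWord w) (redWord_toWord (w ^ m)) h1.1 hag
  have hpow : FreeGroup.toWord (w ^ (m+1))
      = u.take (u.length - cancelLen u xp.1) ++ (FreeGroup.toWord (w ^ m)).drop (cancelLen u xp.1) := by
    rw [pow_succ', toWord_mul, ← hu, hred]
  rw [hpow]
  have hkle := cancelLen_le u xp.1
  rw [List.length_append, List.length_take, List.length_drop]
  omega

lemma length_pow_rec_inv {w : FreeGroup (Fin d)} {xp : Boundary d} (hlim : IsPlusLimit w xp) :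
    ∃ N, ∀ m ≥ N,
      (FreeGroup.toWord (w ^ m)).length
        = ((FreeGroup.toWord w).length - cancelLen (FreeGroup.toWord w⁻¹) xp.1)
          + ((FreeGroup.toWord (w ^ (m+1))).length - cancelLen (FreeGroup.toWord w⁻¹) xp.1) := by
  set u' := FreeGroup.toWord w⁻¹ with hu'
  have hc : u'.length = (FreeGroup.toWord w).length := by
    rw [hu', FreeGroup.toWord_inv, FreeGroup.invRev_length]
  obtain ⟨N, hN⟩ := hlim u'.length
  refine ⟨N, fun m hm => ?_⟩
  have h1 := hN (m+1) (by omega)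
  have hag : ∀ i (h : i < u'.length), (FreeGroup.toWord (w ^ (m+1)))[i]'(by omega : i < (FreeGroup.toWord (w ^ (m+1))).length) = xp.1 i := by
    intro i h
    have := h1.2 i h
    rwa [List.getElem?_eq_getElem (by omega), Option.some_inj] at this
  have hred := reduce_append_of_agree u' xp.1 (FreeGroup.toWord (w ^ (m+1)))
    (redWord_toWord w⁻¹) (redWord_toWord (w ^ (m+1))) h1.1 hag
  have hpow : FreeGroup.toWord (w ^ m)
      = u'.take (u'.length - cancelLen u' xp.1) ++ (FreeGroup.toWord (w ^ (m+1))).drop (cancelLen u' xp.1) := by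
    have hgrp : w ^ m = w⁻¹ * w ^ (m+1) := by
      rw [pow_succ']; rw [inv_mul_cancel_left]
    rw [hgrp, toWord_mul, ← hu', hred]
  rw [hpow]
  have hkle := cancelLen_le u' xp.1
  rw [List.length_append, List.length_take, List.length_drop]
  omega

lemma cancel_lt_half {w : FreeGroup (Fin d)} {xp : Boundary d} (hlim : IsPlusLimit w xp) :
    2 * cancelLen (FreeGroup.toWord w) xp.1 < (FreeGroup.toWord w).length
      ∨ (FreeGroup.toWord w).length = 0 := by
  have hkle := cancelLen_le (FreeGroup.toWord w) xp.1
  by_contra hcon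
  push_neg at hcon
  obtain ⟨h2k, hc0⟩ := hcon
  obtain ⟨N₁, hN₁⟩ := length_pow_rec hlim
  obtain ⟨N₂, hN₂⟩ := hlim (FreeGroup.toWord w).length
  have hbdd : ∀ j, (FreeGroup.toWord (w ^ (max N₁ N₂ + j))).length
      ≤ (FreeGroup.toWord (w ^ (max N₁ N₂))).length := by
    intro j
    induction j with
    | zero => exact le_refl _
    | succ j ih =>
      have e := hN₁ (max N₁ N₂ + j) (by omega)
      have hlen := (hN₂ (max N₁ N₂ + j) (by omega)).1
      have e2 : max N₁ N₂ + (j + 1) = (max N₁ N₂ + j) + 1 := by omega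
      rw [e2, e]
      omega
  obtain ⟨N₃, hN₃⟩ := hlim ((FreeGroup.toWord (w ^ (max N₁ N₂))).length + 1)
  have hbig := (hN₃ (max (max N₁ N₂) N₃) (le_max_right _ _)).1
  have hsmall := hbdd (max (max N₁ N₂) N₃ - max N₁ N₂)
  have e3 : max N₁ N₂ + (max (max N₁ N₂) N₃ - max N₁ N₂) = max (max N₁ N₂) N₃ := by omega
  rw [e3] at hsmall
  omega

lemma toWord_inv_length (w : FreeGroup (Fin d)) :
    (FreeGroup.toWord w⁻¹).length = (FreeGroup.toWord w).length := by
  rw [FreeGroup.toWord_inv, FreeGroup.invRev_length]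

lemma toWord_pos_of_ne_one {w : FreeGroup (Fin d)} (hw : w ≠ 1) :
    0 < (FreeGroup.toWord w).length := by
  rcases Nat.eq_zero_or_pos (FreeGroup.toWord w).length with h | h
  · exact absurd (FreeGroup.toWord_eq_nil_iff.mp (List.length_eq_zero_iff.mp h)) hw
  · exact h

lemma cancel_inv_big {w : FreeGroup (Fin d)} {xp : Boundary d} (hw : w ≠ 1)
    (hlim : IsPlusLimit w xp) :
    (FreeGroup.toWord w).length < 2 * cancelLen (FreeGroup.toWord w⁻¹) xp.1
      ∧ cancelLen (FreeGroup.toWord w⁻¹) xp.1 ≤ (FreeGroup.toWord w).length := by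
  have hc : (FreeGroup.toWord w⁻¹).length = (FreeGroup.toWord w).length := toWord_inv_length w
  have hc0 : 0 < (FreeGroup.toWord w).length := toWord_pos_of_ne_one hw
  have hk₀le := cancelLen_le (FreeGroup.toWord w) xp.1
  have hk₂le := cancelLen_le (FreeGroup.toWord w⁻¹) xp.1
  have hhalf : 2 * cancelLen (FreeGroup.toWord w) xp.1 < (FreeGroup.toWord w).length := by
    rcases cancel_lt_half hlim with h | h
    · exact h
    · omega
  obtain ⟨N₁, hN₁⟩ := length_pow_rec hlim
  obtain ⟨N₂, hN₂⟩ := length_pow_rec_inv hlim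
  obtain ⟨N₃, hN₃⟩ := hlim (FreeGroup.toWord w).length
  have e1 := hN₁ (max N₁ (max N₂ N₃)) (le_max_left _ _)
  have e2 := hN₂ (max N₁ (max N₂ N₃)) (le_trans (le_max_left _ _) (le_max_right _ _))
  have hLm := (hN₃ (max N₁ (max N₂ N₃)) (le_trans (le_max_right _ _) (le_max_right _ _))).1
  have hLm1 := (hN₃ (max N₁ (max N₂ N₃) + 1) (by
    have := le_trans (le_max_right N₂ N₃) (le_max_right N₁ (max N₂ N₃)); omega)).1
  omega

lemma factor_g {g : FreeGroup (Fin d)} {xp : Boundary d}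
    (hbig : 0 < cancelLen (FreeGroup.toWord g) xp.1) :
    FreeGroup.toWord g
      = (FreeGroup.toWord g).take ((FreeGroup.toWord g).length - cancelLen (FreeGroup.toWord g) xp.1)
        ++ FreeGroup.invRev (pre xp.1 (cancelLen (FreeGroup.toWord g) xp.1)) := by
  have hkle := cancelLen_le (FreeGroup.toWord g) xp.1
  apply List.ext_getElem
  · rw [List.length_append, List.length_take, FreeGroup.invRev_length, pre_length]
    omega
  intro i hi1 hi2
  rcases Nat.lt_or_ge i ((FreeGroup.toWord g).length - cancelLen (FreeGroup.toWord g) xp.1) with h | h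
  · rw [List.getElem_append_left (by rw [List.length_take]; omega)]
    rw [List.getElem_take]
  · rw [List.getElem_append_right (by rw [List.length_take]; omega)]
    rw [invRev_getElem _ _ (by
      rw [FreeGroup.invRev_length, pre_length, List.length_take] at *; omega)]
    rw [pre_getElem]
    simp only [pre_length, List.length_take]
    have hj : (FreeGroup.toWord g).length - 1 - i < cancelLen (FreeGroup.toWord g) xp.1 := by
      omega
    have hsp := cancelLen_spec' (FreeGroup.toWord g) xp.1 _ hj
    simp only [show (FreeGroup.toWord g).length - 1 - ((FreeGroup.toWord g).length - 1 - i) = i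
      from by omega] at hsp
    rw [hsp]
    have he : cancelLen (FreeGroup.toWord g) xp.1 - 1
          - (i - ((FreeGroup.toWord g).length - cancelLen (FreeGroup.toWord g) xp.1)
              ⊓ (FreeGroup.toWord g).length)
        = (FreeGroup.toWord g).length - 1 - i := by
      omega
    rw [he]

lemma length_mul_w_lt {w g : FreeGroup (Fin d)} {xp : Boundary d} (hw : w ≠ 1)
    (hlim : IsPlusLimit w xp)
    (hbig : (FreeGroup.toWord w).length ≤ cancelLen (FreeGroup.toWord g) xp.1) :
    (FreeGroup.toWord (g * w)).length < (FreeGroup.toWord g).length := by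
  have hc' : (FreeGroup.toWord w⁻¹).length = (FreeGroup.toWord w).length := toWord_inv_length w
  have hc0 : 0 < (FreeGroup.toWord w).length := toWord_pos_of_ne_one hw
  have hkle := cancelLen_le (FreeGroup.toWord g) xp.1
  have hk₂le' := cancelLen_le (FreeGroup.toWord w⁻¹) xp.1
  obtain ⟨hk₂big, hk₂le⟩ := cancel_inv_big hw hlim
  have hfac := factor_g (xp := xp) (g := g) (by omega)
  have hg : g = FreeGroup.mk ((FreeGroup.toWord g).take
        ((FreeGroup.toWord g).length - cancelLen (FreeGroup.toWord g) xp.1))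
      * (FreeGroup.mk (pre xp.1 (cancelLen (FreeGroup.toWord g) xp.1)))⁻¹ := by
    rw [FreeGroup.inv_mk, FreeGroup.mul_mk, ← hfac, FreeGroup.mk_toWord]
  have hgw : g * w = FreeGroup.mk ((FreeGroup.toWord g).take
        ((FreeGroup.toWord g).length - cancelLen (FreeGroup.toWord g) xp.1))
      * ((FreeGroup.mk (pre xp.1 (cancelLen (FreeGroup.toWord g) xp.1)))⁻¹ * w) := by
    rw [← mul_assoc, ← hg]
  have hnorm1 : (FreeGroup.toWord (FreeGroup.mk ((FreeGroup.toWord g).take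
        ((FreeGroup.toWord g).length - cancelLen (FreeGroup.toWord g) xp.1)))).length
      ≤ (FreeGroup.toWord g).length - cancelLen (FreeGroup.toWord g) xp.1 := by
    rw [FreeGroup.toWord_mk, ((redWord_toWord g).take _).reduce_eq, List.length_take]
    omega
  have h3 : w⁻¹ * FreeGroup.mk (pre xp.1 (cancelLen (FreeGroup.toWord g) xp.1))
      = FreeGroup.mk (FreeGroup.toWord w⁻¹ ++ pre xp.1 (cancelLen (FreeGroup.toWord g) xp.1)) := by
    conv_lhs => rw [← FreeGroup.mk_toWord (x := w⁻¹)]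
    rw [FreeGroup.mul_mk]
  have h4 : (FreeGroup.toWord (w⁻¹ * FreeGroup.mk (pre xp.1 (cancelLen (FreeGroup.toWord g) xp.1)))).length
      = ((FreeGroup.toWord w⁻¹).length - cancelLen (FreeGroup.toWord w⁻¹) xp.1)
        + (cancelLen (FreeGroup.toWord g) xp.1 - cancelLen (FreeGroup.toWord w⁻¹) xp.1) := by
    rw [h3, FreeGroup.toWord_mk,
      reduce_append_pre (FreeGroup.toWord w⁻¹) xp.1 (redWord_toWord w⁻¹) xp.2 _ (by omega),
      List.length_append, List.length_take, List.length_drop, pre_length]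
    omega
  have h5 : (FreeGroup.toWord ((FreeGroup.mk (pre xp.1 (cancelLen (FreeGroup.toWord g) xp.1)))⁻¹ * w)).length
      = (FreeGroup.toWord (w⁻¹ * FreeGroup.mk (pre xp.1 (cancelLen (FreeGroup.toWord g) xp.1)))).length := by
    rw [← toWord_inv_length ((FreeGroup.mk (pre xp.1 (cancelLen (FreeGroup.toWord g) xp.1)))⁻¹ * w)]
    rw [mul_inv_rev, inv_inv]
  have hmul := FreeGroup.norm_mul_le
    (FreeGroup.mk ((FreeGroup.toWord g).take
      ((FreeGroup.toWord g).length - cancelLen (FreeGroup.toWord g) xp.1)))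
    ((FreeGroup.mk (pre xp.1 (cancelLen (FreeGroup.toWord g) xp.1)))⁻¹ * w)
  rw [← hgw] at hmul
  have hmul' : (FreeGroup.toWord (g * w)).length
      ≤ (FreeGroup.toWord (FreeGroup.mk ((FreeGroup.toWord g).take
          ((FreeGroup.toWord g).length - cancelLen (FreeGroup.toWord g) xp.1)))).length
        + (FreeGroup.toWord ((FreeGroup.mk (pre xp.1 (cancelLen (FreeGroup.toWord g) xp.1)))⁻¹ * w)).length := hmul
  rw [h5, h4] at hmul'
  omega

lemma exists_min_rep (w g : FreeGroup (Fin d)) :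
    ∃ g' : FreeGroup (Fin d), (∃ j : ℤ, g' = g * w ^ j) ∧
      ∀ j : ℤ, (FreeGroup.toWord g').length ≤ (FreeGroup.toWord (g' * w ^ j)).length := by
  set S := Set.range (fun j : ℤ => (FreeGroup.toWord (g * w ^ j)).length) with hS
  have hne : S.Nonempty := ⟨_, ⟨0, rfl⟩⟩
  obtain ⟨j₀, hj₀⟩ := Nat.sInf_mem hne
  refine ⟨g * w ^ j₀, ⟨j₀, rfl⟩, fun j => ?_⟩
  have : (g * w ^ j₀) * w ^ j = g * w ^ (j₀ + j) := by rw [zpow_add, mul_assoc]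
  rw [this]
  have hj₀' : (g * w ^ j₀).toWord.length = sInf S := hj₀
  rw [hj₀']
  exact Nat.sInf_le ⟨j₀ + j, rfl⟩

end BProof

namespace BProof
variable {d : ℕ}

instance : FirstCountableTopology (Boundary d) :=
  inferInstanceAs (FirstCountableTopology
    ({x : ℕ → Letter d | IsReducedSeq x} : Set (ℕ → Letter d)))

lemma isClosed_reducedSet : IsClosed {x : ℕ → Letter d | IsReducedSeq x} := by
  have he : {x : ℕ → Letter d | IsReducedSeq x}
      = ⋂ n, {x : ℕ → Letter d | x (n+1) ≠ Letter.inv (x n)} := by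
    ext x; simp [IsReducedSeq, Set.mem_iInter]
  rw [he]
  apply isClosed_iInter
  intro n
  have : {x : ℕ → Letter d | x (n+1) ≠ Letter.inv (x n)}
      = ((fun x : ℕ → Letter d => (x (n+1), Letter.inv (x n))) ⁻¹' (Set.diagonal (Letter d)))ᶜ := by
    ext x; simp [Set.diagonal]
  rw [this]
  apply IsOpen.isClosed_compl
  have hcont2 : Continuous fun x : ℕ → Letter d => Letter.inv (x n) := by
    have h := Continuous.comp
      (continuous_of_discreteTopology (f := (Letter.inv : Letter d → Letter d)))
      (continuous_apply (A := fun _ : ℕ => Letter d) n)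
    exact h
  apply Continuous.isOpen_preimage
  · exact Continuous.prodMk (continuous_apply (n+1)) hcont2
  · exact isOpen_discrete _

instance : CompactSpace (Boundary d) :=
  isCompact_iff_compactSpace.mp (isClosed_reducedSet.isCompact)

lemma tendsto_coord {F : Filter ℕ} {f : ℕ → Boundary d} {x : Boundary d}
    (hf : Filter.Tendsto f F (nhds x)) (i : ℕ) : ∀ᶠ n in F, (f n).1 i = x.1 i := by
  have h1 : Continuous (fun y : Boundary d => y.1 i) :=
    (continuous_apply i).comp continuous_subtype_val
  have h2 : Filter.Tendsto (fun n => (f n).1 i) F (nhds (x.1 i)) :=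
    (h1.tendsto x).comp hf
  rw [nhds_discrete] at h2
  exact Filter.tendsto_pure.mp h2

lemma ne_one_of_isPlusLimit {w : FreeGroup (Fin d)} {xp : Boundary d}
    (h : IsPlusLimit w xp) : w ≠ 1 := by
  rintro rfl
  obtain ⟨N, hN⟩ := h 1
  have := (hN N le_rfl).1
  simp [one_pow, FreeGroup.toWord_one] at this

lemma finite_ball (M : ℕ) :
    {h : FreeGroup (Fin d) | (FreeGroup.toWord h).length ≤ M}.Finite :=
  Set.Finite.preimage (FreeGroup.toWord_injective.injOn) (List.finite_length_le _ M)

theorem isClosed_RW (W : Set (FreeGroup (Fin d))) (hWfin : W.Finite) : IsClosed (RW W) := by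
  rw [← closure_subset_iff_isClosed, RW, closure_union]
  have hdiag : IsClosed {p : Boundary d × Boundary d | p.1 = p.2} := isClosed_diagonal
  apply Set.union_subset
  · rw [hdiag.closure_eq]; exact Set.subset_union_left
  intro p hp
  rw [mem_closure_iff_seq_limit] at hp
  obtain ⟨f, hfS, hft⟩ := hp
  simp only [Set.mem_setOf_eq] at hfS
  choose g w xp xm hmem hlimp hlimm hfst hsnd using hfS
  -- pigeonhole on w
  have hV : (W ∪ (fun z : FreeGroup (Fin d) => z⁻¹) '' W).Finite :=
    hWfin.union (hWfin.image _)
  haveI : Finite ↥(W ∪ (fun z : FreeGroup (Fin d) => z⁻¹) '' W) := hV.to_subtype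
  have hmem' : ∀ n, w n ∈ W ∪ (fun z : FreeGroup (Fin d) => z⁻¹) '' W := by
    intro n
    rcases hmem n with h | h
    · exact Or.inl h
    · exact Or.inr ⟨(w n)⁻¹, h, inv_inv _⟩
  obtain ⟨v, hv⟩ := Finite.exists_infinite_fiber
    (fun n : ℕ => (⟨w n, hmem' n⟩ : ↥(W ∪ (fun z : FreeGroup (Fin d) => z⁻¹) '' W)))
  have hT : {n : ℕ | w n = v.1}.Infinite := by
    have h1 : ((fun n : ℕ => (⟨w n, hmem' n⟩ : ↥(W ∪ (fun z : FreeGroup (Fin d) => z⁻¹) '' W)))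
        ⁻¹' {v}).Infinite := Set.infinite_coe_iff.mp hv
    apply h1.mono
    intro n hn
    simpa [Subtype.ext_iff] using hn
  set T := {n : ℕ | w n = v.1} with hTdef
  have hFne : (Filter.atTop ⊓ Filter.principal T).NeBot := by
    rw [← Filter.frequently_iff_neBot]
    rw [Filter.frequently_atTop]
    intro a
    obtain ⟨b, hb, hab⟩ := hT.exists_gt a
    exact ⟨b, le_of_lt hab, hb⟩
  obtain ⟨n₀, hn₀⟩ := hT.nonempty
  -- fixed data
  have hωne : v.1 ≠ 1 := by
    have := ne_one_of_isPlusLimit (hlimp n₀)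
    rwa [hn₀] at this
  have hlimXP : IsPlusLimit v.1 (xp n₀) := by rw [← hn₀]; exact hlimp n₀
  have hlimXM : IsPlusLimit v.1⁻¹ (xm n₀) := by rw [← hn₀]; exact hlimm n₀
  have hxp_eq : ∀ n ∈ T, xp n = xp n₀ := by
    intro n hn
    apply isPlusLimit_unique (w := v.1)
    · rw [← hn]; exact hlimp n
    · exact hlimXP
  have hxm_eq : ∀ n ∈ T, xm n = xm n₀ := by
    intro n hn
    apply isPlusLimit_unique (w := v.1⁻¹)
    · rw [← hn]; exact hlimm n
    · exact hlimXM
  have hfixP : boundaryAct v.1 (xp n₀) = xp n₀ := act_fixed hlimXP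
  have hfixM : boundaryAct v.1 (xm n₀) = xm n₀ := by
    have h1 : boundaryAct v.1⁻¹ (xm n₀) = xm n₀ := act_fixed hlimXM
    have h2 := act_fixed_inv h1
    rwa [inv_inv] at h2
  -- normalization
  choose g' hex hmin using fun n => exists_min_rep v.1 (g n)
  have hactP : ∀ n, boundaryAct (g' n) (xp n₀) = boundaryAct (g n) (xp n₀) := by
    intro n
    obtain ⟨j, hj⟩ := hex n
    rw [hj, boundaryAct_mul, act_fixed_zpow hfixP j]
  have hactM : ∀ n, boundaryAct (g' n) (xm n₀) = boundaryAct (g n) (xm n₀) := by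
    intro n
    obtain ⟨j, hj⟩ := hex n
    rw [hj, boundaryAct_mul, act_fixed_zpow hfixM j]
  have hfeq : ∀ n ∈ T, f n = (boundaryAct (g' n) (xp n₀), boundaryAct (g' n) (xm n₀)) := by
    intro n hn
    have h1 := hfst n
    have h2 := hsnd n
    rw [hxp_eq n hn] at h1
    rw [hxm_eq n hn] at h2
    rw [hactP n, hactM n]
    rw [← h1, ← h2]
  -- cancellation bounds
  have hkp : ∀ n, cancelLen (FreeGroup.toWord (g' n)) (xp n₀).1 < (FreeGroup.toWord v.1).length := by
    intro n
    by_contra hcon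
    push_neg at hcon
    have := length_mul_w_lt hωne hlimXP hcon
    have hm := hmin n 1
    rw [zpow_one] at hm
    omega
  have hkm : ∀ n, cancelLen (FreeGroup.toWord (g' n)) (xm n₀).1 < (FreeGroup.toWord v.1).length := by
    intro n
    by_contra hcon
    push_neg at hcon
    have hcon' : (FreeGroup.toWord v.1⁻¹).length ≤ cancelLen (FreeGroup.toWord (g' n)) (xm n₀).1 := by
      rw [toWord_inv_length]; exact hcon
    have := length_mul_w_lt (inv_ne_one.mpr hωne) hlimXM hcon'
    have hm := hmin n (-1)
    rw [zpow_neg_one] at hm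
    omega
  -- case split
  by_cases hcase : ∃ g₀, ∃ᶠ n in (Filter.atTop ⊓ Filter.principal T), g' n = g₀
  · obtain ⟨g₀, hg₀⟩ := hcase
    right
    haveI hne2 : ((Filter.atTop ⊓ Filter.principal T) ⊓ Filter.principal {n | g' n = g₀}).NeBot :=
      Filter.frequently_iff_neBot.mp hg₀
    have htend : Filter.Tendsto f
        ((Filter.atTop ⊓ Filter.principal T) ⊓ Filter.principal {n | g' n = g₀}) (nhds p) :=
      hft.mono_left (le_trans inf_le_left inf_le_left)
    have hconst : ∀ᶠ n in ((Filter.atTop ⊓ Filter.principal T) ⊓ Filter.principal {n | g' n = g₀}),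
        f n = (boundaryAct g₀ (xp n₀), boundaryAct g₀ (xm n₀)) := by
      rw [Filter.eventually_inf_principal]
      rw [Filter.eventually_inf_principal]
      apply Filter.Eventually.of_forall
      intro n hnT hng
      rw [hfeq n hnT, hng]
    have htend2 : Filter.Tendsto f
        ((Filter.atTop ⊓ Filter.principal T) ⊓ Filter.principal {n | g' n = g₀})
        (nhds (boundaryAct g₀ (xp n₀), boundaryAct g₀ (xm n₀))) := by
      rw [Filter.tendsto_congr' hconst]
      exact tendsto_const_nhds
    have hpe : p = (boundaryAct g₀ (xp n₀), boundaryAct g₀ (xm n₀)) :=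
      tendsto_nhds_unique htend htend2
    refine ⟨g₀, v.1, xp n₀, xm n₀, ?_, hlimXP, hlimXM, ?_, ?_⟩
    · rcases v.2 with h | ⟨z, hz, hzv⟩
      · exact Or.inl h
      · right; rw [← hzv, inv_inv]; exact hz
    · rw [hpe]
    · rw [hpe]
  · left
    push_neg at hcase
    have hcase' : ∀ g₀, ∀ᶠ n in (Filter.atTop ⊓ Filter.principal T), g' n ≠ g₀ := by
      intro g₀
      have := hcase g₀
      exact this
    show p.1 = p.2
    have htx : Filter.Tendsto (fun n => (f n).1) Filter.atTop (nhds p.1) :=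
      (continuous_fst.tendsto p).comp hft
    have hty : Filter.Tendsto (fun n => (f n).2) Filter.atTop (nhds p.2) :=
      (continuous_snd.tendsto p).comp hft
    apply Subtype.ext
    funext i
    set c := (FreeGroup.toWord v.1).length with hc
    have hbig : ∀ᶠ n in (Filter.atTop ⊓ Filter.principal T),
        i + c < (FreeGroup.toWord (g' n)).length := by
      have h1 : ∀ᶠ n in (Filter.atTop ⊓ Filter.principal T),
          ∀ h ∈ (finite_ball (d := d) (i + c)).toFinset, g' n ≠ h :=
        (Filter.eventually_all_finset _).mpr (fun h _ => hcase' h)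
      filter_upwards [h1] with n hn
      by_contra hle
      push_neg at hle
      exact hn (g' n) ((finite_ball (i + c)).mem_toFinset.mpr (by simpa using hle)) rfl
    have hcoordx : ∀ᶠ n in (Filter.atTop ⊓ Filter.principal T), ((f n).1).1 i = (p.1).1 i :=
      (tendsto_coord htx i).filter_mono inf_le_left
    have hcoordy : ∀ᶠ n in (Filter.atTop ⊓ Filter.principal T), ((f n).2).1 i = (p.2).1 i :=
      (tendsto_coord hty i).filter_mono inf_le_left
    have hmemT : ∀ᶠ n in (Filter.atTop ⊓ Filter.principal T), n ∈ T :=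
      Filter.eventually_inf_principal.mpr (Filter.Eventually.of_forall (fun n h => h))
    obtain ⟨n, hbign, hxn, hyn, hnT⟩ := (hbig.and (hcoordx.and (hcoordy.and hmemT))).exists
    have hkle := cancelLen_le (FreeGroup.toWord (g' n)) (xp n₀).1
    have hfn := hfeq n hnT
    have hfn1 : (f n).1 = boundaryAct (g' n) (xp n₀) := by rw [hfn]
    have hfn2 : (f n).2 = boundaryAct (g' n) (xm n₀) := by rw [hfn]
    have hxv : ((f n).1).1 i = (FreeGroup.toWord (g' n))[i]'(by omega) := by
      rw [hfn1, boundaryAct_val]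
      exact concatReduce_lt _ _ i (by have := hkp n; omega)
    have hyv : ((f n).2).1 i = (FreeGroup.toWord (g' n))[i]'(by omega) := by
      rw [hfn2, boundaryAct_val]
      exact concatReduce_lt _ _ i (by have := hkm n; omega)
    rw [← hxn, ← hyn, hxv, hyv]

end BProof

/-- For a finite subset `W ⊆ F_d \ {e}`, the quotient map
`π : ∂F_d → ∂F_d/R_W` is closed, and the quotient space `∂F_d/R_W` with the
quotient topology is Hausdorff. -/
theorem quotient_by_RW_closedMap_and_t2 (d : ℕ) (hd : 2 ≤ d)
    (W : Set (FreeGroup (Fin d))) (hWfin : W.Finite) (hW : ∀ w ∈ W, w ≠ 1)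
    (hequiv : Equivalence fun x y : Boundary d => (x, y) ∈ RW W) :
    IsClosedMap
      (Quotient.mk (⟨fun x y => (x, y) ∈ RW W, hequiv⟩ : Setoid (Boundary d))) ∧
    T2Space
      (Quotient (⟨fun x y => (x, y) ∈ RW W, hequiv⟩ : Setoid (Boundary d))) := by
  classical
  set s : Setoid (Boundary d) := ⟨fun x y => (x, y) ∈ RW W, hequiv⟩ with hs
  have hclosed : IsClosed (RW W) := BProof.isClosed_RW W hWfin
  have hrel : ∀ x y : Boundary d, Quotient.mk s x = Quotient.mk s y ↔ (x, y) ∈ RW W := by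
    intro x y
    constructor
    · intro h; exact Quotient.exact h
    · intro h; exact Quotient.sound h
  have hsat : ∀ C : Set (Boundary d), IsClosed C →
      IsClosed ((Quotient.mk s) ⁻¹' ((Quotient.mk s) '' C)) := by
    intro C hC
    have he : (Quotient.mk s) ⁻¹' ((Quotient.mk s) '' C)
        = Prod.snd '' (RW W ∩ (C ×ˢ (Set.univ : Set (Boundary d)))) := by
      ext y
      simp only [Set.mem_preimage, Set.mem_image, Set.mem_inter_iff, Set.mem_prod,
        Set.mem_univ, and_true, Prod.exists]
      constructor
      · rintro ⟨x, hxC, hxy⟩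
        exact ⟨x, y, ⟨(hrel x y).mp hxy, hxC⟩, rfl⟩
      · rintro ⟨x, y', ⟨hR, hxC⟩, rfl⟩
        exact ⟨x, hxC, (hrel x y').mpr hR⟩
    rw [he]
    exact ((hclosed.inter (hC.prod isClosed_univ)).isCompact.image continuous_snd).isClosed
  have hmapclosed : IsClosedMap (Quotient.mk s) := by
    intro C hC
    rw [← (isQuotientMap_quotient_mk' (s := s)).isClosed_preimage]
    exact hsat C hC
  refine ⟨hmapclosed, ?_⟩
  constructor
  intro a b hab
  obtain ⟨x, rfl⟩ := Quotient.exists_rep a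
  obtain ⟨y, rfl⟩ := Quotient.exists_rep b
  have hfibc : ∀ z : Boundary d, IsClosed ((Quotient.mk s) ⁻¹' {Quotient.mk s z}) := by
    intro z
    have he : (Quotient.mk s) ⁻¹' {Quotient.mk s z} = (fun u : Boundary d => (u, z)) ⁻¹' RW W := by
      ext u
      simp only [Set.mem_preimage, Set.mem_singleton_iff]
      exact hrel u z
    rw [he]
    exact hclosed.preimage (continuous_id.prodMk continuous_const)
  have hdisj : Disjoint ((Quotient.mk s) ⁻¹' {Quotient.mk s x}) ((Quotient.mk s) ⁻¹' {Quotient.mk s y}) := by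
    rw [Set.disjoint_left]
    intro u hux huy
    simp only [Set.mem_preimage, Set.mem_singleton_iff] at hux huy
    exact hab (hux ▸ huy)
  obtain ⟨U, V, hU, hV, hxU, hyV, hUV⟩ :=
    normal_separation (hfibc x) (hfibc y) hdisj
  refine ⟨((Quotient.mk s) '' Uᶜ)ᶜ, ((Quotient.mk s) '' Vᶜ)ᶜ, ?_, ?_, ?_, ?_, ?_⟩
  · exact (hmapclosed _ hU.isClosed_compl).isOpen_compl
  · exact (hmapclosed _ hV.isClosed_compl).isOpen_compl
  · intro hmem
    obtain ⟨u, huU, hux⟩ := hmem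
    have : u ∈ (Quotient.mk s) ⁻¹' {Quotient.mk s x} := by
      simp only [Set.mem_preimage, Set.mem_singleton_iff]; exact hux
    exact huU (hxU this)
  · intro hmem
    obtain ⟨u, huV, huy⟩ := hmem
    have : u ∈ (Quotient.mk s) ⁻¹' {Quotient.mk s y} := by
      simp only [Set.mem_preimage, Set.mem_singleton_iff]; exact huy
    exact huV (hyV this)
  · rw [Set.disjoint_left]
    intro q hq1 hq2
    obtain ⟨z, rfl⟩ := Quotient.exists_rep q
    simp only [Set.mem_compl_iff, Set.mem_image, not_exists, not_and] at hq1 hq2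
    have hzU : z ∈ U := by
      by_contra h
      exact hq1 z h rfl
    have hzV : z ∈ V := by
      by_contra h
      exact hq2 z h rfl
    exact (Set.disjoint_left.mp hUV hzU) hzV
end

section
/- Let w ∈ F_d \ {e} and let g ∈ F_d satisfy |g| ≤ |g·w^k| for all k ∈ ℤ, and suppose |g| > |w|. Then the first |g| − |w| letters of the infinite reduced word g·w^{+∞} and the first |g| − |w| letters of the infinite reduced word g·w^{-∞} both coincide with the first |g| − |w| letters of the reduced word of g. -/
namespace Stmt10


variable {d : ℕ}

@[simp] lemma inv_inv (a : Letter d) : a.inv.inv = a := by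
  cases a; simp [Letter.inv]

lemma ne_inv_comm {a b : Letter d} (h : a ≠ b.inv) : b ≠ a.inv := by
  rintro rfl; exact h (inv_inv a).symm

lemma eq_inv_comm {a b : Letter d} (h : a = b.inv) : b = a.inv := by
  rw [h, inv_inv]

/-- A finite word is reduced. -/
def Reduced (L : List (Letter d)) : Prop := List.Chain' (fun a b => b ≠ Letter.inv a) L

lemma Reduced.getElem {L : List (Letter d)} (h : Reduced L) {i : ℕ} (hi : i + 1 < L.length) :
    L[i + 1]'hi ≠ Letter.inv (L[i]'(by omega)) := by
  have := List.isChain_iff_getElem.mp h i (by omega)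
  simpa [List.get_eq_getElem] using this

lemma reduced_iff_getElem {L : List (Letter d)} :
    Reduced L ↔ ∀ i (hi : i + 1 < L.length), L[i + 1]'hi ≠ Letter.inv (L[i]'(by omega)) := by
  constructor
  · exact fun h i hi => h.getElem hi
  · intro h
    rw [Reduced, List.Chain', List.isChain_iff_getElem]
    intro i hi
    simpa [List.get_eq_getElem] using h i (by omega)

lemma reduce_eq_self {L : List (Letter d)} (h : Reduced L) : FreeGroup.reduce L = L := by
  induction L with
  | nil => rfl
  | cons a L ih =>
    have hL : Reduced L := h.tail
    rw [FreeGroup.reduce.cons, ih hL]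
    cases L with
    | nil => rfl
    | cons b t =>
      have hab : b ≠ a.inv := (List.isChain_cons_cons.mp h).1
      have : ¬(a.1 = b.1 ∧ a.2 = !b.2) := by
        rintro ⟨h1, h2⟩
        exact (ne_inv_comm hab) (by cases a; cases b; simp_all [Letter.inv])
      simp [this]

lemma reduced_reduce (L : List (Letter d)) : Reduced (FreeGroup.reduce L) := by
  induction L with
  | nil => exact List.isChain_nil
  | cons a L ih =>
    rw [FreeGroup.reduce.cons]
    rcases hr : FreeGroup.reduce L with _ | ⟨b, t⟩
    · simp [Reduced, List.Chain', List.isChain_singleton]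
    · rw [hr] at ih
      by_cases hc : a.1 = b.1 ∧ a.2 = !b.2
      · simpa [hc, Reduced, List.Chain'] using ih.tail
      · have hab : b ≠ a.inv := by
          intro hb
          apply hc
          subst hb
          exact ⟨rfl, by simp [Letter.inv]⟩
        simp only [if_neg hc]
        exact List.isChain_cons_cons.mpr ⟨hab, ih⟩

lemma toWord_mk {L : List (Letter d)} (h : Reduced L) :
    (FreeGroup.mk L).toWord = L := by rw [FreeGroup.toWord_mk, reduce_eq_self h]

lemma reduced_toWord (g : FreeGroup (Fin d)) : Reduced g.toWord := by
  have := reduced_reduce (d := d) g.toWord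
  rwa [FreeGroup.reduce_toWord] at this


/-- Prefix of an infinite word as a list. -/
def pref (x : ℕ → Letter d) (k : ℕ) : List (Letter d) := List.ofFn (fun i : Fin k => x i)

@[simp] lemma pref_length (x : ℕ → Letter d) (k : ℕ) : (pref x k).length = k := by
  simp [pref]

lemma pref_getElem (x : ℕ → Letter d) {k i : ℕ} (hi : i < (pref x k).length) :
    (pref x k)[i] = x i := by simp [pref]

lemma reduced_pref {x : ℕ → Letter d} (hx : IsReducedSeq x) (k : ℕ) : Reduced (pref x k) := by
  rw [reduced_iff_getElem]
  intro i hi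
  rw [pref_getElem, pref_getElem]
  exact hx i

lemma invRev_getElem (L : List (Letter d)) {i : ℕ} (hi : i < (FreeGroup.invRev L).length) :
    (FreeGroup.invRev L)[i] = Letter.inv (L[L.length - 1 - i]'(by
      rw [FreeGroup.invRev_length] at hi; omega)) := by
  have hi' : i < L.length := by rwa [FreeGroup.invRev_length] at hi
  simp only [FreeGroup.invRev]
  rw [List.getElem_reverse]
  simp [Letter.inv]

lemma reduced_invRev {L : List (Letter d)} (h : Reduced L) : Reduced (FreeGroup.invRev L) := by
  rw [reduced_iff_getElem]
  intro i hi
  have hlen : (FreeGroup.invRev L).length = L.length := FreeGroup.invRev_length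
  rw [invRev_getElem, invRev_getElem]
  intro hcon
  rw [inv_inv] at hcon
  have hj : L.length - 1 - (i + 1) + 1 = L.length - 1 - i := by omega
  have h2 := h.getElem (i := L.length - 1 - (i+1)) (by omega)
  rw [getElem_congr rfl hj] at h2
  exact h2 hcon.symm

/-- Generic decomposition: if the last `c` letters of `L` are the inverses of the first
`c` letters of `x`, then `L = L.take (L.length - c) ++ invRev (pref x c)`. -/
lemma decomp (L : List (Letter d)) (x : ℕ → Letter d) {c : ℕ} (hc : c ≤ L.length)
    (hmatch : ∀ i < c, L[L.length - 1 - i]? = some (Letter.inv (x i))) :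
    L = L.take (L.length - c) ++ FreeGroup.invRev (pref x c) := by
  apply List.ext_getElem
  · simp [FreeGroup.invRev_length]
    omega
  · intro n h1 h2
    by_cases hn : n < L.length - c
    · rw [List.getElem_append_left (by simpa using hn)]
      simp
    · have hir : (FreeGroup.invRev (pref x c)).length = c := by simp [FreeGroup.invRev_length]
      have hl : (L.take (L.length - c)).length = L.length - c := by
        rw [List.length_take]; omega
      rw [List.getElem_append_right (by omega)]
      have hb : n - (L.take (L.length - c)).length < (FreeGroup.invRev (pref x c)).length := by
        omega
      rw [invRev_getElem _ hb]
      have hidx : (pref x c).length - 1 - (n - (L.take (L.length - c)).length)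
          = c - 1 - (n - (L.length - c)) := by simp [hl]
      have hlt : c - 1 - (n - (L.length - c)) < (pref x c).length := by
        rw [pref_length]; omega
      have := hmatch (c - 1 - (n - (L.length - c))) (by omega)
      have hup : L.length - 1 - (c - 1 - (n - (L.length - c))) = n := by omega
      rw [hup, List.getElem?_eq_getElem h1] at this
      have : L[n] = Letter.inv (x (c - 1 - (n - (L.length - c)))) := by
        exact Option.some.inj this
      rw [this]
      congr 1
      rw [pref_getElem]
      congr 1
      omega
/-- The number of letters cancelled when multiplying two reduced words. -/
def matchLen (L₁ L₂ : List (Letter d)) : ℕ :=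
  Nat.findGreatest (fun k => ∀ i < k, L₁[L₁.length - 1 - i]? = (L₂[i]?).map Letter.inv)
    (min L₁.length L₂.length)

lemma matchLen_le (L₁ L₂ : List (Letter d)) : matchLen L₁ L₂ ≤ min L₁.length L₂.length :=
  Nat.findGreatest_le _

lemma matchLen_spec (L₁ L₂ : List (Letter d)) :
    ∀ i < matchLen L₁ L₂, L₁[L₁.length - 1 - i]? = (L₂[i]?).map Letter.inv :=
  Nat.findGreatest_spec
    (P := fun k => ∀ i < k, L₁[L₁.length - 1 - i]? = (L₂[i]?).map Letter.inv)
    (Nat.zero_le _) (fun i hi => absurd hi (Nat.not_lt_zero i))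

lemma matchLen_junction {L₁ L₂ : List (Letter d)}
    (h1 : matchLen L₁ L₂ < L₁.length) (h2 : matchLen L₁ L₂ < L₂.length) :
    L₁[L₁.length - 1 - matchLen L₁ L₂]? ≠ (L₂[matchLen L₁ L₂]?).map Letter.inv := by
  intro hcon
  have : matchLen L₁ L₂ + 1 ≤ matchLen L₁ L₂ := by
    apply Nat.le_findGreatest (by omega)
    intro i hi
    rcases Nat.lt_or_ge i (matchLen L₁ L₂) with h | h
    · exact matchLen_spec L₁ L₂ i h
    · have : i = matchLen L₁ L₂ := by omega
      rw [this]; exact hcon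
  omega

lemma mul_eq (L₁ L₂ : List (Letter d)) :
    FreeGroup.mk L₁ * FreeGroup.mk L₂ =
      FreeGroup.mk (L₁.take (L₁.length - matchLen L₁ L₂) ++ L₂.drop (matchLen L₁ L₂)) := by
  rcases hL2 : L₂ with _ | ⟨c₀, L₂'⟩
  · have ha0 : matchLen L₁ ([] : List (Letter d)) = 0 := by
      have := matchLen_le L₁ ([] : List (Letter d))
      simp at this
      omega
    rw [ha0]
    simp [FreeGroup.mul_mk]
  rw [← hL2]
  have hc0 : L₂ ≠ [] := by rw [hL2]; simp
  set a := matchLen L₁ L₂ with ha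
  have ha1 : a ≤ L₁.length := le_trans (matchLen_le L₁ L₂) (min_le_left _ _)
  have ha2 : a ≤ L₂.length := le_trans (matchLen_le L₁ L₂) (min_le_right _ _)
  have hpref : pref (fun i => L₂.getD i c₀) a = L₂.take a := by
    apply List.ext_getElem
    · rw [pref_length, List.length_take]; omega
    · intro n h1 h2
      rw [pref_getElem, List.getElem_take]
      rw [List.getD_eq_getElem L₂ c₀ (by rw [pref_length] at h1; omega)]
  have hd : L₁ = L₁.take (L₁.length - a) ++ FreeGroup.invRev (pref (fun i => L₂.getD i c₀) a) := by
    apply decomp L₁ _ ha1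
    intro i hi
    rw [matchLen_spec L₁ L₂ i hi, List.getElem?_eq_getElem (by omega),
        List.getD_eq_getElem L₂ c₀ (by omega)]
    rfl
  rw [hpref] at hd
  have e1 : FreeGroup.mk L₁ =
      FreeGroup.mk (L₁.take (L₁.length - a)) * (FreeGroup.mk (L₂.take a))⁻¹ := by
    conv_lhs => rw [hd]
    rw [← FreeGroup.mul_mk, FreeGroup.inv_mk]
  have e2 : FreeGroup.mk L₂ = FreeGroup.mk (L₂.take a) * FreeGroup.mk (L₂.drop a) := by
    rw [FreeGroup.mul_mk, List.take_append_drop]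
  rw [e1, e2, ← FreeGroup.mul_mk]
  group

lemma toWord_mul_eq {L₁ L₂ : List (Letter d)} (h₁ : Reduced L₁) (h₂ : Reduced L₂) :
    (FreeGroup.mk L₁ * FreeGroup.mk L₂).toWord =
      L₁.take (L₁.length - matchLen L₁ L₂) ++ L₂.drop (matchLen L₁ L₂) := by
  set a := matchLen L₁ L₂ with ha
  have ha1 : a ≤ L₁.length := le_trans (matchLen_le L₁ L₂) (min_le_left _ _)
  have ha2 : a ≤ L₂.length := le_trans (matchLen_le L₁ L₂) (min_le_right _ _)
  rw [mul_eq]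
  apply toWord_mk
  rw [Reduced, List.Chain', List.isChain_append]
  refine ⟨h₁.take _, h₂.drop _, ?_⟩
  intro z hz y hy
  rw [List.getLast?_eq_getElem?] at hz
  rw [List.head?_eq_getElem?] at hy
  have hlt : (L₁.take (L₁.length - a)).length = L₁.length - a := by
    rw [List.length_take]; omega
  have hz1 : L₁.length - a ≠ 0 := by
    intro h0
    rw [hlt, h0] at hz
    simp at hz
  have h1lt : a < L₁.length := by omega
  have hy1 : a < L₂.length := by
    by_contra h0
    rw [List.drop_eq_nil_of_le (by omega)] at hy
    simp at hy
  have hz2 : z = L₁[L₁.length - a - 1]'(by omega) := by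
    rw [hlt, List.getElem?_eq_getElem (by rw [hlt]; omega)] at hz
    have : (L₁.take (L₁.length - a))[L₁.length - a - 1]'(by rw [hlt]; omega) = L₁[L₁.length - a - 1]'(by omega) :=
      List.getElem_take
    rw [this] at hz
    exact (Option.some.inj hz).symm
  have hy2 : y = L₂[a]'hy1 := by
    rw [List.getElem?_eq_getElem (by rw [List.length_drop]; omega)] at hy
    have : (L₂.drop a)[0]'(by rw [List.length_drop]; omega) = L₂[a + 0]'(by omega) :=
      List.getElem_drop
    rw [this] at hy
    simpa using (Option.some.inj hy).symm
  have hj := matchLen_junction h1lt hy1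
  rw [List.getElem?_eq_getElem (show L₁.length - 1 - a < L₁.length by omega),
      List.getElem?_eq_getElem hy1] at hj
  have hne : L₁[L₁.length - 1 - a]'(by omega) ≠ Letter.inv (L₂[a]'hy1) := by
    intro hcon
    exact hj (by rw [hcon]; rfl)
  rw [hz2, hy2]
  apply ne_inv_comm
  rw [getElem_congr rfl (show L₁.length - a - 1 = L₁.length - 1 - a by omega)]
  exact hne

lemma toWord_mul_length {L₁ L₂ : List (Letter d)} (h₁ : Reduced L₁) (h₂ : Reduced L₂) :
    (FreeGroup.mk L₁ * FreeGroup.mk L₂).toWord.length =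
      (L₁.length - matchLen L₁ L₂) + (L₂.length - matchLen L₁ L₂) := by
  have ha1 : matchLen L₁ L₂ ≤ L₁.length := le_trans (matchLen_le L₁ L₂) (min_le_left _ _)
  rw [toWord_mul_eq h₁ h₂, List.length_append, List.length_take, List.length_drop]
  omega

lemma toWord_mul_prefix {L₁ L₂ : List (Letter d)} (h₁ : Reduced L₁) (h₂ : Reduced L₂)
    {i : ℕ} (hi : i < L₁.length - matchLen L₁ L₂) :
    (FreeGroup.mk L₁ * FreeGroup.mk L₂).toWord[i]? = L₁[i]? := by
  rw [toWord_mul_eq h₁ h₂, List.getElem?_append]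
  rw [if_pos (by rw [List.length_take]; omega)]
  rw [List.getElem?_eq_getElem (by rw [List.length_take]; omega),
      List.getElem?_eq_getElem (by omega)]
  congr 1
  exact List.getElem_take


lemma len_mul_le (z₁ z₂ : FreeGroup (Fin d)) :
    (z₁ * z₂).toWord.length ≤ z₁.toWord.length + z₂.toWord.length := by
  have := (FreeGroup.toWord_mul_sublist z₁ z₂).length_le
  simpa using this

lemma len_inv (z : FreeGroup (Fin d)) : (z⁻¹).toWord.length = z.toWord.length := by
  rw [FreeGroup.toWord_inv, FreeGroup.invRev_length]

lemma agree_w {w : FreeGroup (Fin d)} {x : Boundary d} (hx : IsPlusLimit w x) :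
    ∀ i < w.toWord.length / 2 + 1, w.toWord[i]? = some (x.1 i) := by
  intro i him
  obtain ⟨N, hN⟩ := hx (w.toWord.length / 2 + 1)
  obtain ⟨N₂, hN₂⟩ := hx ((FreeGroup.toWord (w ^ N)).length + 1)
  have hascent : ∃ n, N < n ∧
      (FreeGroup.toWord (w ^ (n-1))).length < (FreeGroup.toWord (w ^ n)).length := by
    by_contra hno
    push_neg at hno
    have hmono : ∀ k,
        (FreeGroup.toWord (w ^ (N + k))).length ≤ (FreeGroup.toWord (w ^ N)).length := by
      intro k
      induction k with
      | zero => exact le_rfl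
      | succ k ih =>
        have h := hno (N + (k+1)) (by omega)
        have e : N + (k + 1) - 1 = N + k := by omega
        rw [e] at h
        exact le_trans h ih
    have h1 := (hN₂ (max N N₂ + 1) (by omega)).1
    have h2 := hmono (max N N₂ + 1 - N)
    have e : N + (max N N₂ + 1 - N) = max N N₂ + 1 := by omega
    rw [e] at h2
    omega
  obtain ⟨n, hn1, hasc⟩ := hascent
  have hn0 : w ^ n = w * w ^ (n - 1) := by
    conv_lhs => rw [show n = 1 + (n-1) by omega]
    rw [pow_add, pow_one]
  have ha1 : matchLen w.toWord (w ^ (n-1)).toWord ≤ w.toWord.length :=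
    le_trans (matchLen_le _ _) (min_le_left _ _)
  have ha2 : matchLen w.toWord (w ^ (n-1)).toWord ≤ (w ^ (n-1)).toWord.length :=
    le_trans (matchLen_le _ _) (min_le_right _ _)
  have hlenformula : (w ^ n).toWord.length =
      (w.toWord.length - matchLen w.toWord (w ^ (n-1)).toWord) +
      ((w ^ (n-1)).toWord.length - matchLen w.toWord (w ^ (n-1)).toWord) := by
    have := toWord_mul_length (reduced_toWord w) (reduced_toWord (w ^ (n-1)))
    rw [FreeGroup.mk_toWord, FreeGroup.mk_toWord, ← hn0] at this
    exact this
  have hi2 : i < w.toWord.length - matchLen w.toWord (w ^ (n-1)).toWord := by omega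
  have hpre := toWord_mul_prefix (reduced_toWord w) (reduced_toWord (w ^ (n-1))) hi2
  rw [FreeGroup.mk_toWord, FreeGroup.mk_toWord, ← hn0] at hpre
  rw [← hpre]
  exact (hN n (by omega)).2 i him

lemma cancelLen_le_of {w g : FreeGroup (Fin d)} {x : Boundary d} (hx : IsPlusLimit w x)
    (hw1 : w ≠ 1) (hgw : g.toWord.length ≤ (g * w).toWord.length) :
    cancelLen g.toWord x.1 ≤ w.toWord.length := by
  by_contra hcon
  push_neg at hcon
  set c := cancelLen g.toWord x.1 with hc
  have hcg : c ≤ g.toWord.length := Nat.findGreatest_le _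
  have hW1 : 1 ≤ w.toWord.length := by
    rcases Nat.eq_zero_or_pos w.toWord.length with h0 | h0
    · exact absurd (FreeGroup.toWord_eq_nil_iff.mp (List.length_eq_zero_iff.mp h0)) hw1
    · exact h0
  set m := w.toWord.length / 2 + 1 with hm
  have hm2 : w.toWord.length + 1 ≤ 2 * m := by omega
  have hmw : m ≤ w.toWord.length := by omega
  have hspec : ∀ i < c, g.toWord[g.toWord.length - 1 - i]? = some (Letter.inv (x.1 i)) :=
    Nat.findGreatest_spec
      (P := fun k => ∀ i < k, g.toWord[g.toWord.length - 1 - i]? = some (Letter.inv (x.1 i)))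
      (Nat.zero_le _) (fun i hi => absurd hi (Nat.not_lt_zero i))
  have hd := decomp g.toWord x.1 hcg hspec
  have hg : g = FreeGroup.mk (g.toWord.take (g.toWord.length - c)) *
      (FreeGroup.mk (pref x.1 c))⁻¹ := by
    have h2 := congrArg FreeGroup.mk hd
    rw [FreeGroup.mk_toWord, ← FreeGroup.mul_mk, ← FreeGroup.inv_mk] at h2
    exact h2
  -- matching of w⁻¹ against pref x c
  have hL1len : (w⁻¹).toWord.length = w.toWord.length := len_inv w
  have hmatch : ∀ i < m,
      (w⁻¹).toWord[(w⁻¹).toWord.length - 1 - i]? = ((pref x.1 c)[i]?).map Letter.inv := by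
    intro i hi
    have hiw : i < w.toWord.length := by omega
    have hW : w.toWord[i]'hiw = x.1 i := by
      have := agree_w hx i (by omega)
      rw [List.getElem?_eq_getElem hiw] at this
      exact Option.some.inj this
    have hiL1 : (w⁻¹).toWord.length - 1 - i < (w⁻¹).toWord.length := by omega
    rw [List.getElem?_eq_getElem hiL1,
        List.getElem?_eq_getElem (show i < (pref x.1 c).length by rw [pref_length]; omega)]
    have he1 : (w⁻¹).toWord[(w⁻¹).toWord.length - 1 - i]'hiL1 =
        Letter.inv (w.toWord[i]'hiw) := by
      have h3 : (w⁻¹).toWord = FreeGroup.invRev w.toWord := FreeGroup.toWord_inv w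
      rw [List.getElem_of_eq h3]
      rw [invRev_getElem]
      congr 1
      apply getElem_congr rfl
      omega
    rw [he1, hW, pref_getElem]
    rfl
  have ham : m ≤ matchLen (w⁻¹).toWord (pref x.1 c) := by
    apply Nat.le_findGreatest
    · rw [hL1len, pref_length]; omega
    · exact hmatch
  have hA1 : matchLen (w⁻¹).toWord (pref x.1 c) ≤ (w⁻¹).toWord.length :=
    le_trans (matchLen_le _ _) (min_le_left _ _)
  have hA2 : matchLen (w⁻¹).toWord (pref x.1 c) ≤ (pref x.1 c).length :=
    le_trans (matchLen_le _ _) (min_le_right _ _)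
  have hlen2 : (w⁻¹ * FreeGroup.mk (pref x.1 c)).toWord.length ≤ c - 1 := by
    have := toWord_mul_length (L₁ := (w⁻¹).toWord) (L₂ := pref x.1 c)
      (reduced_toWord w⁻¹) (reduced_pref x.2 c)
    rw [FreeGroup.mk_toWord] at this
    rw [this]
    rw [pref_length] at *
    omega
  have hfact : g * w = FreeGroup.mk (g.toWord.take (g.toWord.length - c)) *
      (w⁻¹ * FreeGroup.mk (pref x.1 c))⁻¹ := by
    conv_lhs => rw [hg]
    group
  have hlen3 : (FreeGroup.mk (g.toWord.take (g.toWord.length - c))).toWord.length =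
      g.toWord.length - c := by
    rw [toWord_mk ((reduced_toWord g).take _), List.length_take]
    omega
  have hfinal : (g * w).toWord.length ≤ g.toWord.length - 1 := by
    rw [hfact]
    calc (FreeGroup.mk (g.toWord.take (g.toWord.length - c)) *
        (w⁻¹ * FreeGroup.mk (pref x.1 c))⁻¹).toWord.length
        ≤ (FreeGroup.mk (g.toWord.take (g.toWord.length - c))).toWord.length +
          ((w⁻¹ * FreeGroup.mk (pref x.1 c))⁻¹).toWord.length := len_mul_le _ _
      _ ≤ (g.toWord.length - c) + (c - 1) := by
          rw [hlen3, len_inv]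
          exact Nat.add_le_add le_rfl hlen2
      _ ≤ g.toWord.length - 1 := by omega
  omega

lemma concatReduce_eq (u : List (Letter d)) (x : ℕ → Letter d) (n : ℕ) :
    concatReduce u x n = if h : n < u.length - cancelLen u x
      then u[n]'(by omega) else x (cancelLen u x + (n - (u.length - cancelLen u x))) := rfl

lemma isReducedSeq_concatReduce {u : List (Letter d)} (hu : Reduced u) {x : ℕ → Letter d}
    (hx : IsReducedSeq x) : IsReducedSeq (concatReduce u x) := by
  intro n
  have hcle : cancelLen u x ≤ u.length := Nat.findGreatest_le _
  have hspec : ∀ i < cancelLen u x, u[u.length - 1 - i]? = some (Letter.inv (x i)) :=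
    Nat.findGreatest_spec
      (P := fun k => ∀ i < k, u[u.length - 1 - i]? = some (Letter.inv (x i)))
      (Nat.zero_le _) (fun i hi => absurd hi (Nat.not_lt_zero i))
  rw [concatReduce_eq, concatReduce_eq]
  by_cases h1 : n + 1 < u.length - cancelLen u x
  · rw [dif_pos h1, dif_pos (by omega)]
    exact hu.getElem (by omega)
  · by_cases h2 : n < u.length - cancelLen u x
    · have hnm : n + 1 = u.length - cancelLen u x := by omega
      rw [dif_neg h1, dif_pos h2]
      have he : cancelLen u x + (n + 1 - (u.length - cancelLen u x)) = cancelLen u x := by omega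
      rw [he]
      have hcu : cancelLen u x < u.length := by omega
      have hmax : ¬ (∀ i < cancelLen u x + 1,
          u[u.length - 1 - i]? = some (Letter.inv (x i))) := by
        intro hcon2
        have := Nat.le_findGreatest
          (P := fun k => ∀ i < k, u[u.length - 1 - i]? = some (Letter.inv (x i)))
          (n := u.length) (by omega) hcon2
        have h5 : Nat.findGreatest
            (fun k => ∀ i < k, u[u.length - 1 - i]? = some (Letter.inv (x i))) u.length
            = cancelLen u x := rfl
        rw [h5] at this
        omega
      push_neg at hmax
      obtain ⟨j, hj, hne⟩ := hmax
      have hjc : j = cancelLen u x := by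
        by_contra hj2
        exact hne (hspec j (by omega))
      subst hjc
      rw [List.getElem?_eq_getElem
        (show u.length - 1 - cancelLen u x < u.length by omega)] at hne
      have hidx : u.length - 1 - cancelLen u x = n := by omega
      intro hcon3
      apply hne
      rw [getElem_congr rfl hidx, eq_inv_comm hcon3]
    · rw [dif_neg h1, dif_neg h2]
      have he : cancelLen u x + (n + 1 - (u.length - cancelLen u x)) =
          (cancelLen u x + (n - (u.length - cancelLen u x))) + 1 := by omega
      rw [he]
      exact hx _

end Stmt10

/-- Let `w ∈ F_d \ {e}` and let `g ∈ F_d` satisfy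
`|g| ≤ |g wᵏ|` for all `k ∈ ℤ`, and suppose `|g| > |w|`.  Then the first
`|g| − |w|` letters of `g·w^{+∞}` and of `g·w^{-∞}` both coincide with the
first `|g| − |w|` letters of the reduced word of `g`. -/
theorem prefix_of_translate_of_limits (d : ℕ) (hd : 2 ≤ d)
    (w g : FreeGroup (Fin d)) (hw : w ≠ 1)
    (hmin : ∀ k : ℤ,
      (FreeGroup.toWord g).length ≤ (FreeGroup.toWord (g * w ^ k)).length)
    (hlen : (FreeGroup.toWord w).length < (FreeGroup.toWord g).length)
    (xp xm : Boundary d) (hxp : IsPlusLimit w xp) (hxm : IsPlusLimit w⁻¹ xm) :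
    ∀ i < (FreeGroup.toWord g).length - (FreeGroup.toWord w).length,
      (FreeGroup.toWord g)[i]? = some ((boundaryAct g xp).1 i) ∧
      (FreeGroup.toWord g)[i]? = some ((boundaryAct g xm).1 i) := by
  intro i hi
  have hgw1 : g.toWord.length ≤ (g * w).toWord.length := by
    have := hmin 1; rwa [zpow_one] at this
  have hgw2 : g.toWord.length ≤ (g * w⁻¹).toWord.length := by
    have := hmin (-1); rwa [zpow_neg_one] at this
  have hw' : w⁻¹ ≠ 1 := by simpa using hw
  have hlw : (w⁻¹).toWord.length = w.toWord.length := Stmt10.len_inv w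
  have hcp := Stmt10.cancelLen_le_of hxp hw hgw1
  have hcm : cancelLen g.toWord xm.1 ≤ w.toWord.length := by
    have := Stmt10.cancelLen_le_of hxm hw' hgw2
    rwa [hlw] at this
  have key : ∀ (x : Boundary d), cancelLen g.toWord x.1 ≤ w.toWord.length →
      g.toWord[i]? = some ((boundaryAct g x).1 i) := by
    intro x hcx
    have hred := Stmt10.isReducedSeq_concatReduce (Stmt10.reduced_toWord g) x.2
    have hact : (boundaryAct g x).1 = concatReduce g.toWord x.1 := by
      rw [boundaryAct, dif_pos hred]
    rw [hact, Stmt10.concatReduce_eq,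
        dif_pos (show i < g.toWord.length - cancelLen g.toWord x.1 by omega)]
    exact List.getElem?_eq_getElem (by omega)
  exact ⟨key xp hcp, key xm hcm⟩
end

section
/- The set R := Δ ∪ {(g·w^{+∞}, g·w^{-∞}) : g ∈ F_d, w ∈ F_d \ {e}} is dense in the product space ∂F_d × ∂F_d. -/
namespace Aux
variable {d : ℕ}

@[simp] lemma inv_inv (a : Letter d) : Letter.inv (Letter.inv a) = a := by
  simp [Letter.inv]

lemma inv_eq_iff {a b : Letter d} : Letter.inv a = b ↔ a = Letter.inv b := by
  constructor <;> rintro rfl <;> simp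

/-- Index-based reducedness for finite words. -/
def RedW (L : List (Letter d)) : Prop :=
  ∀ i, (h : i + 1 < L.length) → L[i+1]'h ≠ Letter.inv (L[i]'(by omega))

/-- Cyclically reduced. -/
def CycW (L : List (Letter d)) : Prop :=
  RedW L ∧ ∀ (h : 0 < L.length), L[0]'h ≠ Letter.inv (L[L.length - 1]'(by omega))

lemma redW_nil : RedW ([] : List (Letter d)) := by intro i h; simp at h

lemma redW_cons {a : Letter d} {t : List (Letter d)} (h : RedW (a :: t)) : RedW t := by
  intro i hi
  have := h (i+1) (by simpa using Nat.succ_lt_succ hi)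
  simpa using this

lemma reduce_eq_self {L : List (Letter d)} (h : RedW L) : FreeGroup.reduce L = L := by
  induction L with
  | nil => rfl
  | cons a t ih =>
    have ht : FreeGroup.reduce t = t := ih (redW_cons h)
    rw [FreeGroup.reduce.cons, ht]
    cases t with
    | nil => rfl
    | cons b t' =>
      have hab : b ≠ Letter.inv a := by
        have := h 0 (by simp)
        simpa using this
      have : ¬ (a.1 = b.1 ∧ a.2 = !b.2) := by
        rintro ⟨h1, h2⟩
        exact hab (by simp [Letter.inv, Prod.ext_iff, h1, h2])
      simp [this]

lemma toWord_mk {L : List (Letter d)} (h : RedW L) :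
    (FreeGroup.mk L).toWord = L := by rw [FreeGroup.toWord_mk, reduce_eq_self h]

lemma redW_append {U V : List (Letter d)} (hU : RedW U) (hV : RedW V)
    (hj : ∀ (h1 : 0 < U.length) (h2 : 0 < V.length),
      V[0]'h2 ≠ Letter.inv (U[U.length - 1]'(by omega))) : RedW (U ++ V) := by
  intro i hi
  simp only [List.length_append] at hi
  rcases lt_trichotomy (i+1) U.length with h | h | h
  · rw [List.getElem_append_left h, List.getElem_append_left (by omega)]
    exact hU i h
  · have h1 : 0 < U.length := by omega
    have h2 : 0 < V.length := by omega
    rw [List.getElem_append_right (by omega : U.length ≤ i + 1),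
      List.getElem_append_left (by omega : i < U.length)]
    have : i + 1 - U.length = 0 := by omega
    simp only [this]
    have : i = U.length - 1 := by omega
    subst this
    exact hj h1 h2
  · rw [List.getElem_append_right (by omega : U.length ≤ i + 1),
      List.getElem_append_right (by omega : U.length ≤ i)]
    have h' : (i - U.length) + 1 < V.length := by omega
    have e : i + 1 - U.length = (i - U.length) + 1 := by omega
    simp only [e]
    exact hV (i - U.length) h'

lemma invRev_length (L : List (Letter d)) : (FreeGroup.invRev L).length = L.length := by
  simp [FreeGroup.invRev]

lemma invRev_getElem (L : List (Letter d)) (i : ℕ) (h : i < L.length) :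
    (FreeGroup.invRev L)[i]'(by rw [invRev_length]; exact h) =
      Letter.inv (L[L.length - 1 - i]'(by omega)) := by
  unfold FreeGroup.invRev
  rw [List.getElem_reverse, List.getElem_map]
  simp [Letter.inv]

lemma getElem_idx_congr {α : Type*} (L : List α) {i j : ℕ} (h : i = j) (hi : i < L.length) :
    L[i]'hi = L[j]'(h ▸ hi) := by subst h; rfl

lemma redW_invRev {L : List (Letter d)} (h : RedW L) : RedW (FreeGroup.invRev L) := by
  intro i hi
  rw [invRev_length] at hi
  rw [invRev_getElem L (i+1) (by omega), invRev_getElem L i (by omega)]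
  intro hc
  rw [inv_eq_iff, inv_inv] at hc
  have e2 : L[L.length - 1 - i]'(by omega) = L[(L.length - 1 - (i+1)) + 1]'(by omega) :=
    getElem_idx_congr L (by omega) _
  have := h (L.length - 1 - (i+1)) (by omega)
  rw [← e2] at this
  exact this (by rw [hc, inv_inv])

lemma cycW_invRev {L : List (Letter d)} (h : CycW L) : CycW (FreeGroup.invRev L) := by
  refine ⟨redW_invRev h.1, fun h0 => ?_⟩
  rw [invRev_length] at h0
  have e1 : (FreeGroup.invRev L)[(FreeGroup.invRev L).length - 1]'(by rw [invRev_length]; omega)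
      = (FreeGroup.invRev L)[L.length - 1]'(by rw [invRev_length]; omega) :=
    getElem_idx_congr _ (by rw [invRev_length]) _
  rw [e1, invRev_getElem L 0 (by omega), invRev_getElem L (L.length - 1) (by omega)]
  simp only [Nat.sub_zero, Nat.sub_self]
  intro hc
  exact h.2 h0 (by rw [hc, inv_inv])

lemma invRev_append (A B : List (Letter d)) :
    FreeGroup.invRev (A ++ B) = FreeGroup.invRev B ++ FreeGroup.invRev A := by
  simp [FreeGroup.invRev]

/-- The periodic infinite word with period `L`. -/
def perSeq (L : List (Letter d)) (hL : 0 < L.length) : ℕ → Letter d :=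
  fun n => L[n % L.length]'(Nat.mod_lt n hL)

lemma perSeq_reduced {L : List (Letter d)} (hL : 0 < L.length) (hc : CycW L) :
    IsReducedSeq (perSeq L hL) := by
  intro n
  unfold perSeq
  have hmod : n % L.length < L.length := Nat.mod_lt n hL
  have e : (n + 1) % L.length = (n % L.length + 1) % L.length := by
    conv_lhs => rw [show n + 1 = L.length * (n / L.length) + (n % L.length + 1) by
      have := Nat.div_add_mod n L.length; omega]
    rw [Nat.mul_add_mod]
  by_cases h : n % L.length + 1 < L.length
  · have : (n + 1) % L.length = n % L.length + 1 := by rw [e, Nat.mod_eq_of_lt h]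
    simp only [this]
    exact hc.1 _ h
  · have h1 : n % L.length = L.length - 1 := by omega
    have : (n + 1) % L.length = 0 := by
      rw [e, h1]
      have : L.length - 1 + 1 = L.length := by omega
      rw [this, Nat.mod_self]
    simp only [this, h1]
    exact hc.2 hL

lemma length_flatten_replicate (n : ℕ) (L : List (Letter d)) :
    ((List.replicate n L).flatten).length = n * L.length := by
  induction n with
  | zero => simp
  | succ n ih => rw [List.replicate_succ, List.flatten_cons, List.length_append, ih]; ring

lemma getElem_flatten_replicate (n : ℕ) (L : List (Letter d)) (hL : 0 < L.length) (i : ℕ)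
    (h : i < n * L.length) :
    ((List.replicate n L).flatten)[i]'(by rw [length_flatten_replicate]; exact h) =
      L[i % L.length]'(Nat.mod_lt i hL) := by
  induction n generalizing i with
  | zero => omega
  | succ n ih =>
    have hx : ((List.replicate (n+1) L).flatten) = L ++ (List.replicate n L).flatten := by
      rw [List.replicate_succ, List.flatten_cons]
    rw [List.getElem_of_eq hx]
    by_cases hi : i < L.length
    · rw [List.getElem_append_left hi]
      congr 1
      exact (Nat.mod_eq_of_lt hi).symm
    · rw [List.getElem_append_right (by omega)]
      have hexp : (n + 1) * L.length = n * L.length + L.length := by ring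
      have := ih (i - L.length) (by omega)
      rw [this]
      congr 1
      conv_rhs => rw [show i = L.length + (i - L.length) by omega]
      rw [Nat.add_mod_left]

lemma redW_flatten_replicate {L : List (Letter d)} (hL : 0 < L.length) (hc : CycW L) (n : ℕ) :
    RedW ((List.replicate n L).flatten) := by
  intro i hi
  rw [length_flatten_replicate] at hi
  rw [getElem_flatten_replicate n L hL (i+1) (by omega),
    getElem_flatten_replicate n L hL i (by omega)]
  have e : (i + 1) % L.length = (i % L.length + 1) % L.length := by
    conv_lhs => rw [show i + 1 = L.length * (i / L.length) + (i % L.length + 1) by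
      have := Nat.div_add_mod i L.length; omega]
    rw [Nat.mul_add_mod]
  by_cases h : i % L.length + 1 < L.length
  · have : (i + 1) % L.length = i % L.length + 1 := by rw [e, Nat.mod_eq_of_lt h]
    simp only [this]
    exact hc.1 _ h
  · have hmod : i % L.length < L.length := Nat.mod_lt i hL
    have h1 : i % L.length = L.length - 1 := by omega
    have : (i + 1) % L.length = 0 := by
      rw [e, h1, show L.length - 1 + 1 = L.length by omega, Nat.mod_self]
    simp only [this, h1]
    exact hc.2 hL

end Aux

namespace Aux

lemma isPlusLimit_mk {L : List (Letter d)} (hL : 0 < L.length) (hc : CycW L) :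
    IsPlusLimit (FreeGroup.mk L) ⟨perSeq L hL, perSeq_reduced hL hc⟩ := by
  intro k
  refine ⟨k, fun n hn => ?_⟩
  have hw : FreeGroup.toWord (FreeGroup.mk L ^ n) = (List.replicate n L).flatten := by
    rw [FreeGroup.pow_mk, toWord_mk (redW_flatten_replicate hL hc n)]
  have hlen : ((List.replicate n L).flatten).length = n * L.length :=
    length_flatten_replicate n L
  have hkn : k ≤ n * L.length := le_trans hn (Nat.le_mul_of_pos_right n hL)
  constructor
  · rw [hw, hlen]; exact hkn
  · intro i hi
    rw [hw]
    rw [List.getElem?_eq_getElem (by rw [hlen]; omega)]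
    rw [getElem_flatten_replicate n L hL i (by omega)]
    rfl

lemma cancelLen_eq_zero {u : List (Letter d)} {z : ℕ → Letter d}
    (h : ∀ (h1 : 0 < u.length), z 0 ≠ Letter.inv (u[u.length - 1]'(by omega))) :
    cancelLen u z = 0 := by
  apply Nat.findGreatest_eq_zero_iff.mpr
  intro m hm hmu hP
  have h1 : 0 < u.length := by omega
  have := hP 0 hm
  simp only [Nat.sub_zero] at this
  rw [List.getElem?_eq_getElem (by omega)] at this
  have heq : u[u.length - 1]'(by omega) = Letter.inv (z 0) := by
    exact Option.some_injective _ this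
  exact h h1 (by rw [heq, inv_inv])

lemma concatReduce_of_cancel_zero {u : List (Letter d)} {z : ℕ → Letter d}
    (h0 : cancelLen u z = 0) :
    concatReduce u z = fun n => if h : n < u.length then u[n]'h else z (n - u.length) := by
  funext n
  simp only [concatReduce, h0, Nat.sub_zero, Nat.zero_add]

lemma concatReduce_reduced {u : List (Letter d)} {z : ℕ → Letter d}
    (hu : RedW u) (hz : IsReducedSeq z)
    (hj : ∀ (h1 : 0 < u.length), z 0 ≠ Letter.inv (u[u.length - 1]'(by omega))) :
    IsReducedSeq (concatReduce u z) := by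
  rw [concatReduce_of_cancel_zero (cancelLen_eq_zero hj)]
  intro n
  by_cases h1 : n + 1 < u.length
  · simp only [dif_pos h1, dif_pos (by omega : n < u.length)]
    exact hu n h1
  · by_cases h2 : n < u.length
    · have hn : n = u.length - 1 := by omega
      simp only [dif_neg h1, dif_pos h2]
      have : n + 1 - u.length = 0 := by omega
      rw [this]
      have e2 : u[n]'h2 = u[u.length - 1]'(by omega) := getElem_idx_congr u hn h2
      rw [e2]
      exact hj (by omega)
    · simp only [dif_neg h1, dif_neg h2]
      have e : n + 1 - u.length = (n - u.length) + 1 := by omega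
      rw [e]
      exact hz (n - u.length)

lemma boundaryAct_mk_apply {u : List (Letter d)} (hu : RedW u) (x : Boundary d)
    (hj : ∀ (h1 : 0 < u.length), x.1 0 ≠ Letter.inv (u[u.length - 1]'(by omega))) (n : ℕ) :
    (boundaryAct (FreeGroup.mk u) x).1 n =
      if h : n < u.length then u[n]'h else x.1 (n - u.length) := by
  have hred : IsReducedSeq (concatReduce (FreeGroup.toWord (FreeGroup.mk u)) x.1) := by
    rw [toWord_mk hu]
    exact concatReduce_reduced hu x.2 hj
  unfold boundaryAct
  rw [dif_pos hred]
  simp only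
  rw [show concatReduce (FreeGroup.toWord (FreeGroup.mk u)) x.1 = concatReduce u x.1 by
    rw [toWord_mk hu]]
  rw [concatReduce_of_cancel_zero (cancelLen_eq_zero hj)]

end Aux

namespace Aux
variable {d : ℕ}

lemma exists_letters (hd : 2 ≤ d) (c1 c2 : Letter d) :
    ∃ a b : Letter d, a ≠ c1 ∧ b ≠ c2 ∧ a ≠ b := by
  have h0 : 0 < d := by omega
  have h1 : 1 < d := by omega
  refine ⟨if c1 = (⟨0, h0⟩, true) then (⟨0, h0⟩, false) else (⟨0, h0⟩, true),
    if c2 = (⟨1, h1⟩, true) then (⟨1, h1⟩, false) else (⟨1, h1⟩, true), ?_, ?_, ?_⟩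
  · split_ifs with h
    · rw [h]; simp
    · exact fun hh => h hh.symm
  · split_ifs with h
    · rw [h]; simp
    · exact fun hh => h hh.symm
  · split_ifs <;> simp [Prod.ext_iff, Fin.ext_iff]

lemma buildU_red (x : ℕ → Letter d) (hx : IsReducedSeq x) (j m : ℕ) (hm : 0 < m)
    (a : Letter d) (ha : a ≠ Letter.inv (x (j + m - 1))) :
    RedW (List.ofFn (fun i : Fin (m+1) => if (i:ℕ) < m then x (j + i) else a)) := by
  intro i hi
  rw [List.length_ofFn] at hi
  rw [List.getElem_ofFn, List.getElem_ofFn]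
  simp only
  rw [if_pos (show ((⟨i, by omega⟩ : Fin (m+1)) : ℕ) < m by simpa using by omega)]
  by_cases h : i + 1 < m
  · rw [if_pos (by simpa using h)]
    simpa [Nat.add_assoc] using hx (j + i)
  · rw [if_neg (by simpa using h)]
    have : j + (⟨i, by omega⟩ : Fin (m+1)) = j + m - 1 := by simp; omega
    rw [this]
    exact ha

lemma buildU_get (x : ℕ → Letter d) (j m : ℕ) (a : Letter d) (i : ℕ) (h : i < m + 1) :
    (List.ofFn (fun i : Fin (m+1) => if (i:ℕ) < m then x (j + i) else a))[i]'(by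
      rw [List.length_ofFn]; exact h) = if i < m then x (j + i) else a := by
  rw [List.getElem_ofFn]

lemma cycW_mixed {U V : List (Letter d)} (hU : RedW U) (hV : RedW V)
    (hUlen : 0 < U.length) (hVlen : 0 < V.length)
    (hlast : U[U.length - 1]'(by omega) ≠ V[V.length - 1]'(by omega))
    (hhead : U[0]'hUlen ≠ V[0]'hVlen) :
    CycW (U ++ FreeGroup.invRev V) := by
  have hVR : (FreeGroup.invRev V).length = V.length := invRev_length V
  constructor
  · apply redW_append hU (redW_invRev hV)
    intro h1 h2
    rw [show (FreeGroup.invRev V)[0]'(by omega) =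
      Letter.inv (V[V.length - 1 - 0]'(by omega)) from invRev_getElem V 0 (by omega)]
    simp only [Nat.sub_zero]
    intro hcon
    exact hlast (by
      have := congrArg Letter.inv hcon
      simpa using this.symm)
  · intro hpos
    have hlen : (U ++ FreeGroup.invRev V).length = U.length + V.length := by
      rw [List.length_append, hVR]
    rw [List.getElem_append_left hUlen]
    have e1 : (U ++ FreeGroup.invRev V)[(U ++ FreeGroup.invRev V).length - 1]'(by omega) =
        (FreeGroup.invRev V)[V.length - 1]'(by omega) := by
      rw [getElem_idx_congr (U ++ FreeGroup.invRev V)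
        (show (U ++ FreeGroup.invRev V).length - 1 = U.length + (V.length - 1) by omega) _]
      rw [List.getElem_append_right (by omega)]
      apply getElem_idx_congr
      omega
    rw [e1, show (FreeGroup.invRev V)[V.length - 1]'(by omega) =
      Letter.inv (V[V.length - 1 - (V.length - 1)]'(by omega)) from
        invRev_getElem V (V.length - 1) (by omega)]
    rw [getElem_idx_congr V (show V.length - 1 - (V.length - 1) = 0 by omega) _]
    rw [inv_inv]
    exact hhead

end Aux

namespace Aux
variable {d : ℕ}

lemma exists_prefix_nhds (x : Boundary d) {t : Set (Boundary d)} (ht : t ∈ nhds x) :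
    ∃ k, ∀ z : Boundary d, (∀ i < k, z.1 i = x.1 i) → z ∈ t := by
  replace ht := (mem_nhds_induced Subtype.val x t).mp ht
  obtain ⟨s, hs, hsub⟩ := ht
  rw [nhds_pi] at hs
  obtain ⟨I, hIfin, tf, htf, hIsub⟩ := Filter.mem_pi.mp hs
  obtain ⟨M, hM⟩ := hIfin.bddAbove
  refine ⟨M + 1, fun z hz => ?_⟩
  apply hsub
  show z.1 ∈ s
  apply hIsub
  intro i hi
  have hiM : i ≤ M := hM hi
  have hpure := htf i
  rw [nhds_discrete] at hpure
  have : x.1 i ∈ tf i := hpure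
  rwa [← hz i (by omega)] at this

lemma key (hd : 2 ≤ d) (x y : Boundary d) (k : ℕ) :
    ∃ p ∈ RW {w : FreeGroup (Fin d) | w ≠ 1},
      (∀ i < k, p.1.1 i = x.1 i) ∧ (∀ i < k, p.2.1 i = y.1 i) := by
  classical
  by_cases hagree : ∀ i < k, x.1 i = y.1 i
  · exact ⟨(x, x), Or.inl rfl, fun i _ => rfl, fun i hi => hagree i hi⟩
  push_neg at hagree
  obtain ⟨i0, hi0k, hi0ne⟩ := hagree
  have hex : ∃ i, x.1 i ≠ y.1 i := ⟨i0, hi0ne⟩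
  set j := Nat.find hex with hjdef
  have hjne : x.1 j ≠ y.1 j := Nat.find_spec hex
  have hjlt : j < k := lt_of_le_of_lt (Nat.find_min' hex hi0ne) hi0k
  have hagree_lt : ∀ i < j, x.1 i = y.1 i := fun i hi => not_not.mp (Nat.find_min hex hi)
  set m := k - j with hmdef
  have hm : 0 < m := by omega
  have hkjm : k = j + m := by omega
  obtain ⟨a, b, ha, hb, hab⟩ :=
    exists_letters hd (Letter.inv (x.1 (k-1))) (Letter.inv (y.1 (k-1)))
  set U : List (Letter d) :=
    List.ofFn (fun i : Fin (m+1) => if (i:ℕ) < m then x.1 (j + i) else a) with hUdef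
  set V : List (Letter d) :=
    List.ofFn (fun i : Fin (m+1) => if (i:ℕ) < m then y.1 (j + i) else b) with hVdef
  have hUlen : U.length = m + 1 := List.length_ofFn
  have hVlen : V.length = m + 1 := List.length_ofFn
  have hUget : ∀ i (h : i < m + 1), U[i]'(by omega) = if i < m then x.1 (j + i) else a :=
    fun i h => buildU_get x.1 j m a i h
  have hVget : ∀ i (h : i < m + 1), V[i]'(by omega) = if i < m then y.1 (j + i) else b :=
    fun i h => buildU_get y.1 j m b i h
  have hUred : RedW U := buildU_red x.1 x.2 j m hm a (by rwa [show j + m - 1 = k - 1 by omega])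
  have hVred : RedW V := buildU_red y.1 y.2 j m hm b (by rwa [show j + m - 1 = k - 1 by omega])
  have hUpos : 0 < U.length := by omega
  have hVpos : 0 < V.length := by omega
  have hUlast : U[U.length - 1]'(by omega) = a := by
    rw [getElem_idx_congr U (show U.length - 1 = m by omega) _, hUget m (by omega)]
    simp
  have hVlast : V[V.length - 1]'(by omega) = b := by
    rw [getElem_idx_congr V (show V.length - 1 = m by omega) _, hVget m (by omega)]
    simp
  have hU0 : U[0]'hUpos = x.1 j := by rw [hUget 0 (by omega), if_pos hm, Nat.add_zero]
  have hV0 : V[0]'hVpos = y.1 j := by rw [hVget 0 (by omega), if_pos hm, Nat.add_zero]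
  have hlastne : U[U.length - 1]'(by omega) ≠ V[V.length - 1]'(by omega) := by
    rw [hUlast, hVlast]; exact hab
  have hheadne : U[0]'hUpos ≠ V[0]'hVpos := by rw [hU0, hV0]; exact hjne
  set L : List (Letter d) := U ++ FreeGroup.invRev V with hLdef
  set M : List (Letter d) := V ++ FreeGroup.invRev U with hMdef
  have hcycL : CycW L := cycW_mixed hUred hVred hUpos hVpos hlastne hheadne
  have hcycM : CycW M := cycW_mixed hVred hUred hVpos hUpos (fun h => hlastne h.symm)
    (fun h => hheadne h.symm)
  have hLlen : L.length = 2 * (m + 1) := by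
    rw [hLdef, List.length_append, invRev_length]; omega
  have hMlen : M.length = 2 * (m + 1) := by
    rw [hMdef, List.length_append, invRev_length]; omega
  have hLpos : 0 < L.length := by omega
  have hMpos : 0 < M.length := by omega
  have hinvL : FreeGroup.invRev L = M := by
    rw [hLdef, hMdef, invRev_append, FreeGroup.invRev_invRev]
  set w : FreeGroup (Fin d) := FreeGroup.mk L with hwdef
  have hw1 : w ≠ 1 := by
    intro h
    have h2 : FreeGroup.toWord w = L := toWord_mk hcycL.1
    rw [h, FreeGroup.toWord_one] at h2
    have := congrArg List.length h2
    simp at this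
    omega
  set xp : Boundary d := ⟨perSeq L hLpos, perSeq_reduced hLpos hcycL⟩ with hxpdef
  set xm : Boundary d := ⟨perSeq M hMpos, perSeq_reduced hMpos hcycM⟩ with hxmdef
  have hplus : IsPlusLimit w xp := isPlusLimit_mk hLpos hcycL
  have hminus : IsPlusLimit w⁻¹ xm := by
    rw [hwdef, FreeGroup.inv_mk, hinvL]
    exact isPlusLimit_mk hMpos hcycM
  set P : List (Letter d) := List.ofFn (fun i : Fin j => x.1 i) with hPdef
  have hPlen : P.length = j := List.length_ofFn
  have hPget : ∀ i (h : i < j), P[i]'(by omega) = x.1 i := by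
    intro i h
    show (List.ofFn fun t : Fin j => x.1 t)[i]'(by rw [List.length_ofFn]; exact h) = x.1 i
    rw [List.getElem_ofFn]
  have hPred : RedW P := by
    intro i hi
    rw [hPlen] at hi
    rw [hPget (i+1) hi, hPget i (by omega)]
    exact x.2 i
  set g : FreeGroup (Fin d) := FreeGroup.mk P with hgdef
  -- values of the periodic sequences at small indices
  have hxp_small : ∀ i, i < m → xp.1 i = x.1 (j + i) := by
    intro i hi
    show perSeq L hLpos i = _
    unfold perSeq
    rw [getElem_idx_congr L (show i % L.length = i from Nat.mod_eq_of_lt (by omega)) _]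
    rw [List.getElem_of_eq hLdef (by omega), List.getElem_append_left (by omega),
      hUget i (by omega), if_pos hi]
  have hxm_small : ∀ i, i < m → xm.1 i = y.1 (j + i) := by
    intro i hi
    show perSeq M hMpos i = _
    unfold perSeq
    rw [getElem_idx_congr M (show i % M.length = i from Nat.mod_eq_of_lt (by omega)) _]
    rw [List.getElem_of_eq hMdef (by omega), List.getElem_append_left (by omega),
      hVget i (by omega), if_pos hi]
  -- junction conditions for the action of g
  have hPlastx : ∀ (h1 : 0 < P.length), P[P.length - 1]'(by omega) = x.1 (j - 1) := by
    intro h1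
    rw [getElem_idx_congr P (show P.length - 1 = j - 1 by omega) _, hPget (j-1) (by omega)]
  have hjP : ∀ (h1 : 0 < P.length), xp.1 0 ≠ Letter.inv (P[P.length - 1]'(by omega)) := by
    intro h1
    rw [hPlastx h1, hxp_small 0 hm, Nat.add_zero]
    have := x.2 (j - 1)
    rwa [show j - 1 + 1 = j from by omega] at this
  have hjPm : ∀ (h1 : 0 < P.length), xm.1 0 ≠ Letter.inv (P[P.length - 1]'(by omega)) := by
    intro h1
    rw [hPlastx h1, hxm_small 0 hm, Nat.add_zero]
    rw [hagree_lt (j-1) (by omega)]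
    have := y.2 (j - 1)
    rwa [show j - 1 + 1 = j from by omega] at this
  refine ⟨(boundaryAct g xp, boundaryAct g xm),
    Or.inr ⟨g, w, xp, xm, Or.inl hw1, hplus, hminus, rfl, rfl⟩, ?_, ?_⟩
  · intro i hik
    rw [show (boundaryAct g xp, boundaryAct g xm).1 = boundaryAct g xp from rfl]
    rw [boundaryAct_mk_apply hPred xp hjP i]
    by_cases hij : i < j
    · rw [dif_pos (show i < P.length by omega)]
      exact hPget i hij
    · rw [dif_neg (show ¬ i < P.length by omega)]
      rw [show i - P.length = i - j by omega]
      rw [hxp_small (i - j) (by omega), show j + (i - j) = i by omega]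
  · intro i hik
    rw [show (boundaryAct g xp, boundaryAct g xm).2 = boundaryAct g xm from rfl]
    rw [boundaryAct_mk_apply hPred xm hjPm i]
    by_cases hij : i < j
    · rw [dif_pos (show i < P.length by omega)]
      rw [hPget i hij]
      exact hagree_lt i hij
    · rw [dif_neg (show ¬ i < P.length by omega)]
      rw [show i - P.length = i - j by omega]
      rw [hxm_small (i - j) (by omega), show j + (i - j) = i by omega]

end Aux

/-- The set
`R = Δ ∪ {(g·w^{+∞}, g·w^{-∞}) : g ∈ F_d, w ∈ F_d \ {e}}` is dense in the
product space `∂F_d × ∂F_d`. -/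
theorem RW_univ_dense (d : ℕ) (hd : 2 ≤ d) :
    Dense (RW {w : FreeGroup (Fin d) | w ≠ 1}) := by
  intro p
  rw [mem_closure_iff_nhds]
  intro t ht
  rw [nhds_prod_eq] at ht
  obtain ⟨t1, h1, t2, h2, hsub⟩ := Filter.mem_prod_iff.mp ht
  obtain ⟨k1, hk1⟩ := Aux.exists_prefix_nhds p.1 h1
  obtain ⟨k2, hk2⟩ := Aux.exists_prefix_nhds p.2 h2
  obtain ⟨q, hqR, hq1, hq2⟩ := Aux.key hd p.1 p.2 (max k1 k2)
  refine ⟨q, hsub ⟨?_, ?_⟩, hqR⟩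
  · exact hk1 q.1 (fun i hi => hq1 i (lt_of_lt_of_le hi (le_max_left _ _)))
  · exact hk2 q.2 (fun i hi => hq2 i (lt_of_lt_of_le hi (le_max_right _ _)))
end

section
/- Let x, y ∈ F_d be distinct elements with |x| = |y|, and let w ∈ F_d satisfy |x w y^{-1}| = |x| + |w| + |y|. Then for every n ≥ 1, the first |x| letters of the reduced word of (x w y^{-1})^n equal the reduced word of x, and the first |y| letters of the reduced word of (x w y^{-1})^{-n} equal the reduced word of y; consequently the first |x| letters of (x w y^{-1})^{+∞} equal the reduced word of x and the first |y| letters of (x w y^{-1})^{-∞} equal the reduced word of y. -/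
set_option linter.unusedSectionVars false

namespace Stmt13Aux

variable {α : Type*} [DecidableEq α]

/-- The no-cancellation relation between adjacent letters. -/
def R (p q : α × Bool) : Prop := ¬(p.1 = q.1 ∧ p.2 = !q.2)

/-- A word is reduced iff adjacent letters never cancel. -/
def Chn (L : List (α × Bool)) : Prop := List.Chain' R L

lemma chn_reduce_self (L : List (α × Bool)) : Chn L → FreeGroup.reduce L = L := by
  induction L with
  | nil => intro _; rfl
  | cons x L ih =>
    intro h
    rw [Chn, List.Chain', List.isChain_cons] at h
    rw [FreeGroup.reduce.cons, ih h.2]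
    cases L with
    | nil => rfl
    | cons y tl =>
      have hxy : R x y := h.1 y rfl
      show (if x.1 = y.1 ∧ x.2 = !y.2 then tl else x :: y :: tl) = x :: y :: tl
      exact if_neg hxy

lemma chn_reduce (L : List (α × Bool)) : Chn (FreeGroup.reduce L) := by
  induction L with
  | nil => exact List.isChain_nil
  | cons x L ih =>
    rw [FreeGroup.reduce.cons]
    cases h : FreeGroup.reduce L with
    | nil => exact List.isChain_singleton x
    | cons y tl =>
      rw [h] at ih
      show Chn (if x.1 = y.1 ∧ x.2 = !y.2 then tl else x :: y :: tl)
      split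
      · exact ih.tail
      · rw [Chn, List.Chain', List.isChain_cons_cons]
        exact ⟨by assumption, ih⟩

lemma cancel_struct : ∀ (u v : List (α × Bool)), Chn u → Chn v →
    ∃ k, k ≤ u.length ∧ k ≤ v.length ∧
      FreeGroup.reduce (u ++ v) = u.take (u.length - k) ++ v.drop k := by
  intro u
  induction u with
  | nil =>
    intro v _ hv
    exact ⟨0, by simp, by simp, by simpa using chn_reduce_self v hv⟩
  | cons x u ih =>
    intro v hu hv
    have hu' : Chn u := hu.tail
    obtain ⟨k, hku, hkv, hred⟩ := ih v hu' hv
    cases hrest : u.take (u.length - k) ++ v.drop k with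
    | nil =>
      have h1 := List.append_eq_nil_iff.mp hrest
      have hku' : k = u.length := by
        rcases List.take_eq_nil_iff.mp h1.1 with h | h
        · omega
        · subst h; simp only [List.length_nil] at hku ⊢; omega
      have hstep : FreeGroup.reduce ((x :: u) ++ v) = [x] := by
        rw [List.cons_append, FreeGroup.reduce.cons, hred, hrest]
      refine ⟨k, by rw [List.length_cons]; omega, hkv, ?_⟩
      rw [hstep]
      subst hku'
      have h2 : (x :: u).length - u.length = 1 := by rw [List.length_cons]; omega
      rw [h2, h1.2]
      simp
    | cons y tl =>
      have hstep : FreeGroup.reduce ((x :: u) ++ v) =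
          if x.1 = y.1 ∧ x.2 = !y.2 then tl else x :: y :: tl := by
        rw [List.cons_append, FreeGroup.reduce.cons, hred, hrest]
      by_cases hc : x.1 = y.1 ∧ x.2 = !y.2
      · -- the head of the rest cancels with x; this forces u to be fully cancelled
        have hku' : k = u.length := by
          by_contra hne
          have hlt : u.length - k ≠ 0 := by omega
          cases u with
          | nil => simp at hlt
          | cons a u' =>
            obtain ⟨m, hm⟩ : ∃ m, (a :: u').length - k = m + 1 := ⟨(a :: u').length - k - 1, by omega⟩
            rw [hm, List.take_succ_cons, List.cons_append] at hrest
            have hay : a = y := by injection hrest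
            have hra : R x a := (List.isChain_cons_cons.mp hu).1
            exact hra (hay ▸ hc)
        have hvd : v.drop k = y :: tl := by
          have ht : u.take (u.length - k) = [] := by rw [hku']; simp
          rwa [ht, List.nil_append] at hrest
        have hkv2 : k < v.length := by
          have := congrArg List.length hvd
          rw [List.length_drop] at this
          simp at this; omega
        refine ⟨k + 1, by rw [List.length_cons]; omega, by omega, ?_⟩
        rw [hstep, if_pos hc]
        have h0 : (x :: u).length - (k + 1) = 0 := by rw [List.length_cons]; omega
        rw [h0, List.take_zero, List.nil_append]
        have := congrArg List.tail hvd
        rw [List.tail_drop] at this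
        exact this.symm
      · refine ⟨k, by rw [List.length_cons]; omega, hkv, ?_⟩
        rw [hstep, if_neg hc]
        have h1 : (x :: u).length - k = (u.length - k) + 1 := by rw [List.length_cons]; omega
        rw [h1, List.take_succ_cons, List.cons_append, hrest]


lemma assembled (A W B c : List (α × Bool))
    (hG : Chn (A ++ (W ++ B))) (hc : Chn c) (hcne : c ≠ [])
    (hchead : c.head? = B.head?) (hclast : c.getLast? = A.getLast?) :
    ∀ n, Chn (A ++ (W ++ ((List.replicate n (c ++ W)).flatten ++ B))) := by
  obtain ⟨hchA, hrest, jA⟩ := List.isChain_append.mp hG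
  obtain ⟨hchW, hchB, jWB⟩ := List.isChain_append.mp hrest
  have main : ∀ n, List.IsChain R (W ++ ((List.replicate n (c ++ W)).flatten ++ B)) ∧
      ((List.replicate n (c ++ W)).flatten ++ B).head? = B.head? := by
    intro n
    induction n with
    | zero => exact ⟨by simpa using hrest, by simp⟩
    | succ n ih =>
      have hexp : (List.replicate (n + 1) (c ++ W)).flatten ++ B
          = c ++ (W ++ ((List.replicate n (c ++ W)).flatten ++ B)) := by
        rw [List.replicate_succ, List.flatten_cons]
        simp [List.append_assoc]
      constructor
      · rw [hexp]
        apply List.isChain_append.mpr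
        refine ⟨hchW, ?_, ?_⟩
        · apply List.isChain_append.mpr
          refine ⟨hc, ih.1, ?_⟩
          intro x hx y hy
          refine jA x (hclast ▸ hx) y ?_
          rw [List.head?_append]
          rwa [List.head?_append, ih.2] at hy
        · intro x hx y hy
          rw [List.head?_append_of_ne_nil _ hcne, hchead] at hy
          exact jWB x hx y hy
      · rw [hexp, List.head?_append_of_ne_nil _ hcne, hchead]
  intro n
  apply List.isChain_append.mpr
  refine ⟨hchA, (main n).1, ?_⟩
  intro x hx y hy
  refine jA x hx y ?_
  rw [List.head?_append]
  rwa [List.head?_append, (main n).2] at hy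

lemma core {d : ℕ} (a b w : FreeGroup (Fin d)) (hab : a ≠ b)
    (hlen : (FreeGroup.toWord a).length = (FreeGroup.toWord b).length)
    (hgeo : (FreeGroup.toWord (a * w * b⁻¹)).length =
      (FreeGroup.toWord a).length + (FreeGroup.toWord w).length +
        (FreeGroup.toWord b).length) :
    ∀ n, ∀ i < (FreeGroup.toWord a).length,
      (FreeGroup.toWord ((a * w * b⁻¹) ^ (n + 1)))[i]? = (FreeGroup.toWord a)[i]? := by
  classical
  set A := FreeGroup.toWord a with hA
  set W := FreeGroup.toWord w with hW
  set B := FreeGroup.toWord b⁻¹ with hB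
  set c := FreeGroup.toWord (b⁻¹ * a) with hc
  have hBlen : B.length = (FreeGroup.toWord b).length := by
    rw [hB, FreeGroup.toWord_inv, FreeGroup.invRev_length]
  have hg : a * w * b⁻¹ = FreeGroup.mk (A ++ (W ++ B)) := by
    calc a * w * b⁻¹ = FreeGroup.mk A * FreeGroup.mk W * FreeGroup.mk B := by
          rw [hA, hW, hB, FreeGroup.mk_toWord, FreeGroup.mk_toWord, FreeGroup.mk_toWord]
      _ = FreeGroup.mk (A ++ (W ++ B)) := by
          rw [FreeGroup.mul_mk, FreeGroup.mul_mk, List.append_assoc]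
  have hGred : FreeGroup.reduce (A ++ (W ++ B)) = A ++ (W ++ B) := by
    have h1 : FreeGroup.toWord (a * w * b⁻¹) = FreeGroup.reduce (A ++ (W ++ B)) := by
      rw [hg, FreeGroup.toWord_mk]
    apply (FreeGroup.reduce.red).sublist.eq_of_length
    rw [← h1, hgeo]
    simp only [List.length_append]
    omega
  have hGchn : Chn (A ++ (W ++ B)) := by rw [Chn, ← hGred]; exact chn_reduce _
  have hchA : Chn A := (List.isChain_append.mp hGchn).1
  have hchB : Chn B := (List.isChain_append.mp (List.isChain_append.mp hGchn).2.1).2.1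
  have hceq : c = FreeGroup.reduce (B ++ A) := by
    have h2 : b⁻¹ * a = FreeGroup.mk (B ++ A) := by
      rw [hB, hA, ← FreeGroup.mul_mk, FreeGroup.mk_toWord, FreeGroup.mk_toWord]
    rw [hc, h2, FreeGroup.toWord_mk]
  have hcchn : Chn c := by rw [Chn, hceq]; exact chn_reduce _
  have hcne : c ≠ [] := by
    rw [hc, ne_eq, FreeGroup.toWord_eq_nil_iff]
    intro h
    exact hab (inv_mul_eq_one.mp h).symm
  obtain ⟨k, hkB, hkA, hkred⟩ := cancel_struct B A hchB hchA
  have hck : c = B.take (B.length - k) ++ A.drop k := by rw [hceq, hkred]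
  have hABlen : A.length = B.length := by rw [hBlen]; exact hlen
  have hkA' : k < A.length := by
    by_contra h
    push_neg at h
    apply hcne
    rw [hck]
    have h1 : B.length - k = 0 := by omega
    rw [h1, List.take_zero, List.nil_append]
    exact List.drop_eq_nil_of_le (by omega)
  have hBne : B ≠ [] := by
    intro h
    rw [h] at hABlen
    simp only [List.length_nil] at hABlen
    omega
  have hchead : c.head? = B.head? := by
    rw [hck, List.head?_append, List.head?_take, if_neg (by omega)]
    cases hBc : B with
    | nil => exact absurd hBc hBne
    | cons y t => rfl
  have hAdropNe : A.drop k ≠ [] := by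
    simp only [ne_eq, List.drop_eq_nil_iff]
    omega
  have hclast : c.getLast? = A.getLast? := by
    rw [hck, List.getLast?_append_of_ne_nil _ hAdropNe, List.getLast?_drop, if_neg (by omega)]
  have hchain := assembled A W B c hGchn hcchn hcne hchead hclast
  have hpow : ∀ n : ℕ, (a * w * b⁻¹) ^ (n + 1) = a * (w * ((b⁻¹ * a * w) ^ n * b⁻¹)) := by
    intro n
    induction n with
    | zero => simp [mul_assoc]
    | succ n ih =>
      rw [pow_succ, ih, pow_succ]
      simp [mul_assoc]
  have hmkL : ∀ n : ℕ, FreeGroup.toWord ((a * w * b⁻¹) ^ (n + 1)) =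
      A ++ (W ++ ((List.replicate n (c ++ W)).flatten ++ B)) := by
    intro n
    have hmk : (a * w * b⁻¹) ^ (n + 1) =
        FreeGroup.mk (A ++ (W ++ ((List.replicate n (c ++ W)).flatten ++ B))) := by
      rw [← FreeGroup.mul_mk, ← FreeGroup.mul_mk, ← FreeGroup.mul_mk, ← FreeGroup.pow_mk,
        ← FreeGroup.mul_mk, hA, hW, hB, hc, FreeGroup.mk_toWord, FreeGroup.mk_toWord,
        FreeGroup.mk_toWord, FreeGroup.mk_toWord]
      exact hpow n
    rw [hmk, FreeGroup.toWord_mk]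
    exact chn_reduce_self _ (hchain n)
  intro n i hi
  rw [hmkL n, List.getElem?_append_left hi]

end Stmt13Aux

/-- Let `a, b ∈ F_d` be distinct with `|a| = |b|`, and let
`w ∈ F_d` satisfy `|a w b⁻¹| = |a| + |w| + |b|`.  Then for every `n ≥ 1` the
first `|a|` letters of `(a w b⁻¹)ⁿ` equal the reduced word of `a` and the first
`|b|` letters of `(a w b⁻¹)⁻ⁿ` equal the reduced word of `b`; consequently the
same holds for `(a w b⁻¹)^{+∞}` and `(a w b⁻¹)^{-∞}`. -/



theorem prefix_of_powers_and_limits (d : ℕ) (hd : 2 ≤ d)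
    (a b w : FreeGroup (Fin d)) (hab : a ≠ b)
    (hlen : (FreeGroup.toWord a).length = (FreeGroup.toWord b).length)
    (hgeo : (FreeGroup.toWord (a * w * b⁻¹)).length =
      (FreeGroup.toWord a).length + (FreeGroup.toWord w).length +
        (FreeGroup.toWord b).length) :
    (∀ n : ℕ, 1 ≤ n →
      (∀ i < (FreeGroup.toWord a).length,
        (FreeGroup.toWord ((a * w * b⁻¹) ^ n))[i]? = (FreeGroup.toWord a)[i]?) ∧
      (∀ i < (FreeGroup.toWord b).length,
        (FreeGroup.toWord (((a * w * b⁻¹)⁻¹) ^ n))[i]? = (FreeGroup.toWord b)[i]?)) ∧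
    (∀ xp : Boundary d, IsPlusLimit (a * w * b⁻¹) xp →
      ∀ i < (FreeGroup.toWord a).length,
        some (xp.1 i) = (FreeGroup.toWord a)[i]?) ∧
    (∀ xm : Boundary d, IsPlusLimit (a * w * b⁻¹)⁻¹ xm →
      ∀ i < (FreeGroup.toWord b).length,
        some (xm.1 i) = (FreeGroup.toWord b)[i]?) := by
  
  have e1 : (a * w * b⁻¹)⁻¹ = b * w⁻¹ * a⁻¹ := by
    rw [mul_inv_rev, mul_inv_rev, inv_inv, mul_assoc]
  have hlen2 : (FreeGroup.toWord w⁻¹).length = (FreeGroup.toWord w).length := by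
    rw [FreeGroup.toWord_inv, FreeGroup.invRev_length]
  have hgeo' : (FreeGroup.toWord (b * w⁻¹ * a⁻¹)).length =
      (FreeGroup.toWord b).length + (FreeGroup.toWord w⁻¹).length +
        (FreeGroup.toWord a).length := by
    rw [← e1, FreeGroup.toWord_inv, FreeGroup.invRev_length, hgeo, hlen2]
    omega
  have C1 := Stmt13Aux.core a b w hab hlen hgeo
  have C2 := Stmt13Aux.core b a w⁻¹ (fun h => hab h.symm) hlen.symm hgeo'
  rw [← e1] at C2
  refine ⟨?_, ?_, ?_⟩
  · intro n hn
    obtain ⟨m, rfl⟩ : ∃ m, n = m + 1 := ⟨n - 1, by omega⟩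
    exact ⟨C1 m, C2 m⟩
  · intro xp hxp i hi
    obtain ⟨N, hN⟩ := hxp (FreeGroup.toWord a).length
    have h1 := (hN (N + 1) (by omega)).2 i hi
    exact h1.symm.trans (C1 N i hi)
  · intro xm hxm i hi
    obtain ⟨N, hN⟩ := hxm (FreeGroup.toWord b).length
    have h1 := (hN (N + 1) (by omega)).2 i hi
    exact h1.symm.trans (C2 N i hi)
end
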